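/- arXiv:2312.14881 — 9 statements merged into one kernel-verified Lean document; each statement's English description precedes it below -/
import Mathlib

section
/- For all integers s, t ≥ 1, the complete multipartite graph K_{s,t,s,t} with four parts, two of size s and two of size t alternating, is interval colorable, i.e., μ_int(K_{s,t,s,t}) = 1. -/
/-- An (improper) interval edge coloring: for every vertex, the set of colors on
incident edges forms an interval of consecutive integers. -/
def IsIntervalColoring {V : Type*} (G : SimpleGraph V) (c : Sym2 V → ℤ) : Prop :=
  ∀ v : V, ∀ a b x : ℤ,
    (∃ u, G.Adj v u ∧ c s(v, u) = a) → (∃ u, G.Adj v u ∧ c s(v, u) = b) →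
    a ≤ x → x ≤ b → ∃ u, G.Adj v u ∧ c s(v, u) = x

/-- A coloring is `k`-improper if at every vertex each color appears on at most
`k` incident edges. -/
def IsKImproper {V : Type*} (G : SimpleGraph V) (c : Sym2 V → ℤ) (k : ℕ) : Prop :=
  ∀ v : V, ∀ q : ℤ, ({u : V | G.Adj v u ∧ c s(v, u) = q}).ncard ≤ k

/-- The interval coloring impropriety `μ_int(G)`: the least `k` such that `G`
admits a `k`-improper interval edge coloring. -/
noncomputable def impropriety {V : Type*} (G : SimpleGraph V) : ℕ :=
  sInf {k : ℕ | ∃ c : Sym2 V → ℤ, IsIntervalColoring G c ∧ IsKImproper G c k}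

/-- The maximum degree of a graph. -/
noncomputable def maxDeg {V : Type*} (G : SimpleGraph V) : ℕ :=
  sSup {d : ℕ | ∃ v : V, (G.neighborSet v).ncard = d}

/-- The complete multipartite graph `K_{s,t,s,t}` with four parts, of sizes
`s, t, s, t` alternating. -/
abbrev Kstst (s t : ℕ) : SimpleGraph (Σ i : Fin 4, Fin (if i.val % 2 = 0 then s else t)) :=
  SimpleGraph.completeMultipartiteGraph fun i : Fin 4 => Fin (if i.val % 2 = 0 then s else t)

/-- Additive offset for the color of an edge between parts whose indices sum to `n`. -/
def KF (s t : ℕ) (n : ℕ) : ℤ :=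
  if n = 2 then (t : ℤ) - s + 1 else if n = 3 then (t : ℤ) + 1
    else if n = 4 then 1 else 1 - (s : ℤ)

/-- The explicit interval edge coloring of `K_{s,t,s,t}`:
the edge between the vertex of part `i` with index `a` and the vertex of
part `j` with index `b` receives the color `a + b + KF s t (i + j)`. -/
def kcol (s t : ℕ) : Sym2 (Σ i : Fin 4, Fin (if i.val % 2 = 0 then s else t)) → ℤ :=
  Sym2.lift ⟨fun u v => (u.2.val : ℤ) + v.2.val + KF s t (u.1.val + v.1.val),
    fun u v => by dsimp only; rw [Nat.add_comm u.1.val, add_comm (u.2.val : ℤ)]⟩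

lemma kcol_mk {s t : ℕ} (i j : Fin 4) (a : Fin (if i.val % 2 = 0 then s else t))
    (b : Fin (if j.val % 2 = 0 then s else t)) :
    kcol s t s(⟨i, a⟩, ⟨j, b⟩) = (a.val : ℤ) + b.val + KF s t (i.val + j.val) := rfl

lemma adj_mk {s t : ℕ} {i j : Fin 4} (h : i ≠ j)
    (a : Fin (if i.val % 2 = 0 then s else t)) (b : Fin (if j.val % 2 = 0 then s else t)) :
    (Kstst s t).Adj ⟨i, a⟩ ⟨j, b⟩ := h

/-- Numeric key lemma: any color incident to a vertex lies in the prescribed range. -/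
lemma key (s t : ℕ) (hs : 1 ≤ s) (ht : 1 ≤ t) (iv jv av bv : ℕ) (x : ℤ)
    (hiv : iv < 4) (hjv : jv < 4) (hne : iv ≠ jv)
    (ha : av < if iv % 2 = 0 then s else t) (hb : bv < if jv % 2 = 0 then s else t)
    (hc : (av : ℤ) + bv + KF s t (iv + jv) = x) :
    (av : ℤ) + 1 - s ≤ x ∧ x ≤ (av : ℤ) + (if iv % 2 = 0 then 2 * (t : ℤ) else (s : ℤ) + t) := by
  interval_cases iv <;> interval_cases jv <;> simp_all [KF] <;> omega

/-- Numeric key lemma: two incident edges with equal colors go to the same vertex. -/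
lemma key2 (s t iv j1 j2 av b1 b2 : ℕ) (q : ℤ)
    (hiv : iv < 4) (hj1 : j1 < 4) (hj2 : j2 < 4) (h1 : iv ≠ j1) (h2 : iv ≠ j2)
    (hb1 : b1 < if j1 % 2 = 0 then s else t) (hb2 : b2 < if j2 % 2 = 0 then s else t)
    (hc1 : (av : ℤ) + b1 + KF s t (iv + j1) = q) (hc2 : (av : ℤ) + b2 + KF s t (iv + j2) = q) :
    j1 = j2 ∧ b1 = b2 := by
  interval_cases iv <;> interval_cases j1 <;> interval_cases j2 <;> simp_all [KF] <;> omega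

/-- The set of colors incident to a vertex is exactly the prescribed integer interval. -/
lemma krange (s t : ℕ) (hs : 1 ≤ s) (ht : 1 ≤ t)
    (v : Σ i : Fin 4, Fin (if i.val % 2 = 0 then s else t)) (x : ℤ) :
    (∃ u, (Kstst s t).Adj v u ∧ kcol s t s(v, u) = x) ↔
      (v.2.val : ℤ) + 1 - s ≤ x ∧
        x ≤ (v.2.val : ℤ) + (if v.1.val % 2 = 0 then 2 * (t : ℤ) else (s : ℤ) + t) := by
  obtain ⟨i, a⟩ := v
  constructor
  · rintro ⟨⟨j, b⟩, hadj, hc⟩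
    have hij : i ≠ j := hadj
    have hij' : i.val ≠ j.val := fun h => hij (Fin.ext h)
    rw [kcol_mk] at hc
    exact key s t hs ht i.val j.val a.val b.val x i.isLt j.isLt hij' a.isLt b.isLt hc
  · rintro ⟨h1, h2⟩
    fin_cases i <;> dsimp only at h1 <;> norm_num at h2
    · -- part 0
      have ha : a.val < s := a.isLt
      rcases le_or_gt x ((a.val : ℤ) + t - s) with hx | hx
      · exact ⟨⟨1, ⟨(x - a.val - 1 + s).toNat, show _ < t by omega⟩⟩, adj_mk (by decide) _ _,
          by rw [kcol_mk]; simp [KF]; omega⟩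
      rcases le_or_gt x ((a.val : ℤ) + t) with hx2 | hx2
      · exact ⟨⟨2, ⟨(x - a.val - (t - s : ℤ) - 1).toNat, show _ < s by omega⟩⟩,
          adj_mk (by decide) _ _, by rw [kcol_mk]; simp [KF]; omega⟩
      · exact ⟨⟨3, ⟨(x - a.val - t - 1).toNat, show _ < t by omega⟩⟩, adj_mk (by decide) _ _,
          by rw [kcol_mk]; simp [KF]; omega⟩
    · -- part 1
      have ha : a.val < t := a.isLt
      rcases le_or_gt x ((a.val : ℤ)) with hx | hx
      · exact ⟨⟨0, ⟨(x - a.val - 1 + s).toNat, show _ < s by omega⟩⟩, adj_mk (by decide) _ _,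
          by rw [kcol_mk]; simp [KF]; omega⟩
      rcases le_or_gt x ((a.val : ℤ) + t) with hx2 | hx2
      · exact ⟨⟨3, ⟨(x - a.val - 1).toNat, show _ < t by omega⟩⟩, adj_mk (by decide) _ _,
          by rw [kcol_mk]; simp [KF]; omega⟩
      · exact ⟨⟨2, ⟨(x - a.val - t - 1).toNat, show _ < s by omega⟩⟩, adj_mk (by decide) _ _,
          by rw [kcol_mk]; simp [KF]; omega⟩
    · -- part 2
      have ha : a.val < s := a.isLt
      rcases le_or_gt x ((a.val : ℤ) + t - s) with hx | hx
      · exact ⟨⟨3, ⟨(x - a.val - 1 + s).toNat, show _ < t by omega⟩⟩, adj_mk (by decide) _ _,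
          by rw [kcol_mk]; simp [KF]; omega⟩
      rcases le_or_gt x ((a.val : ℤ) + t) with hx2 | hx2
      · exact ⟨⟨0, ⟨(x - a.val - (t - s : ℤ) - 1).toNat, show _ < s by omega⟩⟩,
          adj_mk (by decide) _ _, by rw [kcol_mk]; simp [KF]; omega⟩
      · exact ⟨⟨1, ⟨(x - a.val - t - 1).toNat, show _ < t by omega⟩⟩, adj_mk (by decide) _ _,
          by rw [kcol_mk]; simp [KF]; omega⟩
    · -- part 3
      have ha : a.val < t := a.isLt
      rcases le_or_gt x ((a.val : ℤ)) with hx | hx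
      · exact ⟨⟨2, ⟨(x - a.val - 1 + s).toNat, show _ < s by omega⟩⟩, adj_mk (by decide) _ _,
          by rw [kcol_mk]; simp [KF]; omega⟩
      rcases le_or_gt x ((a.val : ℤ) + t) with hx2 | hx2
      · exact ⟨⟨1, ⟨(x - a.val - 1).toNat, show _ < t by omega⟩⟩, adj_mk (by decide) _ _,
          by rw [kcol_mk]; simp [KF]; omega⟩
      · exact ⟨⟨0, ⟨(x - a.val - t - 1).toNat, show _ < s by omega⟩⟩, adj_mk (by decide) _ _,
          by rw [kcol_mk]; simp [KF]; omega⟩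

lemma kinterval (s t : ℕ) (hs : 1 ≤ s) (ht : 1 ≤ t) :
    IsIntervalColoring (Kstst s t) (kcol s t) := by
  intro v a b x ha hb hax hxb
  rw [krange s t hs ht] at ha hb ⊢
  exact ⟨by omega, by omega⟩

lemma kproper (s t : ℕ) : IsKImproper (Kstst s t) (kcol s t) 1 := by
  intro v q
  rw [Set.ncard_le_one_iff (Set.toFinite _)]
  rintro ⟨j1, b1⟩ ⟨j2, b2⟩ ⟨hadj1, hc1⟩ ⟨hadj2, hc2⟩
  obtain ⟨i, a⟩ := v
  have h1 : i ≠ j1 := hadj1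
  have h2 : i ≠ j2 := hadj2
  rw [kcol_mk] at hc1 hc2
  obtain ⟨hj, hb⟩ := key2 s t i.val j1.val j2.val a.val b1.val b2.val q
    i.isLt j1.isLt j2.isLt (fun h => h1 (Fin.ext h)) (fun h => h2 (Fin.ext h))
    b1.isLt b2.isLt hc1 hc2
  have hjj : j1 = j2 := Fin.ext hj
  subst hjj
  exact congrArg (Sigma.mk j1) (Fin.ext hb)

/-- For all `s, t ≥ 1`, the complete multipartite graph `K_{s,t,s,t}` is interval
colorable, i.e. `μ_int(K_{s,t,s,t}) = 1`. -/
theorem stmt0 (s t : ℕ) (hs : 1 ≤ s) (ht : 1 ≤ t) :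
    impropriety (Kstst s t) = 1 := by
  classical
  show sInf {k : ℕ | ∃ c, IsIntervalColoring (Kstst s t) c ∧ IsKImproper (Kstst s t) c k} = 1
  set S := {k : ℕ | ∃ c, IsIntervalColoring (Kstst s t) c ∧ IsKImproper (Kstst s t) c k} with hS
  have h1 : 1 ∈ S := ⟨kcol s t, kinterval s t hs ht, kproper s t⟩
  have h0 : 0 ∉ S := by
    rintro ⟨c, -, himp⟩
    set v0 : Σ i : Fin 4, Fin (if i.val % 2 = 0 then s else t) := ⟨0, ⟨0, hs⟩⟩ with hv0
    set u0 : Σ i : Fin 4, Fin (if i.val % 2 = 0 then s else t) := ⟨1, ⟨0, ht⟩⟩ with hu0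
    have hmem : u0 ∈ {u | (Kstst s t).Adj v0 u ∧ c s(v0, u) = c s(v0, u0)} :=
      ⟨adj_mk (by decide) _ _, rfl⟩
    have h0' := himp v0 (c s(v0, u0))
    rw [Nat.le_zero, Set.ncard_eq_zero (Set.toFinite _)] at h0'
    rw [h0'] at hmem
    exact hmem
  have hle : sInf S ≤ 1 := Nat.sInf_le h1
  have hmem := Nat.sInf_mem (⟨1, h1⟩ : S.Nonempty)
  have hne : sInf S ≠ 0 := fun h => h0 (h ▸ hmem)
  omega
end

section
/- Let s, t ≥ 1 be integers and let m = 2^ℓ for some integer ℓ ≥ 1. Then the complete multipartite graph K_{s,t,s,t,...,s,t} with m parts (m/2 parts of size s and m/2 parts of size t, alternating) is interval colorable, i.e., μ_int(K_{s,t,...,s,t}) = 1. -/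
/-- parity of xor -/
lemma xorp (a b : ℕ) : (a ^^^ b) % 2 = (a % 2 + b % 2) % 2 := by
  rw [Nat.xor_mod_two_eq]; omega

/-- the edge color, at the level of naturals: `qv,iv` is the endpoint whose parity decides
the shift, `rv,jv` the other. -/
def clrN (s t m qv iv rv jv : ℕ) : ℕ :=
  (if qv ^^^ rv = 1 then m / 2 - 1 else (qv ^^^ rv) / 2 - 1) * (s + t)
  + (if (qv ^^^ rv) % 2 = 1 then 0 else if qv % 2 = 0 then t else s) + iv + jv

lemma clrN_symm (s t m qv iv rv jv : ℕ) :
    clrN s t m qv iv rv jv = clrN s t m rv jv qv iv := by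
  unfold clrN
  have h := xorp qv rv
  rw [Nat.xor_comm rv qv]
  split_ifs <;> omega

lemma clrN_bound (s t m qv iv rv jv : ℕ) (hs : 1 ≤ s) (ht : 1 ≤ t)
    (hm2 : 2 ≤ m) (hme : m % 2 = 0) (hne : qv ≠ rv) (hdm : qv ^^^ rv < m)
    (hj : jv < if rv % 2 = 0 then s else t) :
    iv ≤ clrN s t m qv iv rv jv ∧
      clrN s t m qv iv rv jv <
        iv + ((m / 2 - 1) * (s + t) + (if qv % 2 = 0 then t else s)) := by
  have hd0 : qv ^^^ rv ≠ 0 := by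
    simpa [Nat.xor_eq_zero_iff] using hne
  have hp := xorp qv rv
  unfold clrN
  by_cases hd1 : qv ^^^ rv = 1
  · rw [if_pos hd1, hd1]
    split_ifs at * <;> omega
  · rw [if_neg hd1]
    have h2 : 2 ≤ qv ^^^ rv := by omega
    have hmul : ((qv ^^^ rv) / 2 - 1 + 1) * (s + t) ≤ (m / 2 - 1) * (s + t) :=
      Nat.mul_le_mul_right _ (by omega)
    have hexp : ((qv ^^^ rv) / 2 - 1 + 1) * (s + t)
        = ((qv ^^^ rv) / 2 - 1) * (s + t) + (s + t) := by ring
    split_ifs at * <;> omega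

lemma block_inj {P a b e1 e2 : ℕ} (hP : 0 < P) (h1 : e1 < P) (h2 : e2 < P)
    (h : a * P + e1 = b * P + e2) : a = b ∧ e1 = e2 := by
  have ha : (a * P + e1) / P = a := by
    rw [Nat.mul_comm a P, Nat.mul_add_div hP, Nat.div_eq_of_lt h1, Nat.add_zero]
  have hb : (b * P + e2) / P = b := by
    rw [Nat.mul_comm b P, Nat.mul_add_div hP, Nat.div_eq_of_lt h2, Nat.add_zero]
  have hab : a = b := by rw [← ha, ← hb, h]
  subst hab
  exact ⟨rfl, by omega⟩

set_option maxHeartbeats 3000000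
lemma clrN_inj (s t m qv i r1 j1 r2 j2 : ℕ) (hs : 1 ≤ s) (ht : 1 ≤ t)
    (hm2 : 2 ≤ m) (hme : m % 2 = 0) (hne1 : qv ≠ r1) (hne2 : qv ≠ r2)
    (hd1 : qv ^^^ r1 < m) (hd2 : qv ^^^ r2 < m)
    (hj1 : j1 < if r1 % 2 = 0 then s else t) (hj2 : j2 < if r2 % 2 = 0 then s else t)
    (h : clrN s t m qv i r1 j1 = clrN s t m qv i r2 j2) : r1 = r2 ∧ j1 = j2 := by
  have hp1 := xorp qv r1
  have hp2 := xorp qv r2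
  have h10 : qv ^^^ r1 ≠ 0 := by simpa [Nat.xor_eq_zero_iff] using hne1
  have h20 : qv ^^^ r2 ≠ 0 := by simpa [Nat.xor_eq_zero_iff] using hne2
  have hre : (if qv ^^^ r1 = 1 then m / 2 - 1 else (qv ^^^ r1) / 2 - 1) * (s + t)
      + ((if (qv ^^^ r1) % 2 = 1 then 0 else if qv % 2 = 0 then t else s) + j1)
      = (if qv ^^^ r2 = 1 then m / 2 - 1 else (qv ^^^ r2) / 2 - 1) * (s + t)
      + ((if (qv ^^^ r2) % 2 = 1 then 0 else if qv % 2 = 0 then t else s) + j2) := by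
    unfold clrN at h; omega
  have hE1 : (if (qv ^^^ r1) % 2 = 1 then 0 else if qv % 2 = 0 then t else s) + j1
      < s + t := by
    split_ifs at hj1 ⊢ <;> omega
  have hE2 : (if (qv ^^^ r2) % 2 = 1 then 0 else if qv % 2 = 0 then t else s) + j2
      < s + t := by
    split_ifs at hj2 ⊢ <;> omega
  obtain ⟨hK, hE⟩ := block_inj (by omega) hE1 hE2 hre
  have hdd : qv ^^^ r1 = qv ^^^ r2 ∧ j1 = j2 := by
    split_ifs at hK hE hj1 hj2 <;> omega
  refine ⟨?_, hdd.2⟩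
  rw [← Nat.xor_xor_cancel_left qv r1, hdd.1, Nat.xor_xor_cancel_left]

lemma build_u (s t m : ℕ) (hmx : ∀ a b : ℕ, a < m → b < m → a ^^^ b < m)
    (v : Σ i : Fin m, Fin (if i.val % 2 = 0 then s else t)) (d jj : ℕ)
    (hd0 : d ≠ 0) (hdm : d < m)
    (hjj : jj < if (v.1.val ^^^ d) % 2 = 0 then s else t) :
    ∃ u : Σ i : Fin m, Fin (if i.val % 2 = 0 then s else t),
      u.1 ≠ v.1 ∧ u.1.val = v.1.val ^^^ d ∧ u.2.val = jj := by
  refine ⟨⟨⟨v.1.val ^^^ d, hmx _ _ v.1.isLt hdm⟩, ⟨jj, hjj⟩⟩, ?_, rfl, rfl⟩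
  intro hcon
  apply hd0
  have h1 : v.1.val ^^^ d = v.1.val := congrArg Fin.val hcon
  have h2 := congrArg (fun x => v.1.val ^^^ x) h1
  simpa [Nat.xor_xor_cancel_left, Nat.xor_self] using h2

lemma exists_clr (s t m : ℕ) (hs : 1 ≤ s) (ht : 1 ≤ t) (hm2 : 2 ≤ m) (hme : m % 2 = 0)
    (hmx : ∀ a b : ℕ, a < m → b < m → a ^^^ b < m)
    (v : Σ i : Fin m, Fin (if i.val % 2 = 0 then s else t)) (y : ℕ)
    (hy : y < (m / 2 - 1) * (s + t) + (if v.1.val % 2 = 0 then t else s)) :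
    ∃ u : Σ i : Fin m, Fin (if i.val % 2 = 0 then s else t),
      u.1 ≠ v.1 ∧ clrN s t m v.1.val v.2.val u.1.val u.2.val = v.2.val + y := by
  by_cases hb : y < (m / 2 - 1) * (s + t)
  · -- inside one of the paired blocks
    have hk : y / (s + t) < m / 2 - 1 := (Nat.div_lt_iff_lt_mul (by omega)).2 hb
    have hko : (s + t) * (y / (s + t)) + y % (s + t) = y := Nat.div_add_mod y (s + t)
    have ho : y % (s + t) < s + t := Nat.mod_lt _ (by omega)
    set k := y / (s + t) with hkdef
    set o := y % (s + t) with hodef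
    by_cases ho2 : o < if v.1.val % 2 = 0 then t else s
    · -- odd super-color d = 2k+3
      have hx := xorp v.1.val (2 * k + 3)
      obtain ⟨u, hu, hu1, hu2⟩ := build_u s t m hmx v (2 * k + 3) o (by omega)
        (by omega) (by split_ifs at ho2 ⊢ <;> omega)
      refine ⟨u, hu, ?_⟩
      unfold clrN
      rw [hu2, hu1, Nat.xor_xor_cancel_left]
      rw [if_neg (by omega : ¬(2 * k + 3 = 1))]
      rw [if_pos (by omega : (2 * k + 3) % 2 = 1)]
      have hprod : ((2 * k + 3) / 2 - 1) * (s + t) = (s + t) * k := by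
        have h3 : (2 * k + 3) / 2 - 1 = k := by omega
        rw [h3, Nat.mul_comm]
      omega
    · -- even super-color d = 2k+2
      have hx := xorp v.1.val (2 * k + 2)
      obtain ⟨u, hu, hu1, hu2⟩ := build_u s t m hmx v (2 * k + 2)
        (o - (if v.1.val % 2 = 0 then t else s)) (by omega) (by omega)
        (by split_ifs at ho2 ⊢ <;> omega)
      refine ⟨u, hu, ?_⟩
      unfold clrN
      rw [hu2, hu1, Nat.xor_xor_cancel_left]
      rw [if_neg (by omega : ¬(2 * k + 2 = 1))]
      rw [if_neg (by omega : ¬((2 * k + 2) % 2 = 1))]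
      have hprod : ((2 * k + 2) / 2 - 1) * (s + t) = (s + t) * k := by
        have h3 : (2 * k + 2) / 2 - 1 = k := by omega
        rw [h3, Nat.mul_comm]
      split_ifs at ho2 ⊢ <;> omega
  · -- the last block, super-color d = 1
    have hx := xorp v.1.val 1
    obtain ⟨u, hu, hu1, hu2⟩ := build_u s t m hmx v 1
      (y - (m / 2 - 1) * (s + t)) (by omega) (by omega)
      (by split_ifs at hy ⊢ <;> omega)
    refine ⟨u, hu, ?_⟩
    unfold clrN
    rw [hu2, hu1, Nat.xor_xor_cancel_left]
    rw [if_pos rfl, if_pos (by omega : 1 % 2 = 1)]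
    omega

/-- Let `s, t ≥ 1` and `m = 2^ℓ` with `ℓ ≥ 1`.  The complete multipartite graph
`K_{s,t,s,t,…,s,t}` with `m` parts (`m/2` parts of size `s` and `m/2` of size `t`,
alternating) is interval colorable, i.e. its impropriety equals `1`. -/
theorem stmt1 (s t : ℕ) (hs : 1 ≤ s) (ht : 1 ≤ t) (ℓ : ℕ) (hℓ : 1 ≤ ℓ) :
    impropriety (SimpleGraph.completeMultipartiteGraph
      fun i : Fin (2 ^ ℓ) => Fin (if i.val % 2 = 0 then s else t)) = 1 := by
  have hm2 : 2 ≤ 2 ^ ℓ := by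
    have : 2 ^ 1 ≤ 2 ^ ℓ := Nat.pow_le_pow_right (by norm_num) hℓ
    omega
  have hme : 2 ^ ℓ % 2 = 0 := by
    have : (2 : ℕ) ∣ 2 ^ ℓ := dvd_pow_self 2 (by omega)
    omega
  have hmx : ∀ a b : ℕ, a < 2 ^ ℓ → b < 2 ^ ℓ → a ^^^ b < 2 ^ ℓ :=
    fun a b ha hb => Nat.xor_lt_two_pow ha hb
  set G := SimpleGraph.completeMultipartiteGraph
      fun i : Fin (2 ^ ℓ) => Fin (if i.val % 2 = 0 then s else t) with hG
  have hadj : ∀ v u, G.Adj v u ↔ v.1 ≠ u.1 := fun v u => Iff.rfl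
  set c : Sym2 (Σ i : Fin (2 ^ ℓ), Fin (if i.val % 2 = 0 then s else t)) → ℤ :=
    Sym2.lift ⟨fun v u => (clrN s t (2 ^ ℓ) v.1.val v.2.val u.1.val u.2.val : ℤ),
      fun v u => by dsimp only; exact_mod_cast clrN_symm s t (2 ^ ℓ) v.1.val v.2.val u.1.val u.2.val⟩
    with hcdef
  have hc : ∀ v u, c s(v, u) = (clrN s t (2 ^ ℓ) v.1.val v.2.val u.1.val u.2.val : ℤ) :=
    fun v u => by rw [hcdef, Sym2.lift_mk]
  have hmem : 1 ∈ {k : ℕ | ∃ c : Sym2 _ → ℤ, IsIntervalColoring G c ∧ IsKImproper G c k} := by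
    refine ⟨c, ?_, ?_⟩
    · -- interval property
      rintro v a b x ⟨u1, h1, e1⟩ ⟨u2, h2, e2⟩ hax hxb
      rw [hc] at e1 e2
      have hne1 : v.1.val ≠ u1.1.val := fun h => ((hadj v u1).1 h1) (Fin.val_injective h)
      have hne2 : v.1.val ≠ u2.1.val := fun h => ((hadj v u2).1 h2) (Fin.val_injective h)
      have hb1 := clrN_bound s t (2 ^ ℓ) v.1.val v.2.val u1.1.val u1.2.val hs ht hm2 hme
        hne1 (hmx _ _ v.1.isLt u1.1.isLt) u1.2.isLt
      have hb2 := clrN_bound s t (2 ^ ℓ) v.1.val v.2.val u2.1.val u2.2.val hs ht hm2 hme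
        hne2 (hmx _ _ v.1.isLt u2.1.isLt) u2.2.isLt
      obtain ⟨u, hune, hueq⟩ := exists_clr s t (2 ^ ℓ) hs ht hm2 hme hmx v
        (x - (v.2.val : ℤ)).toNat (by omega)
      refine ⟨u, (hadj v u).2 hune.symm, ?_⟩
      rw [hc, hueq]
      push_cast
      omega
    · -- properness
      intro v q
      rw [Set.ncard_le_one_iff]
      rintro u1 u2 ⟨ha1, he1⟩ ⟨ha2, he2⟩
      rw [hc] at he1 he2
      have hne1 : v.1.val ≠ u1.1.val := fun h => ((hadj v u1).1 ha1) (Fin.val_injective h)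
      have hne2 : v.1.val ≠ u2.1.val := fun h => ((hadj v u2).1 ha2) (Fin.val_injective h)
      obtain ⟨hr, hj⟩ := clrN_inj s t (2 ^ ℓ) v.1.val v.2.val u1.1.val u1.2.val
        u2.1.val u2.2.val hs ht hm2 hme hne1 hne2
        (hmx _ _ v.1.isLt u1.1.isLt) (hmx _ _ v.1.isLt u2.1.isLt)
        u1.2.isLt u2.2.isLt (by exact_mod_cast he1.trans he2.symm)
      obtain ⟨⟨r1, hr1⟩, j1, hj1⟩ := u1
      obtain ⟨⟨r2, hr2⟩, j2, hj2⟩ := u2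
      simp only [Fin.val_mk] at hr hj
      subst hr
      subst hj
      rfl
  have hpos : ∀ k ∈ {k : ℕ | ∃ c : Sym2 _ → ℤ, IsIntervalColoring G c ∧ IsKImproper G c k},
      1 ≤ k := by
    rintro k ⟨c', _, himp⟩
    by_contra hk
    have hk0 : k = 0 := by omega
    subst hk0
    have hv0 : (0 : ℕ) < if (0 : ℕ) % 2 = 0 then s else t := by
      rw [if_pos rfl]; omega
    have hu0 : (0 : ℕ) < if (1 : ℕ) % 2 = 0 then s else t := by
      rw [if_neg (by omega)]; omega
    set v0 : Σ i : Fin (2 ^ ℓ), Fin (if i.val % 2 = 0 then s else t) :=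
      ⟨⟨0, by omega⟩, ⟨0, hv0⟩⟩ with hv0d
    set u0 : Σ i : Fin (2 ^ ℓ), Fin (if i.val % 2 = 0 then s else t) :=
      ⟨⟨1, by omega⟩, ⟨0, hu0⟩⟩ with hu0d
    have hadj0 : G.Adj v0 u0 := by
      refine (hadj v0 u0).2 fun h => ?_
      have := congrArg Fin.val h
      simp [hv0d, hu0d] at this
    have hne : ({u | G.Adj v0 u ∧ c' s(v0, u) = c' s(v0, u0)} : Set _).Nonempty :=
      ⟨u0, hadj0, rfl⟩
    have hfin : ({u | G.Adj v0 u ∧ c' s(v0, u) = c' s(v0, u0)} : Set _).Finite :=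
      Set.toFinite _
    have hcard := (Set.ncard_pos hfin).2 hne
    have := himp v0 (c' s(v0, u0))
    omega
  have hsub : impropriety G =
      sInf {k : ℕ | ∃ c : Sym2 _ → ℤ, IsIntervalColoring G c ∧ IsKImproper G c k} := rfl
  rw [hsub]
  exact le_antisymm (Nat.sInf_le hmem) (hpos _ (Nat.sInf_mem ⟨1, hmem⟩))
end

section
/- For every integer n ≥ 1, the n-th iterated triangulation Tr(n) satisfies μ_int(Tr(n)) ≤ ⌈Δ(Tr(n))/3⌉, where Δ denotes maximum degree. -/
/-- Inner faces of the iterated triangulation are addressed by lists over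
`Fin 3`: `[]` is the inner face of `Tr(0)` and `j :: f` is the `j`-th of the
three faces into which the face `f` is subdivided.  Vertices are the three
original corners (`Sum.inl`) together with one new vertex `Sum.inr f` placed
inside each subdivided face `f`.  `triBoundary f k` is the `k`-th vertex on the
boundary triangle of the face `f`: the boundary of `j :: f` consists of two of
the boundary vertices of `f` together with the vertex added inside `f`. -/
def triBoundary : List (Fin 3) → Fin 3 → (Fin 3) ⊕ (List (Fin 3))
  | [], k => Sum.inl k
  | j :: f, k => if k.val < 2 then triBoundary f (j + k) else Sum.inr f

/-- The vertices of `Tr(n)`: the three corners and one vertex for each face of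
`Tr(i)` with `i < n` (faces of depth `< n`). -/
def TrVert (n : ℕ) : Type :=
  {v : (Fin 3) ⊕ (List (Fin 3)) // ∀ l, v = Sum.inr l → l.length < n}

/-- The `n`-th iterated triangulation `Tr(n)`: two vertices are adjacent iff
they are distinct vertices on the boundary triangle of a common face of depth
`n` (every edge of `Tr(n)` lies on the boundary of an inner face of `Tr(n)`). -/
def IterTri (n : ℕ) : SimpleGraph (TrVert n) where
  Adj u v := u ≠ v ∧ ∃ f : List (Fin 3), f.length = n ∧
    ∃ k k' : Fin 3, u.val = triBoundary f k ∧ v.val = triBoundary f k'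
  symm := by
    constructor
    rintro u v ⟨huv, f, hf, k, k', hu, hv⟩
    exact ⟨huv.symm, f, hf, k', k, hv, hu⟩
  loopless := by
    constructor
    rintro u ⟨h, -⟩
    exact h rfl

-- ### basic lemmas

abbrev Z3 := ZMod 3

def bc : Fin 2 → Fin 3 := Fin.castLE (by omega)

def cz (j : Fin 3) : Z3 := (j.val : Z3)

lemma cz_inj {a b : Fin 3} (h : cz a = cz b) : a = b := by revert h; revert a b; decide

lemma cz_add (a b : Fin 3) : cz (a + b) = cz a + cz b := by revert a b; decide

lemma cz_sub (a b : Fin 3) : cz (a - b) = cz a - cz b := by revert a b; decide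

def toF (z : Z3) : Fin 3 := ⟨z.val, ZMod.val_lt z⟩

lemma cz_toF (z : Z3) : cz (toF z) = z := by revert z; decide

def dsum : List (Fin 3) → Z3
  | [] => 0
  | j :: f => cz j + dsum f

lemma tb_nil (k : Fin 3) : triBoundary [] k = Sum.inl k := rfl

lemma tb_cons_lt {k : Fin 3} (j : Fin 3) (f : List (Fin 3)) (h : k.val < 2) :
    triBoundary (j :: f) k = triBoundary f (j + k) := by
  simp [triBoundary, h]

lemma tb_cons_two (j : Fin 3) (f : List (Fin 3)) :
    triBoundary (j :: f) 2 = Sum.inr f := by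
  simp [triBoundary]

lemma fin3_eq_two {k : Fin 3} (h : ¬ k.val < 2) : k = 2 := by
  have := k.isLt
  exact Fin.ext (by omega)

lemma tb_len : ∀ (f : List (Fin 3)) (k : Fin 3) (l : List (Fin 3)),
    triBoundary f k = Sum.inr l → l.length < f.length := by
  intro f
  induction f with
  | nil => intro k l h; simp [triBoundary] at h
  | cons j t ih =>
    intro k l h
    by_cases hk : k.val < 2
    · rw [tb_cons_lt j t hk] at h
      have := ih _ _ h
      simpa using Nat.lt_succ_of_lt this
    · rw [fin3_eq_two hk, tb_cons_two] at h
      injection h with h'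
      subst h'
      simp

lemma tb_inj : ∀ (f : List (Fin 3)) (k k' : Fin 3),
    triBoundary f k = triBoundary f k' → k = k' := by
  intro f
  induction f with
  | nil => intro k k' h; simpa [triBoundary] using h
  | cons j t ih =>
    intro k k' h
    by_cases hk : k.val < 2 <;> by_cases hk' : k'.val < 2
    · rw [tb_cons_lt j t hk, tb_cons_lt j t hk'] at h
      have := ih _ _ h
      exact add_left_cancel this
    · rw [fin3_eq_two hk', tb_cons_two, tb_cons_lt j t hk] at h
      exact absurd (tb_len _ _ _ h) (by omega)
    · rw [fin3_eq_two hk, tb_cons_two, tb_cons_lt j t hk'] at h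
      exact absurd (tb_len _ _ _ h.symm) (by omega)
    · rw [fin3_eq_two hk, fin3_eq_two hk']

def kOf : List (Fin 3) → ((Fin 3) ⊕ (List (Fin 3))) → Fin 3
  | [], b => match b with | Sum.inl i => i | Sum.inr _ => 0
  | j :: f, b => if b = Sum.inr f then 2 else kOf f b - j

lemma kOf_tb : ∀ (f : List (Fin 3)) (k : Fin 3) (b : (Fin 3) ⊕ (List (Fin 3))),
    triBoundary f k = b → kOf f b = k := by
  intro f
  induction f with
  | nil => intro k b h; rw [tb_nil] at h; subst h; rfl
  | cons j t ih =>
    intro k b h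
    by_cases hk : k.val < 2
    · rw [tb_cons_lt j t hk] at h
      have hb : b ≠ Sum.inr t := by
        rintro rfl
        exact absurd (tb_len _ _ _ h) (by omega)
      rw [kOf, if_neg hb, ih _ _ h]
      exact add_sub_cancel_left j k
    · rw [fin3_eq_two hk, tb_cons_two] at h
      rw [kOf, if_pos h.symm, fin3_eq_two hk]

-- ### grow

def grow : List (Fin 3) → Fin 3 → List (Fin 2) → List (Fin 3) × Fin 3
  | f, p, [] => (f, p)
  | f, p, r :: w => grow ((p - bc r) :: f) (bc r) w

lemma grow_nil (f : List (Fin 3)) (p : Fin 3) : grow f p [] = (f, p) := rfl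

lemma grow_cons (f : List (Fin 3)) (p : Fin 3) (r : Fin 2) (w : List (Fin 2)) :
    grow f p (r :: w) = grow ((p - bc r) :: f) (bc r) w := rfl

lemma bc_val (r : Fin 2) : (bc r).val = r.val := rfl

lemma bc_lt (r : Fin 2) : (bc r).val < 2 := r.isLt

lemma grow_len : ∀ (w : List (Fin 2)) (f : List (Fin 3)) (p : Fin 3),
    (grow f p w).1.length = f.length + w.length := by
  intro w
  induction w with
  | nil => intro f p; simp [grow_nil]
  | cons r w ih =>
    intro f p
    rw [grow_cons, ih]
    simp; omega

lemma grow_tb : ∀ (w : List (Fin 2)) (f : List (Fin 3)) (p : Fin 3)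
    (b : (Fin 3) ⊕ (List (Fin 3))), triBoundary f p = b →
    triBoundary (grow f p w).1 (grow f p w).2 = b := by
  intro w
  induction w with
  | nil => intro f p b h; simpa [grow_nil] using h
  | cons r w ih =>
    intro f p b h
    rw [grow_cons]
    refine ih _ _ _ ?_
    rw [tb_cons_lt _ _ (bc_lt r), sub_add_cancel]
    exact h

lemma grow_dsum : ∀ (w : List (Fin 2)) (f : List (Fin 3)) (p : Fin 3),
    dsum (grow f p w).1 = dsum f + cz p - cz (grow f p w).2 := by
  intro w
  induction w with
  | nil => intro f p; simp [grow_nil]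
  | cons r w ih =>
    intro f p
    rw [grow_cons, ih]
    show cz (p - bc r) + dsum f + cz (bc r) - _ = _
    rw [cz_sub]
    ring

lemma grow_suffix : ∀ (w : List (Fin 2)) (f : List (Fin 3)) (p : Fin 3),
    f <:+ (grow f p w).1 := by
  intro w
  induction w with
  | nil => intro f p; simp [grow_nil]
  | cons r w ih =>
    intro f p
    rw [grow_cons]
    exact (List.suffix_cons _ _).trans (ih _ _)

lemma grow_snoc : ∀ (w : List (Fin 2)) (f : List (Fin 3)) (p : Fin 3) (r : Fin 2),
    grow f p (w ++ [r]) = (((grow f p w).2 - bc r) :: (grow f p w).1, bc r) := by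
  intro w
  induction w with
  | nil => intro f p r; simp [grow_nil, grow_cons]
  | cons r' w ih =>
    intro f p r
    rw [List.cons_append, grow_cons, ih, grow_cons]

lemma grow_pos : ∀ (w : List (Fin 2)) (f f' : List (Fin 3)) (p : Fin 3),
    (grow f p w).2 = (grow f' p w).2 := by
  intro w
  induction w with
  | nil => intro f f' p; rfl
  | cons r w ih => intro f f' p; rw [grow_cons, grow_cons]; exact ih _ _ _

def posOf (p : Fin 3) (w : List (Fin 2)) : Fin 3 := (grow [] p w).2

lemma grow_pos' (w : List (Fin 2)) (f : List (Fin 3)) (p : Fin 3) :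
    (grow f p w).2 = posOf p w := grow_pos w f [] p

lemma suffix_eq_of_length {α : Type*} {s t l : List α} (hs : s <:+ l) (ht : t <:+ l)
    (h : s.length = t.length) : s = t := by
  obtain ⟨a, rfl⟩ := hs
  obtain ⟨b, hb⟩ := ht
  have hl : b.length = a.length := by
    have := congrArg List.length hb
    simp at this; omega
  exact (List.append_inj_right hb hl).symm

lemma bc_inj {r r' : Fin 2} (h : bc r = bc r') : r = r' := by
  revert h; revert r r'; decide

lemma grow_inj : ∀ (w w' : List (Fin 2)) (f f' : List (Fin 3)) (p : Fin 3),
    f.length = f'.length → (grow f p w).1 = (grow f' p w').1 → f = f' ∧ w = w' := by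
  intro w
  induction w with
  | nil =>
    intro w' f f' p hlen h
    rw [grow_nil] at h
    have hw' : w' = [] := by
      have := grow_len w' f' p
      rw [← h] at this
      simpa [hlen] using this
    subst hw'
    exact ⟨by simpa [grow_nil] using h, rfl⟩
  | cons r w ih =>
    intro w' f f' p hlen h
    cases w' with
    | nil =>
      exfalso
      rw [grow_nil] at h
      have := grow_len (r :: w) f p
      rw [h] at this
      simp [hlen] at this
    | cons r' w₁ =>
      rw [grow_cons, grow_cons] at h
      have hsuf : ((p - bc r) :: f) = ((p - bc r') :: f') :=
        suffix_eq_of_length (l := (grow ((p - bc r) :: f) (bc r) w).1)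
          (grow_suffix _ _ _) (h ▸ grow_suffix _ _ _) (by simp [hlen])
      have h1 : p - bc r = p - bc r' := by injection hsuf
      have h2 : f = f' := by injection hsuf
      have hr : r = r' := bc_inj (by
        have h3 : p - (p - bc r) = p - (p - bc r') := by rw [h1]
        simpa [sub_sub_cancel] using h3)
      subst hr h2
      obtain ⟨hf, hw⟩ := ih w₁ ((p - bc r) :: f) ((p - bc r) :: f) (bc r) rfl h
      exact ⟨rfl, by rw [hw]⟩

-- ### surjectivity of grow over boundary relations

def bit (k : Fin 3) (h : k.val < 2) : Fin 2 := ⟨k.val, h⟩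

lemma bc_bit (k : Fin 3) (h : k.val < 2) : bc (bit k h) = k := Fin.ext rfl

lemma grow_surj_inr : ∀ (f : List (Fin 3)) (k : Fin 3) (g : List (Fin 3)),
    triBoundary f k = Sum.inr g → ∃ j w, grow (j :: g) 2 w = (f, k) := by
  intro f
  induction f with
  | nil => intro k g h; simp [triBoundary] at h
  | cons a t ih =>
    intro k g h
    by_cases hk : k.val < 2
    · rw [tb_cons_lt a t hk] at h
      obtain ⟨j, w, hw⟩ := ih _ _ h
      refine ⟨j, w ++ [bit k hk], ?_⟩
      rw [grow_snoc, hw, bc_bit]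
      simp
    · rw [fin3_eq_two hk, tb_cons_two] at h
      injection h with h'
      subst h'
      exact ⟨a, [], by rw [grow_nil, fin3_eq_two hk]⟩

lemma grow_surj_inl : ∀ (f : List (Fin 3)) (k : Fin 3) (i : Fin 3),
    triBoundary f k = Sum.inl i → ∃ w, grow [] i w = (f, k) := by
  intro f
  induction f with
  | nil =>
    intro k i h
    rw [tb_nil] at h
    injection h with h'
    exact ⟨[], by rw [grow_nil, h']⟩
  | cons a t ih =>
    intro k i h
    by_cases hk : k.val < 2
    · rw [tb_cons_lt a t hk] at h
      obtain ⟨w, hw⟩ := ih _ _ h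
      refine ⟨w ++ [bit k hk], ?_⟩
      rw [grow_snoc, hw, bc_bit]
      simp
    · rw [fin3_eq_two hk, tb_cons_two] at h
      simp at h

-- ### adjacency characterization

lemma fin3_cases {k k' : Fin 3} (h : k ≠ k') (h2 : k' ≠ k + 1) : k = k' + 1 := by
  revert h h2; revert k k'; decide

lemma adj_of_tb {n : ℕ} : ∀ (d : ℕ) (f : List (Fin 3)) (k k' : Fin 3),
    f.length + d = n → triBoundary f k ≠ triBoundary f k' →
    ∀ (u v : TrVert n), u.val = triBoundary f k → v.val = triBoundary f k' →
    (IterTri n).Adj u v := by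
  intro d
  induction d with
  | zero =>
    intro f k k' hlen hne u v hu hv
    refine ⟨fun h => hne ?_, f, by omega, k, k', hu, hv⟩
    rw [← hu, ← hv, h]
  | succ d ih =>
    intro f k k' hlen hne u v hu hv
    have hkk' : k ≠ k' := fun h => hne (by rw [h])
    by_cases h1 : k' = k + 1
    · refine ih (k :: f) 0 1 (by simp; omega) ?_ u v ?_ ?_
      · rw [tb_cons_lt k f (by decide), tb_cons_lt k f (by decide), add_zero, ← h1]
        exact hne
      · rw [tb_cons_lt k f (by decide), add_zero]; exact hu
      · rw [tb_cons_lt k f (by decide), ← h1]; exact hv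
    · have h2 : k = k' + 1 := fin3_cases hkk' h1
      refine ih (k' :: f) 1 0 (by simp; omega) ?_ u v ?_ ?_
      · rw [tb_cons_lt k' f (by decide), tb_cons_lt k' f (by decide), add_zero, ← h2]
        exact hne
      · rw [tb_cons_lt k' f (by decide), ← h2]; exact hu
      · rw [tb_cons_lt k' f (by decide), add_zero]; exact hv

lemma tb_pair : ∀ (f : List (Fin 3)) (k k' : Fin 3), k ≠ k' →
    (∃ g k₀, triBoundary f k = Sum.inr g ∧ triBoundary f k' = triBoundary g k₀) ∨
    (∃ g k₀, triBoundary f k' = Sum.inr g ∧ triBoundary f k = triBoundary g k₀) ∨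
    (∃ a b, triBoundary f k = Sum.inl a ∧ triBoundary f k' = Sum.inl b) := by
  intro f
  induction f with
  | nil => intro k k' h; exact Or.inr (Or.inr ⟨k, k', rfl, rfl⟩)
  | cons j t ih =>
    intro k k' h
    by_cases hk : k.val < 2 <;> by_cases hk' : k'.val < 2
    · rw [tb_cons_lt j t hk, tb_cons_lt j t hk']
      exact ih (j + k) (j + k') (fun hh => h (add_left_cancel hh))
    · rw [fin3_eq_two hk', tb_cons_two, tb_cons_lt j t hk]
      exact Or.inr (Or.inl ⟨t, j + k, rfl, rfl⟩)
    · rw [fin3_eq_two hk, tb_cons_two, tb_cons_lt j t hk']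
      exact Or.inl ⟨t, j + k', rfl, rfl⟩
    · exact absurd (by rw [fin3_eq_two hk, fin3_eq_two hk']) h

lemma adj_iff {n : ℕ} (u v : TrVert n) : (IterTri n).Adj u v ↔ u ≠ v ∧
    ((∃ f k, u.val = Sum.inr f ∧ v.val = triBoundary f k) ∨
     (∃ f k, v.val = Sum.inr f ∧ u.val = triBoundary f k) ∨
     (∃ a b, u.val = Sum.inl a ∧ v.val = Sum.inl b)) := by
  constructor
  · rintro ⟨hne, f, hf, k, k', hu, hv⟩
    refine ⟨hne, ?_⟩
    have hkk' : k ≠ k' := by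
      rintro rfl
      exact hne (Subtype.ext (hu.trans hv.symm))
    rcases tb_pair f k k' hkk' with ⟨g, k₀, h1, h2⟩ | ⟨g, k₀, h1, h2⟩ | ⟨a, b, h1, h2⟩
    · exact Or.inl ⟨g, k₀, hu.trans h1, hv.trans h2⟩
    · exact Or.inr (Or.inl ⟨g, k₀, hv.trans h1, hu.trans h2⟩)
    · exact Or.inr (Or.inr ⟨a, b, hu.trans h1, hv.trans h2⟩)
  · rintro ⟨hne, ⟨f, k, hu, hv⟩ | ⟨f, k, hv, hu⟩ | ⟨a, b, hu, hv⟩⟩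
    · have hflen : f.length < n := u.2 f hu
      refine adj_of_tb (n - f.length - 1) (k :: f) 2 0 (by simp; omega) ?_ u v ?_ ?_
      · rw [tb_cons_two, tb_cons_lt k f (by decide), add_zero, ← hu, ← hv]
        exact fun h => hne (Subtype.ext h)
      · rw [tb_cons_two]; exact hu
      · rw [tb_cons_lt k f (by decide), add_zero]; exact hv
    · have hflen : f.length < n := v.2 f hv
      exact ((IterTri n).adj_symm (adj_of_tb (n - f.length - 1) (k :: f) 2 0 (by simp; omega)
        (by rw [tb_cons_two, tb_cons_lt k f (by decide), add_zero, ← hu, ← hv]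
            exact fun h => hne (Subtype.ext h.symm)) v u
        (by rw [tb_cons_two]; exact hv)
        (by rw [tb_cons_lt k f (by decide), add_zero]; exact hu)))
    · refine adj_of_tb n [] a b (by simp) ?_ u v ?_ ?_
      · rw [tb_nil, tb_nil, ← hu, ← hv]
        exact fun h => hne (Subtype.ext h)
      · rw [tb_nil]; exact hu
      · rw [tb_nil]; exact hv

-- ### the coloring

def upcol (n : ℕ) (f : List (Fin 3)) (b : (Fin 3) ⊕ (List (Fin 3))) : Z3 :=
  if f = [] then (match b with | Sum.inl a => cz a + 1 | Sum.inr _ => 0)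
  else dsum f + (if f.length = n - 1 then 2 * cz (kOf f b) else 0)

def ecol (n : ℕ) : ((Fin 3) ⊕ (List (Fin 3))) → ((Fin 3) ⊕ (List (Fin 3))) → Z3
  | Sum.inl a, Sum.inl b => 1 + 2 * (cz a + cz b)
  | Sum.inl a, Sum.inr f => upcol n f (Sum.inl a)
  | Sum.inr f, Sum.inl a => upcol n f (Sum.inl a)
  | Sum.inr f, Sum.inr g =>
      if f.length < g.length then upcol n g (Sum.inr f)
      else if g.length < f.length then upcol n f (Sum.inr g) else 0

lemma ecol_symm (n : ℕ) (x y : (Fin 3) ⊕ (List (Fin 3))) : ecol n x y = ecol n y x := by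
  rcases x with a | f <;> rcases y with b | g <;> simp only [ecol]
  · ring
  · rcases lt_trichotomy f.length g.length with h | h | h
    · rw [if_pos h, if_neg (show ¬ g.length < f.length by omega), if_pos h]
    · rw [if_neg (show ¬ f.length < g.length by omega),
        if_neg (show ¬ g.length < f.length by omega),
        if_neg (show ¬ g.length < f.length by omega),
        if_neg (show ¬ f.length < g.length by omega)]
    · rw [if_neg (show ¬ f.length < g.length by omega), if_pos h, if_pos h]

def colZ (z : Z3) : ℤ := z.val

lemma colZ_inj {z z' : Z3} (h : colZ z = colZ z') : z = z' := by
  have h2 : z.val = z'.val := Nat.cast_injective h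
  revert h2; revert z z'; decide

lemma colZ_nonneg (z : Z3) : 0 ≤ colZ z := Int.ofNat_nonneg _

lemma colZ_le_two (z : Z3) : colZ z ≤ 2 := by
  have h : z.val < 3 := ZMod.val_lt z
  simp only [colZ]
  omega

noncomputable def ecolor (n : ℕ) : Sym2 (TrVert n) → ℤ :=
  Sym2.lift ⟨fun u v => colZ (ecol n u.val v.val), fun u v => by
    show colZ (ecol n u.val v.val) = colZ (ecol n v.val u.val)
    rw [ecol_symm]⟩

lemma ecolor_mk (n : ℕ) (u v : TrVert n) :
    ecolor n s(u, v) = colZ (ecol n u.val v.val) := rfl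

-- ### vertex constructors

def mkV (n : ℕ) (f : List (Fin 3)) : TrVert n :=
  if h : f.length < n then ⟨Sum.inr f, fun l hl => by injection hl with h'; exact h' ▸ h⟩
  else ⟨Sum.inl 0, fun l hl => by cases hl⟩

lemma mkV_val (n : ℕ) (f : List (Fin 3)) (h : f.length < n) :
    (mkV n f).val = Sum.inr f := by simp [mkV, h]

def cornerV (n : ℕ) (a : Fin 3) : TrVert n := ⟨Sum.inl a, fun l hl => by cases hl⟩

def mkB (n : ℕ) (g : List (Fin 3)) (hg : g.length < n) (k : Fin 3) : TrVert n :=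
  ⟨triBoundary g k, fun l hl => lt_trans (tb_len g k l hl) hg⟩

-- color of an edge between the center of f and a boundary vertex of f
lemma ecol_face (n : ℕ) (f : List (Fin 3)) (k : Fin 3) (b : (Fin 3) ⊕ (List (Fin 3)))
    (hb : triBoundary f k = b) (hne : f ≠ []) :
    ecol n (Sum.inr f) b = dsum f + (if f.length = n - 1 then 2 * cz k else 0) := by
  rcases b with a | g
  · show upcol n f (Sum.inl a) = _
    rw [upcol, if_neg hne, kOf_tb f k _ hb]
  · have hlen : g.length < f.length := tb_len f k g hb
    show (if f.length < g.length then _ else if g.length < f.length then _ else _) = _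
    rw [if_neg (by omega), if_pos hlen, upcol, if_neg hne, kOf_tb f k _ hb]

-- ### rainbow: every vertex is incident to edges of all three colors

def centerV (n : ℕ) (hn : 0 < n) : TrVert n :=
  ⟨Sum.inr [], fun l hl => by injection hl with h; subst h; simpa using hn⟩

lemma z3_tri (z w : Z3) : z = w ∨ z = w + 1 ∨ z = w + 2 := by revert z w; decide

lemma ne_of_val_ne {n : ℕ} {u v : TrVert n} (h : u.val ≠ v.val) : u ≠ v :=
  fun hh => h (congrArg Subtype.val hh)

lemma fin_add_ne1 : ∀ i : Fin 3, i + 1 ≠ i := by decide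
lemma fin_add_ne2 : ∀ i : Fin 3, i + 2 ≠ i := by decide
lemma zc1 : ∀ i : Fin 3, 1 + 2 * (cz i + cz (i + 1)) = cz i := by decide
lemma zc2 : ∀ i : Fin 3, 1 + 2 * (cz i + cz (i + 2)) = cz i + 2 := by decide

lemma rainbow (n : ℕ) (hn : 1 ≤ n) (v : TrVert n) (z : Z3) :
    ∃ u, (IterTri n).Adj v u ∧ ecolor n s(v, u) = colZ z := by
  obtain ⟨val, hval⟩ := v
  rcases val with i | g
  · -- corner
    by_cases h1 : z = cz i + 1
    · -- use the center
      refine ⟨centerV n hn, ?_, ?_⟩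
      · exact (adj_iff _ _).mpr ⟨ne_of_val_ne (by simp [centerV]),
          Or.inr (Or.inl ⟨[], i, rfl, rfl⟩)⟩
      · refine (ecolor_mk n _ _).trans ?_
        show colZ (upcol n [] (Sum.inl i)) = _
        rw [upcol, if_pos rfl, h1]
    · have h2 : ∃ b : Fin 3, b ≠ i ∧ 1 + 2 * (cz i + cz b) = z := by
        rcases z3_tri z (cz i) with h | h | h
        · exact ⟨i + 1, fin_add_ne1 i, by rw [h, zc1]⟩
        · exact absurd h h1
        · exact ⟨i + 2, fin_add_ne2 i, by rw [h, zc2]⟩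
      obtain ⟨b, hb, hcol⟩ := h2
      refine ⟨cornerV n b, ?_, ?_⟩
      · refine (adj_iff _ _).mpr ⟨ne_of_val_ne ?_, Or.inr (Or.inr ⟨i, b, rfl, rfl⟩)⟩
        intro h
        injection h with h'
        exact hb h'.symm
      · refine (ecolor_mk n _ _).trans ?_
        rw [← hcol]
        rfl
  · -- interior vertex v_g
    have hg : g.length < n := hval g rfl
    by_cases hdeep : g.length = n - 1
    · rcases g with _ | ⟨a, t⟩
      · -- g = [] : base edges
        refine ⟨cornerV n (toF (z - 1)), ?_, ?_⟩
        · exact (adj_iff _ _).mpr ⟨ne_of_val_ne (by simp [cornerV]),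
            Or.inl ⟨[], toF (z - 1), rfl, rfl⟩⟩
        · refine (ecolor_mk n _ _).trans ?_
          show colZ (upcol n [] (Sum.inl (toF (z-1)))) = _
          rw [upcol, if_pos rfl]
          show colZ (cz (toF (z-1)) + 1) = _
          rw [cz_toF]
          ring_nf
      · -- deepest face: parent edges
        set k := toF ((z - dsum (a :: t)) * 2) with hk
        refine ⟨mkB n (a :: t) hg k, ?_, ?_⟩
        · refine (adj_iff _ _).mpr ⟨ne_of_val_ne ?_, Or.inl ⟨a :: t, k, rfl, rfl⟩⟩
          intro h
          exact absurd (tb_len (a :: t) k (a :: t) h.symm) (by omega)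
        · refine (ecolor_mk n _ _).trans ?_
          show colZ (ecol n (Sum.inr (a :: t)) (triBoundary (a :: t) k)) = _
          rw [ecol_face n (a :: t) k _ rfl (by simp)]
          rw [if_pos hdeep, hk, cz_toF]
          congr 1
          have haux : ∀ s t : Z3, s + 2 * ((t - s) * 2) = t := by decide
          exact haux _ _
    · -- shallow: use a root face j :: g
      have hlen : g.length + 1 < n := by omega
      set tw : Z3 := if g.length + 1 = n - 1 then 2 * cz 2 else 0 with htw
      set j := toF (z - dsum g - tw) with hj
      have hlen' : (j :: g).length < n := by simpa using hlen
      refine ⟨mkV n (j :: g), ?_, ?_⟩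
      · refine (adj_iff _ _).mpr ⟨ne_of_val_ne ?_, Or.inr (Or.inl ⟨j :: g, 2, mkV_val n _ hlen', ?_⟩)⟩
        · rw [mkV_val n _ hlen']
          intro h
          have := congrArg (fun x => match x with | Sum.inr l => l.length | Sum.inl _ => 0) h
          simp at this
        · rw [tb_cons_two]
      · refine (ecolor_mk n _ _).trans ?_
        show colZ (ecol n (Sum.inr g) ((mkV n (j :: g)).val)) = _
        rw [mkV_val n _ hlen', ecol_symm, ecol_face n (j :: g) 2 _ (tb_cons_two j g) (by simp)]
        have hdl : (j :: g).length = g.length + 1 := by simp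
        congr 1
        rw [hdl]
        show cz j + dsum g + _ = z
        rw [hj, cz_toF, ← htw]
        ring

-- ### interval property

lemma interval (n : ℕ) (hn : 1 ≤ n) : IsIntervalColoring (IterTri n) (ecolor n) := by
  intro v a b x ⟨u1, h1, e1⟩ ⟨u2, h2, e2⟩ hax hxb
  have ha : 0 ≤ a := by rw [← e1, ecolor_mk]; exact colZ_nonneg _
  have hb : b ≤ 2 := by rw [← e2, ecolor_mk]; exact colZ_le_two _
  have hx0 : 0 ≤ x := le_trans ha hax
  have hx2 : x ≤ 2 := le_trans hxb hb
  have hxz : colZ ((x.toNat : ℕ) : Z3) = x := by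
    have h3 : x.toNat < 3 := by omega
    show ((((x.toNat : ℕ) : Z3)).val : ℤ) = x
    rw [ZMod.val_natCast, Nat.mod_eq_of_lt h3]
    omega
  obtain ⟨u, hu, hcu⟩ := rainbow n hn v ((x.toNat : ℕ) : Z3)
  exact ⟨u, hu, by rw [hcu, hxz]⟩

-- ### the finset of binary lists

def Fl : ℕ → Finset (List (Fin 2))
  | 0 => {[]}
  | m + 1 => ({[]} ∪ (Fl m).image (List.cons 0)) ∪ (Fl m).image (List.cons 1)

lemma mem_Fl : ∀ (m : ℕ) (l : List (Fin 2)), l ∈ Fl m ↔ l.length ≤ m := by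
  intro m
  induction m with
  | zero =>
    intro l
    simp only [Fl, Finset.mem_singleton]
    constructor
    · rintro rfl; simp
    · intro h; exact List.length_eq_zero_iff.mp (by omega)
  | succ m ih =>
    intro l
    simp only [Fl, Finset.mem_union, Finset.mem_singleton, Finset.mem_image]
    constructor
    · rintro ((rfl | ⟨t, ht, rfl⟩) | ⟨t, ht, rfl⟩) <;>
        simp_all <;> omega
    · intro h
      cases l with
      | nil => exact Or.inl (Or.inl rfl)
      | cons r t =>
        have hlt : t.length ≤ m := by simpa using h
        match r with
        | 0 => exact Or.inl (Or.inr ⟨t, (ih t).mpr hlt, rfl⟩)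
        | 1 => exact Or.inr ⟨t, (ih t).mpr hlt, rfl⟩

lemma card_Fl : ∀ m : ℕ, (Fl m).card = 2 ^ (m + 1) - 1 := by
  intro m
  induction m with
  | zero => rfl
  | succ m ih =>
    have h0 : ([] : List (Fin 2)) ∉ (Fl m).image (List.cons 0) := by simp
    have h1 : ([] : List (Fin 2)) ∉ (Fl m).image (List.cons 1) := by simp
    have hd1 : Disjoint ({[]} : Finset (List (Fin 2))) ((Fl m).image (List.cons 0)) := by
      simp [Finset.disjoint_left]
    have hd2 : Disjoint (({[]} : Finset (List (Fin 2))) ∪ (Fl m).image (List.cons 0))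
        ((Fl m).image (List.cons 1)) := by
      rw [Finset.disjoint_left]
      intro l hl hl'
      obtain ⟨t, _, rfl⟩ := Finset.mem_image.mp hl'
      rcases Finset.mem_union.mp hl with h | h
      · simp at h
      · obtain ⟨t', _, he⟩ := Finset.mem_image.mp h
        simp at he
    rw [Fl, Finset.card_union_of_disjoint hd2, Finset.card_union_of_disjoint hd1,
      Finset.card_singleton, Finset.card_image_of_injective _ (List.cons_injective),
      Finset.card_image_of_injective _ (List.cons_injective), ih]
    have : 0 < 2 ^ (m + 1) := Nat.pow_pos (by omega)
    ring_nf
    omega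

-- ### finiteness of the vertex set

lemma finite_len_le (m : ℕ) : {l : List (Fin 3) | l.length ≤ m}.Finite := by
  induction m with
  | zero =>
    refine Set.Finite.subset (Set.finite_singleton []) ?_
    intro l hl
    simp only [Set.mem_setOf_eq, Nat.le_zero] at hl
    simp [List.length_eq_zero_iff.mp hl]
  | succ m ih =>
    refine Set.Finite.subset ((Set.finite_singleton ([] : List (Fin 3))).union
      (Set.finite_iUnion (fun a : Fin 3 => ih.image (List.cons a)))) ?_
    intro l hl
    cases l with
    | nil => exact Or.inl rfl
    | cons a t =>
      refine Or.inr (Set.mem_iUnion.mpr ⟨a, ⟨t, ?_, rfl⟩⟩)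
      simpa using hl

instance TrVert.finite (n : ℕ) : Finite (TrVert n) := by
  have h : {v : (Fin 3) ⊕ (List (Fin 3)) | ∀ l, v = Sum.inr l → l.length < n}.Finite := by
    refine Set.Finite.subset ((Set.finite_range Sum.inl).union
      ((finite_len_le n).image Sum.inr)) ?_
    rintro (a | f) hf
    · exact Or.inl ⟨a, rfl⟩
    · exact Or.inr ⟨f, le_of_lt (hf f rfl), rfl⟩
  exact h.to_subtype

-- ### decidable color facts

def toBit (t : Z3) : Fin 2 := if t = 1 then 1 else 0

lemma toBit_bc : ∀ r : Fin 2, toBit (cz (bc r)) = r := by decide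

lemma two_cz_inj : ∀ a b : Fin 3, 2 * cz a = 2 * cz b → a = b := by decide

lemma czsucc_inj : ∀ a b : Fin 3, cz a + 1 = cz b + 1 → a = b := by decide

lemma corner_mix : ∀ i b : Fin 3, cz i + 1 = 1 + 2 * (cz i + cz b) → b = i := by decide

lemma corner_two : ∀ i b1 b2 : Fin 3,
    1 + 2 * (cz i + cz b1) = 1 + 2 * (cz i + cz b2) → b1 = b2 := by decide

lemma cz_two : cz 2 = 2 := by decide

lemma ncard_le_one_of_subsingleton {α : Type*} {s : Set α} (h : s.Subsingleton) :
    s.ncard ≤ 1 := by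
  rcases s.eq_empty_or_nonempty with rfl | ⟨u0, hu0⟩
  · simp
  · calc s.ncard ≤ ({u0} : Set α).ncard :=
        Set.ncard_le_ncard (fun x hx => h hx hu0) (Set.finite_singleton u0)
    _ = 1 := Set.ncard_singleton u0

-- covering functions

def FcF (n : ℕ) (i : Fin 3) (z : Z3) : List (Fin 2) → TrVert n := fun w₀ =>
  mkV n ((grow [] i (w₀ ++ [toBit (if w₀.length + 1 = n - 1 then z - cz i else cz i - z)])).1)

def FiF (n : ℕ) (g : List (Fin 3)) (z : Z3) : List (Fin 2) → TrVert n := fun w =>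
  mkV n ((grow ((toF (z - dsum g - 2 + cz (posOf 2 w) -
      (if g.length + 1 + w.length = n - 1 then 2 * cz (posOf 2 w) else 0))) :: g) 2 w).1)

-- the corner counting bound

lemma corner_bound (n : ℕ) (hn : 1 ≤ n) (i : Fin 3)
    (hval : ∀ l, (Sum.inl i : (Fin 3) ⊕ (List (Fin 3))) = Sum.inr l → l.length < n)
    (z : Z3) :
    {u | (IterTri n).Adj ⟨Sum.inl i, hval⟩ u ∧
      ecolor n s(⟨Sum.inl i, hval⟩, u) = colZ z}.ncard ≤ 2 ^ (n - 1) := by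
  set v : TrVert n := ⟨Sum.inl i, hval⟩ with hvdef
  set S : Set (TrVert n) := {u | (IterTri n).Adj v u ∧ ecolor n s(v, u) = colZ z} with hSdef
  set T := (Fl (n - 2)).filter (fun w => w.length + 1 ≤ n - 1) with hTdef
  set Sp : Set (TrVert n) :=
    {u | u ∈ S ∧ (u.val = Sum.inr [] ∨ ∃ b, u.val = Sum.inl b)} with hSpdef
  have hcol_of_mem : ∀ u ∈ S, ecol n v.val u.val = z := by
    intro u hu
    exact colZ_inj (by rw [← ecolor_mk]; exact hu.2)
  -- subset
  have hsub : S ⊆ (FcF n i z '' ↑T) ∪ Sp := by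
    intro u hu
    have hz' := hcol_of_mem u hu
    obtain ⟨hadj, hcol⟩ := hu
    rcases ((adj_iff v u).mp hadj).2 with ⟨f, k, hvf, _⟩ | ⟨f, k, huf, hvf⟩ | ⟨a, b, _, hub⟩
    · exact absurd hvf (by simp [hvdef])
    · -- upward
      obtain ⟨w, hw⟩ := grow_surj_inl f k i hvf.symm
      rcases List.eq_nil_or_concat' w with rfl | ⟨w₀, r, rfl⟩
      · rw [grow_nil] at hw
        right
        injection hw with h1 h2
        exact ⟨⟨hadj, hcol⟩, Or.inl (by rw [huf, ← h1])⟩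
      · left
        have hflen : f.length < n := u.2 f huf
        have hfw : f.length = w₀.length + 1 := by
          have hl := grow_len (w₀ ++ [r]) [] i
          rw [hw] at hl
          simpa using hl
        have hmem : w₀ ∈ T := by
          rw [hTdef, Finset.mem_filter, mem_Fl]
          omega
        have hfne : f ≠ [] := by
          intro h; rw [h] at hfw; simp at hfw
        rw [huf] at hz'
        have h3 : dsum f + (if f.length = n - 1 then 2 * cz k else 0) = z := by
          rw [← ecol_face n f k (Sum.inl i) hvf.symm hfne]
          exact hz'
        have hd : dsum f = cz i - cz k := by
          have hgd := grow_dsum (w₀ ++ [r]) [] i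
          rw [hw] at hgd
          simpa [dsum] using hgd
        have hk : k = bc r := by
          have hs := grow_snoc w₀ [] i r
          rw [hw] at hs
          exact congrArg Prod.snd hs
        have hP : (if w₀.length + 1 = n - 1 then z - cz i else cz i - z) = cz (bc r) := by
          rw [← hk]
          by_cases hdc : w₀.length + 1 = n - 1
          · rw [if_pos hdc]
            rw [if_pos (show f.length = n - 1 by omega), hd] at h3
            linear_combination -h3
          · rw [if_neg hdc]
            rw [if_neg (show ¬ f.length = n - 1 by omega), hd, add_zero] at h3
            linear_combination h3
        refine ⟨w₀, hmem, ?_⟩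
        apply Subtype.ext
        show (mkV n ((grow [] i (w₀ ++ [toBit _])).1)).val = u.val
        rw [hP, toBit_bc, (show (grow [] i (w₀ ++ [r])).1 = f by rw [hw]),
          mkV_val n f hflen, huf]
    · exact Or.inr ⟨⟨hadj, hcol⟩, Or.inr ⟨b, hub⟩⟩
  -- Sp is a subsingleton
  have hSp : Sp.Subsingleton := by
    rintro u1 ⟨hu1, hs1⟩ u2 ⟨hu2, hs2⟩
    have hc1 := hcol_of_mem u1 hu1
    have hc2 := hcol_of_mem u2 hu2
    have hne1 : ∀ b, u1.val = Sum.inl b → b ≠ i := by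
      intro b hb hbi
      exact hu1.1.ne' (Subtype.ext (by rw [hb, hbi]))
    have hne2 : ∀ b, u2.val = Sum.inl b → b ≠ i := by
      intro b hb hbi
      exact hu2.1.ne' (Subtype.ext (by rw [hb, hbi]))
    rcases hs1 with hc | ⟨b1, hb1⟩ <;> rcases hs2 with hc' | ⟨b2, hb2⟩
    · exact Subtype.ext (by rw [hc, hc'])
    · exfalso
      rw [hc] at hc1
      rw [hb2] at hc2
      have e1 : cz i + 1 = z := hc1
      have e2 : (1 + 2 * (cz i + cz b2) : Z3) = z := hc2
      exact hne2 b2 hb2 (corner_mix i b2 (by rw [e1, ← e2]))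
    · exfalso
      rw [hc'] at hc2
      rw [hb1] at hc1
      have e1 : cz i + 1 = z := hc2
      have e2 : (1 + 2 * (cz i + cz b1) : Z3) = z := hc1
      exact hne1 b1 hb1 (corner_mix i b1 (by rw [e1, ← e2]))
    · rw [hb1] at hc1
      rw [hb2] at hc2
      have e1 : (1 + 2 * (cz i + cz b1) : Z3) = z := hc1
      have e2 : (1 + 2 * (cz i + cz b2) : Z3) = z := hc2
      exact Subtype.ext (by rw [hb1, hb2, corner_two i b1 b2 (by rw [e1, e2])])
  -- count
  have hTcard : T.card ≤ 2 ^ (n - 1) - 1 := by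
    by_cases h1 : n ≤ 1
    · have he : T = ∅ := by
        rw [hTdef]
        refine Finset.eq_empty_of_forall_notMem ?_
        intro w hw
        rw [Finset.mem_filter] at hw
        omega
      simp [he]
    · calc T.card ≤ (Fl (n - 2)).card := Finset.card_filter_le _ _
      _ = 2 ^ (n - 2 + 1) - 1 := card_Fl _
      _ = 2 ^ (n - 1) - 1 := by rw [(show n - 2 + 1 = n - 1 by omega)]
  have hAfin : (FcF n i z '' ↑T).Finite := (T.finite_toSet).image _
  calc S.ncard ≤ ((FcF n i z '' ↑T) ∪ Sp).ncard :=
        Set.ncard_le_ncard hsub (hAfin.union hSp.finite)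
    _ ≤ (FcF n i z '' ↑T).ncard + Sp.ncard := Set.ncard_union_le _ _
    _ ≤ (↑T : Set (List (Fin 2))).ncard + 1 := by
        gcongr
        · exact Set.ncard_image_le (T.finite_toSet)
        · exact ncard_le_one_of_subsingleton hSp
    _ ≤ (2 ^ (n - 1) - 1) + 1 := by
        rw [Set.ncard_coe_finset]
        omega
    _ ≤ 2 ^ (n - 1) := by
        have : 0 < 2 ^ (n - 1) := Nat.pow_pos (by omega)
        omega

lemma upcol_nil (n : ℕ) (a : Fin 3) : upcol n [] (Sum.inl a) = cz a + 1 := by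
  rw [upcol, if_pos rfl]

lemma interior_bound (n : ℕ) (hn : 1 ≤ n) (g : List (Fin 3))
    (hval : ∀ l, (Sum.inr g : (Fin 3) ⊕ (List (Fin 3))) = Sum.inr l → l.length < n) (z : Z3) :
    {u | (IterTri n).Adj ⟨Sum.inr g, hval⟩ u ∧
      ecolor n s(⟨Sum.inr g, hval⟩, u) = colZ z}.ncard ≤ 2 ^ (n - 1) := by
  set v : TrVert n := ⟨Sum.inr g, hval⟩ with hvdef
  set S : Set (TrVert n) := {u | (IterTri n).Adj v u ∧ ecolor n s(v, u) = colZ z} with hSdef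
  have hg : g.length < n := hval g rfl
  have hcol_of_mem : ∀ u ∈ S, ecol n v.val u.val = z := by
    intro u hu
    exact colZ_inj (by rw [← ecolor_mk]; exact hu.2)
  by_cases hdeep : g.length = n - 1
  · -- deepest vertices: only the three parent edges, pairwise distinct colors
    have hpar : ∀ u ∈ S, ∃ k, u.val = triBoundary g k := by
      intro u hu
      rcases ((adj_iff v u).mp hu.1).2 with ⟨f, k, hvf, huf⟩ | ⟨f, k, huf, hvf⟩ | ⟨a, b, hva, _⟩
      · have hfg : g = f := by
          have : Sum.inr g = Sum.inr f := hvf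
          injection this
        exact ⟨k, by rw [huf, hfg]⟩
      · exfalso
        have h1 : g.length < f.length := tb_len f k g hvf.symm
        have h2 : f.length < n := u.2 f huf
        omega
      · exact absurd (show Sum.inr g = Sum.inl a from hva) (by simp)
    have hsub : S.Subsingleton := by
      intro u1 hu1 u2 hu2
      obtain ⟨k1, hk1⟩ := hpar u1 hu1
      obtain ⟨k2, hk2⟩ := hpar u2 hu2
      have hc1 := hcol_of_mem u1 hu1
      have hc2 := hcol_of_mem u2 hu2
      rw [hk1] at hc1
      rw [hk2] at hc2
      rcases g with _ | ⟨a, t⟩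
      · have e1 : cz k1 + 1 = z := hc1
        have e2 : cz k2 + 1 = z := hc2
        have : k1 = k2 := czsucc_inj _ _ (e1.trans e2.symm)
        exact Subtype.ext (by rw [hk1, hk2, this])
      · have e1 : dsum (a :: t) + (if (a :: t).length = n - 1 then 2 * cz k1 else 0) = z := by
          rw [← ecol_face n (a :: t) k1 (triBoundary (a :: t) k1) rfl (by simp)]
          exact hc1
        have e2 : dsum (a :: t) + (if (a :: t).length = n - 1 then 2 * cz k2 else 0) = z := by
          rw [← ecol_face n (a :: t) k2 (triBoundary (a :: t) k2) rfl (by simp)]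
          exact hc2
        rw [if_pos hdeep] at e1 e2
        have : k1 = k2 := two_cz_inj _ _ (by linear_combination e1 - e2)
        exact Subtype.ext (by rw [hk1, hk2, this])
    exact le_trans (ncard_le_one_of_subsingleton hsub) Nat.one_le_two_pow
  · -- shallow interior vertices
    have hgn : g.length + 1 ≤ n - 1 := by omega
    set P : Set (TrVert n) := {u | u ∈ S ∧ ∃ k, u.val = triBoundary g k} with hPdef
    have hsub : S ⊆ (FiF n g z '' ↑(Fl (n - 2 - g.length))) ∪ P := by
      intro u hu
      have hz' := hcol_of_mem u hu
      rcases ((adj_iff v u).mp hu.1).2 with ⟨f, k, hvf, huf⟩ | ⟨f, k, huf, hvf⟩ | ⟨a, b, hva, _⟩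
      · have hfg : g = f := by
          have : Sum.inr g = Sum.inr f := hvf
          injection this
        exact Or.inr ⟨hu, k, by rw [huf, hfg]⟩
      · -- upward
        left
        have hvg : triBoundary f k = Sum.inr g := hvf.symm
        obtain ⟨j, w, hw⟩ := grow_surj_inr f k g hvg
        have hflen : f.length < n := u.2 f huf
        have hfw : f.length = g.length + 1 + w.length := by
          have hl := grow_len w (j :: g) 2
          rw [hw] at hl
          simpa using hl
        have hlen0 : g.length < f.length := tb_len f k g hvg
        have hfne : f ≠ [] := by
          intro h; rw [h] at hlen0; simp at hlen0
        have hmem : w ∈ Fl (n - 2 - g.length) := by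
          rw [mem_Fl]; omega
        have hk : k = posOf 2 w := by
          have hp := grow_pos' w (j :: g) 2
          rw [hw] at hp
          exact hp
        rw [huf] at hz'
        have h3 : dsum f + (if f.length = n - 1 then 2 * cz k else 0) = z := by
          rw [← ecol_face n f k (Sum.inr g) hvg hfne, ecol_symm n (Sum.inr f) (Sum.inr g)]
          exact hz'
        have hd : dsum f = cz j + dsum g + cz 2 - cz k := by
          have hgd := grow_dsum w (j :: g) 2
          rw [hw] at hgd
          simpa [dsum] using hgd
        have hj : j = toF (z - dsum g - 2 + cz (posOf 2 w) -
            (if g.length + 1 + w.length = n - 1 then 2 * cz (posOf 2 w) else 0)) := by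
          apply cz_inj
          rw [cz_toF]
          by_cases hdc : g.length + 1 + w.length = n - 1
          · rw [if_pos hdc]
            rw [if_pos (show f.length = n - 1 by omega), hd, hk, cz_two] at h3
            linear_combination h3
          · rw [if_neg hdc]
            rw [if_neg (show ¬ f.length = n - 1 by omega), hd, hk, cz_two, add_zero] at h3
            linear_combination h3
        refine ⟨w, hmem, ?_⟩
        apply Subtype.ext
        show (mkV n ((grow (_ :: g) 2 w).1)).val = u.val
        rw [← hj, (show (grow (j :: g) 2 w).1 = f by rw [hw]), mkV_val n f hflen, huf]
      · exact absurd (show Sum.inr g = Sum.inl a from hva) (by simp)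
    have hAcard : (FiF n g z '' ↑(Fl (n - 2 - g.length))).ncard ≤ 2 ^ (n - 1 - g.length) - 1 := by
      calc (FiF n g z '' ↑(Fl (n - 2 - g.length))).ncard
          ≤ (↑(Fl (n - 2 - g.length)) : Set (List (Fin 2))).ncard :=
            Set.ncard_image_le (Finset.finite_toSet _)
        _ = (Fl (n - 2 - g.length)).card := Set.ncard_coe_finset _
        _ = 2 ^ (n - 2 - g.length + 1) - 1 := card_Fl _
        _ = 2 ^ (n - 1 - g.length) - 1 := by
            rw [(show n - 2 - g.length + 1 = n - 1 - g.length by omega)]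
    have hAfin : (FiF n g z '' ↑(Fl (n - 2 - g.length))).Finite :=
      (Finset.finite_toSet _).image _
    rcases g with _ | ⟨a, t⟩
    · -- g = [] : the center; parent edges have pairwise distinct colors
      have hPsub : P.Subsingleton := by
        rintro u1 ⟨hu1, k1, hk1⟩ u2 ⟨hu2, k2, hk2⟩
        have hc1 := hcol_of_mem u1 hu1
        have hc2 := hcol_of_mem u2 hu2
        rw [hk1] at hc1
        rw [hk2] at hc2
        have e1 : cz k1 + 1 = z := hc1
        have e2 : cz k2 + 1 = z := hc2
        have : k1 = k2 := czsucc_inj _ _ (e1.trans e2.symm)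
        exact Subtype.ext (by rw [hk1, hk2, this])
      calc S.ncard ≤ _ := Set.ncard_le_ncard hsub (hAfin.union hPsub.finite)
        _ ≤ _ + _ := Set.ncard_union_le _ _
        _ ≤ (2 ^ (n - 1 - List.length []) - 1) + 1 := by
            gcongr
            exact ncard_le_one_of_subsingleton hPsub
        _ ≤ 2 ^ (n - 1) := by
            simp only [List.length_nil, Nat.sub_zero]
            have : 0 < 2 ^ (n - 1) := Nat.pow_pos (by omega)
            omega
    · -- g = a :: t : at most three parent edges
      set g' := a :: t with hg'
      have hPcard : P.ncard ≤ 3 := by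
        have hPsub2 : P ⊆ (fun k => mkB n g' hg k) '' Set.univ := by
          rintro u ⟨hu, k, hk⟩
          exact ⟨k, Set.mem_univ k, Subtype.ext (by rw [hk]; rfl)⟩
        calc P.ncard ≤ ((fun k => mkB n g' hg k) '' Set.univ).ncard :=
              Set.ncard_le_ncard hPsub2 (Set.finite_univ.image _)
          _ ≤ (Set.univ : Set (Fin 3)).ncard := Set.ncard_image_le Set.finite_univ
          _ = 3 := by rw [Set.ncard_univ]; simp
      have hPfin : P.Finite := Set.Finite.subset (Set.finite_univ.image
        (fun k => mkB n g' hg k)) (by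
          rintro u ⟨hu, k, hk⟩
          exact ⟨k, Set.mem_univ k, Subtype.ext (by rw [hk]; rfl)⟩)
      have harith : (2 ^ (n - 1 - g'.length) - 1) + 3 ≤ 2 ^ (n - 1) := by
        have hl1 : 1 ≤ g'.length := by rw [hg']; simp
        have hl2 : g'.length ≤ n - 2 := by omega
        have e1 : 2 ^ (n - 1 - g'.length) ≤ 2 ^ (n - 2) :=
          Nat.pow_le_pow_right (by omega) (by omega)
        have e2 : 2 ^ (n - 1) = 2 * 2 ^ (n - 2) := by
          rw [← pow_succ']
          congr 1
          omega
        have e3 : 2 ≤ 2 ^ (n - 2) := by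
          have h21 : 2 ^ 1 ≤ 2 ^ (n - 2) := Nat.pow_le_pow_right (by omega) (by omega)
          simpa using h21
        omega
      calc S.ncard ≤ _ := Set.ncard_le_ncard hsub (hAfin.union hPfin)
        _ ≤ _ + _ := Set.ncard_union_le _ _
        _ ≤ (2 ^ (n - 1 - g'.length) - 1) + 3 := by gcongr
        _ ≤ 2 ^ (n - 1) := harith

lemma improper (n : ℕ) (hn : 1 ≤ n) : IsKImproper (IterTri n) (ecolor n) (2 ^ (n - 1)) := by
  intro v q
  by_cases hq : ∃ z : Z3, colZ z = q
  · obtain ⟨z, rfl⟩ := hq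
    obtain ⟨vv, hval⟩ := v
    rcases vv with i | g
    · exact corner_bound n hn i hval z
    · exact interior_bound n hn g hval z
  · have hS : {u | (IterTri n).Adj v u ∧ ecolor n s(v, u) = q} = ∅ := by
      ext u
      simp only [Set.mem_setOf_eq, Set.mem_empty_iff_false, iff_false, not_and]
      intro hadj hcol
      exact hq ⟨ecol n v.val u.val, by rw [← ecolor_mk]; exact hcol⟩
    rw [hS]
    simp

-- ### degree of the center

def Fd (n : ℕ) : Fin 3 × List (Fin 2) → TrVert n := fun p =>
  mkV n ((grow [p.1] 2 p.2).1)

lemma deg_center (n : ℕ) (hn : 2 ≤ n) :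
    3 * 2 ^ (n - 1) - 2 ≤ ((IterTri n).neighborSet (centerV n (by omega))).ncard := by
  set c : TrVert n := centerV n (by omega) with hcdef
  set T := (Finset.univ : Finset (Fin 3)) ×ˢ Fl (n - 2) with hTdef
  have hlen : ∀ j : Fin 3, ∀ w : List (Fin 2), (j, w) ∈ T →
      (grow [j] 2 w).1.length < n := by
    intro j w hp
    rw [hTdef, Finset.mem_product] at hp
    have hw : w.length ≤ n - 2 := (mem_Fl _ _).mp hp.2
    rw [grow_len]
    simp only [List.length_singleton]
    omega
  have hsub : (Fd n '' ↑T) ∪ {cornerV n 0} ⊆ (IterTri n).neighborSet c := by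
    rintro u (⟨⟨j, w⟩, hp, rfl⟩ | hu)
    · have hp' := hlen j w hp
      refine (adj_iff c (Fd n (j, w))).mpr ⟨?_, Or.inr (Or.inl
        ⟨(grow [j] 2 w).1, (grow [j] 2 w).2, ?_, ?_⟩)⟩
      · apply ne_of_val_ne
        rw [hcdef]
        show Sum.inr [] ≠ (Fd n (j, w)).val
        rw [Fd, mkV_val n _ hp']
        intro h
        injection h with h'
        have := congrArg List.length h'
        rw [grow_len] at this
        simp only [List.length_nil, List.length_singleton] at this
        omega
      · rw [Fd, mkV_val n _ hp']
      · show c.val = _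
        rw [hcdef]
        exact (grow_tb w [j] 2 (Sum.inr []) (tb_cons_two j [])).symm
    · simp only [Set.mem_singleton_iff] at hu
      subst hu
      exact (adj_iff c (cornerV n 0)).mpr ⟨ne_of_val_ne (by simp [hcdef, centerV, cornerV]),
        Or.inl ⟨[], 0, rfl, rfl⟩⟩
  have hinj : Set.InjOn (Fd n) ↑T := by
    rintro ⟨j, w⟩ hp ⟨j', w'⟩ hp' he
    have h1 := hlen j w hp
    have h2 := hlen j' w' hp'
    have : (Sum.inr (grow [j] 2 w).1 : (Fin 3) ⊕ (List (Fin 3))) =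
        (Sum.inr (grow [j'] 2 w').1 : (Fin 3) ⊕ (List (Fin 3))) := by
      rw [← mkV_val n _ h1, ← mkV_val n _ h2]
      exact congrArg Subtype.val he
    injection this with h3
    obtain ⟨h4, h5⟩ := grow_inj w w' [j] [j'] 2 rfl h3
    injection h4 with h6
    rw [h5, h6]
  have hAfin : (Fd n '' ↑T).Finite := (T.finite_toSet).image _
  have hdisj : Disjoint (Fd n '' ↑T) ({cornerV n 0} : Set (TrVert n)) := by
    rw [Set.disjoint_singleton_right]
    rintro ⟨⟨j, w⟩, hp, he⟩
    have h1 := hlen j w hp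
    have : (Fd n (j, w)).val = (cornerV n 0).val := congrArg Subtype.val he
    rw [Fd, mkV_val n _ h1] at this
    exact absurd this (by simp [cornerV])
  have hcard : ((Fd n '' ↑T) ∪ {cornerV n 0}).ncard = 3 * (2 ^ (n - 1) - 1) + 1 := by
    rw [Set.ncard_union_eq hdisj hAfin (Set.finite_singleton _),
      Set.ncard_image_of_injOn hinj, Set.ncard_coe_finset, Set.ncard_singleton, hTdef,
      Finset.card_product, card_Fl]
    simp only [Finset.card_univ, Fintype.card_fin]
    rw [(show n - 2 + 1 = n - 1 by omega)]
  calc 3 * 2 ^ (n - 1) - 2 ≤ 3 * (2 ^ (n - 1) - 1) + 1 := by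
        have : 1 ≤ 2 ^ (n - 1) := Nat.one_le_two_pow
        omega
    _ = ((Fd n '' ↑T) ∪ {cornerV n 0}).ncard := hcard.symm
    _ ≤ ((IterTri n).neighborSet c).ncard :=
        Set.ncard_le_ncard hsub (Set.toFinite _)

lemma maxDeg_lb (n : ℕ) (hn : 1 ≤ n) : 3 * 2 ^ (n - 1) - 2 ≤ maxDeg (IterTri n) := by
  have hbdd : BddAbove {d : ℕ | ∃ v : TrVert n, ((IterTri n).neighborSet v).ncard = d} := by
    refine ⟨Nat.card (TrVert n), ?_⟩
    rintro d ⟨v, rfl⟩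
    rw [← Set.ncard_univ]
    exact Set.ncard_le_ncard (Set.subset_univ _) Set.finite_univ
  by_cases h2 : 2 ≤ n
  · calc 3 * 2 ^ (n - 1) - 2 ≤ ((IterTri n).neighborSet (centerV n (by omega))).ncard :=
        deg_center n h2
      _ ≤ maxDeg (IterTri n) := le_csSup hbdd ⟨_, rfl⟩
  · -- n = 1
    have hn1 : n = 1 := by omega
    subst hn1
    have hpos : 1 ≤ ((IterTri 1).neighborSet (centerV 1 (by omega))).ncard := by
      have hmem : cornerV 1 0 ∈ (IterTri 1).neighborSet (centerV 1 (by omega)) :=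
        (adj_iff _ _).mpr ⟨ne_of_val_ne (by simp [centerV, cornerV]),
          Or.inl ⟨[], 0, rfl, rfl⟩⟩
      have := Set.ncard_le_ncard (Set.singleton_subset_iff.mpr hmem) (Set.toFinite _)
      simpa using this
    calc 3 * 2 ^ (1 - 1) - 2 = 1 := by norm_num
      _ ≤ ((IterTri 1).neighborSet (centerV 1 (by omega))).ncard := hpos
      _ ≤ maxDeg (IterTri 1) := le_csSup hbdd ⟨_, rfl⟩


/-- For every `n ≥ 1`, `μ_int(Tr(n)) ≤ ⌈Δ(Tr(n))/3⌉`. -/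
theorem stmt5 (n : ℕ) (hn : 1 ≤ n) :
    impropriety (IterTri n) ≤ (maxDeg (IterTri n) + 2) / 3 := by
  have h1 : 2 ^ (n - 1) ∈ {k : ℕ | ∃ c : Sym2 (TrVert n) → ℤ,
      IsIntervalColoring (IterTri n) c ∧ IsKImproper (IterTri n) c k} :=
    ⟨ecolor n, interval n hn, improper n hn⟩
  have h2 : impropriety (IterTri n) ≤ 2 ^ (n - 1) := Nat.sInf_le h1
  have h3 := maxDeg_lb n hn
  have h4 : 2 ^ (n - 1) ≤ (maxDeg (IterTri n) + 2) / 3 := by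
    rw [Nat.le_div_iff_mul_le (by norm_num)]
    have : 1 ≤ 2 ^ (n - 1) := Nat.one_le_two_pow
    omega
  exact le_trans h2 h4
end

section
/- For every integer k ≥ 1, if H is the path P_k on k vertices, then μ_int(K_1 ⊙ H) ≤ 2, where K_1 ⊙ H is the graph obtained from H by adding a single new universal vertex adjacent to every vertex of H. -/
/-- The corona product `G ⊙ H`: take `G` and one copy of `H` for every vertex
of `G`, joining each vertex `v` of `G` to all vertices of its copy of `H`. -/
def corona {V W : Type*} (G : SimpleGraph V) (H : SimpleGraph W) :
    SimpleGraph (V ⊕ V × W) where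
  Adj x y :=
    match x, y with
    | Sum.inl u, Sum.inl v => G.Adj u v
    | Sum.inl u, Sum.inr p => u = p.1
    | Sum.inr p, Sum.inl u => u = p.1
    | Sum.inr p, Sum.inr q => p.1 = q.1 ∧ H.Adj p.2 q.2
  symm := by
    constructor
    rintro (u | p) (v | q) h
    · exact h.symm
    · exact h
    · exact h
    · exact ⟨h.1.symm, h.2.symm⟩
  loopless := by
    constructor
    rintro (u | p) h
    · exact G.irrefl h
    · exact H.irrefl h.2


open Sum in
/-- The coloring function on ordered pairs of vertices. -/
def colFun (k : ℕ) : (Fin 1 ⊕ Fin 1 × Fin k) → (Fin 1 ⊕ Fin 1 × Fin k) → ℤ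
  | inl _, inl _ => 0
  | inl _, inr p => (p.2.val / 2 : ℕ)
  | inr p, inl _ => (p.2.val / 2 : ℕ)
  | inr p, inr q => (min p.2.val q.2.val / 2 : ℕ) + 1

lemma colFun_symm (k : ℕ) (x y : Fin 1 ⊕ Fin 1 × Fin k) : colFun k x y = colFun k y x := by
  cases x <;> cases y <;> simp [colFun, Nat.min_comm]

/-- The coloring on unordered pairs. -/
def col (k : ℕ) : Sym2 (Fin 1 ⊕ Fin 1 × Fin k) → ℤ :=
  Sym2.lift ⟨colFun k, colFun_symm k⟩

@[simp] lemma col_mk (k : ℕ) (x y : Fin 1 ⊕ Fin 1 × Fin k) :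
    col k s(x, y) = colFun k x y := Sym2.lift_mk _ _ _

/-- For every `k ≥ 1`, the corona product `K_1 ⊙ P_k` (a universal vertex added
to the path on `k` vertices) satisfies `μ_int(K_1 ⊙ P_k) ≤ 2`. -/
theorem stmt8 (k : ℕ) (hk : 1 ≤ k) :
    impropriety (corona (⊥ : SimpleGraph (Fin 1)) (SimpleGraph.pathGraph k)) ≤ 2 := by
  have hint : IsIntervalColoring
      (corona (⊥ : SimpleGraph (Fin 1)) (SimpleGraph.pathGraph k)) (col k) := by
    rintro (u | p) a b x ha hb hax hxb
    · -- center vertex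
      obtain ⟨w, hw, hwc⟩ := ha
      obtain ⟨w', hw', hwc'⟩ := hb
      cases w with
      | inl u' => exact absurd hw (by simp [corona])
      | inr p =>
      cases w' with
      | inl u' => exact absurd hw' (by simp [corona])
      | inr p' =>
        simp only [col_mk, colFun] at hwc hwc'
        have hp' : p'.2.val < k := p'.2.isLt
        have hxk : 2 * x.toNat < k := by omega
        refine ⟨Sum.inr (u, ⟨2 * x.toNat, hxk⟩), ?_, ?_⟩
        · show u = u
          rfl
        · simp only [col_mk, colFun]
          omega
    · -- path vertex
      have key : ∀ y : Fin 1 ⊕ Fin 1 × Fin k, ∀ c' : ℤ,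
          (corona (⊥ : SimpleGraph (Fin 1)) (SimpleGraph.pathGraph k)).Adj (Sum.inr p) y →
          col k s(Sum.inr p, y) = c' →
          c' = (p.2.val / 2 : ℕ) ∨ c' = (p.2.val / 2 : ℕ) + 1 := by
        rintro (u' | q) c' hadj hc
        · simp only [col_mk, colFun] at hc
          omega
        · obtain ⟨-, hadj2⟩ := hadj
          rw [SimpleGraph.pathGraph_adj] at hadj2
          simp only [col_mk, colFun] at hc
          omega
      obtain ⟨w, hw, hwc⟩ := ha
      obtain ⟨w', hw', hwc'⟩ := hb
      have h1 := key w a hw hwc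
      have h2 := key w' b hw' hwc'
      have : x = a ∨ x = b := by omega
      rcases this with h | h
      · exact ⟨w, hw, by rw [hwc, h]⟩
      · exact ⟨w', hw', by rw [hwc', h]⟩
  have himp : IsKImproper
      (corona (⊥ : SimpleGraph (Fin 1)) (SimpleGraph.pathGraph k)) (col k) 2 := by
    rintro (u | p) q
    · -- center vertex
      set S := {u_ : Fin 1 ⊕ Fin 1 × Fin k |
        (corona (⊥ : SimpleGraph (Fin 1)) (SimpleGraph.pathGraph k)).Adj (Sum.inl u) u_ ∧
        col k s(Sum.inl u, u_) = q} with hS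
      set f : (Fin 1 ⊕ Fin 1 × Fin k) → ℕ := fun x =>
        match x with
        | Sum.inl _ => 0
        | Sum.inr r => r.2.val % 2 with hf
      have hinj : Set.InjOn f S := by
        rintro (u1 | r1) h1 (u2 | r2) h2 hfe
        · exact absurd h1.1 (by simp [corona])
        · exact absurd h1.1 (by simp [corona])
        · exact absurd h2.1 (by simp [corona])
        · obtain ⟨-, hc1⟩ := h1
          obtain ⟨-, hc2⟩ := h2
          simp only [col_mk, colFun] at hc1 hc2
          simp only [hf] at hfe
          have : r1.2 = r2.2 := by
            apply Fin.ext
            omega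
          have h1' : r1.1 = r2.1 := Subsingleton.elim _ _
          rw [Prod.ext h1' this]
      have hsub : f '' S ⊆ {0, 1} := by
        rintro n ⟨x, -, rfl⟩
        rcases x with u' | r <;> simp [hf] <;> omega
      calc S.ncard = (f '' S).ncard := (Set.ncard_image_of_injOn hinj).symm
        _ ≤ ({0, 1} : Set ℕ).ncard := Set.ncard_le_ncard hsub (Set.toFinite _)
        _ = 2 := Set.ncard_pair (by norm_num)
    · -- path vertex
      set S := {u_ : Fin 1 ⊕ Fin 1 × Fin k |
        (corona (⊥ : SimpleGraph (Fin 1)) (SimpleGraph.pathGraph k)).Adj (Sum.inr p) u_ ∧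
        col k s(Sum.inr p, u_) = q} with hS
      set f : (Fin 1 ⊕ Fin 1 × Fin k) → ℕ := fun x =>
        match x with
        | Sum.inl _ => 0
        | Sum.inr r => if r.2.val ≤ p.2.val then 1 else 0 with hf
      have hinj : Set.InjOn f S := by
        rintro (u1 | r1) h1 (u2 | r2) h2 hfe
        · exact congrArg Sum.inl (Subsingleton.elim _ _)
        · -- inl vs inr
          obtain ⟨-, hc1⟩ := h1
          obtain ⟨hadj2, hc2⟩ := h2
          obtain ⟨-, hpa⟩ := hadj2
          rw [SimpleGraph.pathGraph_adj] at hpa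
          simp only [col_mk, colFun] at hc1 hc2
          simp only [hf] at hfe
          exfalso
          by_cases hle : r2.2.val ≤ p.2.val <;> simp [hle] at hfe <;> omega
        · -- inr vs inl
          obtain ⟨hadj1, hc1⟩ := h1
          obtain ⟨-, hc2⟩ := h2
          obtain ⟨-, hpa⟩ := hadj1
          rw [SimpleGraph.pathGraph_adj] at hpa
          simp only [col_mk, colFun] at hc1 hc2
          simp only [hf] at hfe
          exfalso
          by_cases hle : r1.2.val ≤ p.2.val <;> simp [hle] at hfe <;> omega
        · -- inr vs inr
          obtain ⟨hadj1, -⟩ := h1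
          obtain ⟨hadj2, -⟩ := h2
          obtain ⟨-, hpa1⟩ := hadj1
          obtain ⟨-, hpa2⟩ := hadj2
          rw [SimpleGraph.pathGraph_adj] at hpa1 hpa2
          simp only [hf] at hfe
          have : r1.2 = r2.2 := by
            apply Fin.ext
            by_cases hle1 : r1.2.val ≤ p.2.val <;> by_cases hle2 : r2.2.val ≤ p.2.val <;>
              simp [hle1, hle2] at hfe <;> omega
          have h1' : r1.1 = r2.1 := Subsingleton.elim _ _
          rw [Prod.ext h1' this]
      have hsub : f '' S ⊆ {0, 1} := by
        rintro n ⟨x, -, rfl⟩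
        rcases x with u' | r <;> simp [hf]
        exact (le_or_gt r.2 p.2).symm
      calc S.ncard = (f '' S).ncard := (Set.ncard_image_of_injOn hinj).symm
        _ ≤ ({0, 1} : Set ℕ).ncard := Set.ncard_le_ncard hsub (Set.toFinite _)
        _ = 2 := Set.ncard_pair (by norm_num)
  exact Nat.sInf_le ⟨col k, hint, himp⟩
end

section
/- For every integer k ≥ 1, if H is the star S_k = K_{1,k} consisting of a center vertex adjacent to k leaves, then μ_int(K_1 ⊙ H) ≤ 2, where K_1 ⊙ H is the graph obtained from H by adding a single new universal vertex adjacent to every vertex of H. -/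
private def colV {k : ℕ} : (Fin 1 ⊕ Fin 1 × (Fin 1 ⊕ Fin k)) → ℤ
  | Sum.inl _ => 0
  | Sum.inr (_, Sum.inl _) => 0
  | Sum.inr (_, Sum.inr i) => ((i.val / 2 : ℕ) : ℤ) + 1

/-- For every `k ≥ 1`, the corona product `K_1 ⊙ S_k`, where `S_k = K_{1,k}` is
the star with `k` leaves, satisfies `μ_int(K_1 ⊙ S_k) ≤ 2`. -/
theorem stmt10 (k : ℕ) (hk : 1 ≤ k) :
    impropriety (corona (⊥ : SimpleGraph (Fin 1))
      (completeBipartiteGraph (Fin 1) (Fin k))) ≤ 2 := by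
  set G := corona (⊥ : SimpleGraph (Fin 1)) (completeBipartiteGraph (Fin 1) (Fin k)) with hGdef
  set c : Sym2 (Fin 1 ⊕ Fin 1 × (Fin 1 ⊕ Fin k)) → ℤ :=
    Sym2.lift ⟨fun x y => colV x + colV y, fun _ _ => add_comm _ _⟩ with hcdef
  have hc : ∀ x y, c s(x, y) = colV x + colV y := fun x y => rfl
  -- classify neighbors
  have hAdjL : ∀ (u0 : Fin 1) (u), G.Adj (Sum.inl u0) u →
      (∃ s0, u = Sum.inr (u0, Sum.inl s0)) ∨ (∃ i : Fin k, u = Sum.inr (u0, Sum.inr i)) := by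
    rintro u0 (v | ⟨v1, (v2 | j)⟩) h
    · simp [hGdef, corona] at h
    · exact Or.inl ⟨v2, by simp [Subsingleton.elim u0 v1]⟩
    · exact Or.inr ⟨j, by simp [Subsingleton.elim u0 v1]⟩
  have hAdjC : ∀ (u0 s0 : Fin 1) (u), G.Adj (Sum.inr (u0, Sum.inl s0)) u →
      (∃ w : Fin 1, u = Sum.inl w) ∨ (∃ i : Fin k, u = Sum.inr (u0, Sum.inr i)) := by
    rintro u0 s0 (v | ⟨v1, (v2 | j)⟩) h
    · exact Or.inl ⟨v, rfl⟩
    · exfalso; simp [hGdef, corona, completeBipartiteGraph] at h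
    · exact Or.inr ⟨j, by simp [Subsingleton.elim u0 v1]⟩
  have hAdjLf : ∀ (u0 : Fin 1) (i : Fin k) (u), G.Adj (Sum.inr (u0, Sum.inr i)) u →
      (∃ w : Fin 1, u = Sum.inl w) ∨ (∃ s0 : Fin 1, u = Sum.inr (u0, Sum.inl s0)) := by
    rintro u0 i (v | ⟨v1, (v2 | j)⟩) h
    · exact Or.inl ⟨v, rfl⟩
    · exact Or.inr ⟨v2, by simp [Subsingleton.elim u0 v1]⟩
    · exfalso; simp [hGdef, corona, completeBipartiteGraph] at h
  -- adjacency facts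
  have hadj1 : ∀ (u0 s0 : Fin 1), G.Adj (Sum.inl u0) (Sum.inr (u0, Sum.inl s0)) := by
    intro u0 s0; show u0 = u0; rfl
  have hadj2 : ∀ (u0 : Fin 1) (i : Fin k), G.Adj (Sum.inl u0) (Sum.inr (u0, Sum.inr i)) := by
    intro u0 i; show u0 = u0; rfl
  have hadj3 : ∀ (u0 s0 : Fin 1), G.Adj (Sum.inr (u0, Sum.inl s0)) (Sum.inl u0) := by
    intro u0 s0; show u0 = u0; rfl
  have hadj4 : ∀ (u0 s0 : Fin 1) (i : Fin k),
      G.Adj (Sum.inr (u0, Sum.inl s0)) (Sum.inr (u0, Sum.inr i)) := by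
    intro u0 s0 i
    exact ⟨rfl, Or.inl ⟨rfl, rfl⟩⟩
  apply Nat.sInf_le
  refine ⟨c, ?_, ?_⟩
  · -- interval coloring
    rintro v a b x ⟨ua, hua, hca⟩ ⟨ub, hub, hcb⟩ hax hxb
    match v with
    | Sum.inl u0 =>
      -- a ≥ 0
      have ha0 : 0 ≤ a := by
        rcases hAdjL u0 ua hua with ⟨s0, rfl⟩ | ⟨j, rfl⟩ <;>
          simp [hc, colV] at hca <;> omega
      by_cases hx0 : x = 0
      · exact ⟨Sum.inr (u0, Sum.inl 0), hadj1 u0 0, by simp [hc, colV, hx0]⟩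
      · have hx1 : 1 ≤ x := by omega
        rcases hAdjL u0 ub hub with ⟨s0, rfl⟩ | ⟨j, rfl⟩
        · simp [hc, colV] at hcb; omega
        · have hb : b = ((j.val / 2 : ℕ) : ℤ) + 1 := by simp [hc, colV] at hcb; omega
          set m : ℕ := (x - 1).toNat with hm
          have hmx : (m : ℤ) = x - 1 := Int.toNat_of_nonneg (by omega)
          have hmj : m ≤ j.val / 2 := by
            have : (m : ℤ) ≤ ((j.val / 2 : ℕ) : ℤ) := by omega
            exact_mod_cast this
          have h2m : 2 * m < k := by have := j.isLt; omega
          refine ⟨Sum.inr (u0, Sum.inr ⟨2 * m, h2m⟩), hadj2 u0 _, ?_⟩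
          simp [hc, colV]
          omega
    | Sum.inr (u0, Sum.inl s0) =>
      have ha0 : 0 ≤ a := by
        rcases hAdjC u0 s0 ua hua with ⟨w, rfl⟩ | ⟨j, rfl⟩ <;>
          simp [hc, colV] at hca <;> omega
      by_cases hx0 : x = 0
      · exact ⟨Sum.inl u0, hadj3 u0 s0, by simp [hc, colV, hx0]⟩
      · have hx1 : 1 ≤ x := by omega
        rcases hAdjC u0 s0 ub hub with ⟨w, rfl⟩ | ⟨j, rfl⟩
        · simp [hc, colV] at hcb; omega
        · have hb : b = ((j.val / 2 : ℕ) : ℤ) + 1 := by simp [hc, colV] at hcb; omega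
          set m : ℕ := (x - 1).toNat with hm
          have hmx : (m : ℤ) = x - 1 := Int.toNat_of_nonneg (by omega)
          have hmj : m ≤ j.val / 2 := by
            have : (m : ℤ) ≤ ((j.val / 2 : ℕ) : ℤ) := by omega
            exact_mod_cast this
          have h2m : 2 * m < k := by have := j.isLt; omega
          refine ⟨Sum.inr (u0, Sum.inr ⟨2 * m, h2m⟩), hadj4 u0 s0 _, ?_⟩
          simp [hc, colV]
          omega
    | Sum.inr (u0, Sum.inr i) =>
      have ha : a = ((i.val / 2 : ℕ) : ℤ) + 1 := by
        rcases hAdjLf u0 i ua hua with ⟨w, rfl⟩ | ⟨s0, rfl⟩ <;>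
          simp [hc, colV] at hca <;> omega
      have hb : b = ((i.val / 2 : ℕ) : ℤ) + 1 := by
        rcases hAdjLf u0 i ub hub with ⟨w, rfl⟩ | ⟨s0, rfl⟩ <;>
          simp [hc, colV] at hcb <;> omega
      have hx : x = ((i.val / 2 : ℕ) : ℤ) + 1 := by omega
      exact ⟨Sum.inl u0, (hadj2 u0 i).symm, by simp [hc, colV, hx]⟩
  · -- 2-improper
    intro v q
    by_contra hcon
    push_neg at hcon
    rw [Set.two_lt_ncard_iff (Set.toFinite _)] at hcon
    obtain ⟨p1, p2, p3, hp1, hp2, hp3, h12, h13, h23⟩ := hcon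
    match v with
    | Sum.inl u0 =>
      -- each element is either the star center (color 0) or a leaf with i/2+1 = q
      have key : ∀ p, p ∈ {u | G.Adj (Sum.inl u0) u ∧ c s(Sum.inl u0, u) = q} →
          (q = 0 ∧ p = Sum.inr (u0, Sum.inl 0)) ∨
          (∃ i : Fin k, p = Sum.inr (u0, Sum.inr i) ∧ ((i.val / 2 : ℕ) : ℤ) + 1 = q) := by
        rintro p ⟨hadj, hcol⟩
        rcases hAdjL u0 p hadj with ⟨s0, rfl⟩ | ⟨j, rfl⟩
        · left
          constructor
          · simp [hc, colV] at hcol; omega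
          · simp [Subsingleton.elim s0 0]
        · right; exact ⟨j, rfl, by simp [hc, colV] at hcol; omega⟩
      have hne : ∀ {i j : Fin k}, (Sum.inr (u0, Sum.inr i) : Fin 1 ⊕ Fin 1 × (Fin 1 ⊕ Fin k)) ≠
          Sum.inr (u0, Sum.inr j) → i.val ≠ j.val := by
        intro i j h hv
        exact h (by rw [Fin.val_injective hv])
      rcases key p1 hp1 with ⟨hq1, rfl⟩ | ⟨i1, rfl, hi1⟩ <;>
        rcases key p2 hp2 with ⟨hq2, rfl⟩ | ⟨i2, rfl, hi2⟩ <;>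
        rcases key p3 hp3 with ⟨hq3, rfl⟩ | ⟨i3, rfl, hi3⟩
      all_goals try (first | exact h12 rfl | exact h13 rfl | exact h23 rfl | omega)
      have n12 := hne h12
      have n13 := hne h13
      have n23 := hne h23
      omega
    | Sum.inr (u0, Sum.inl s0) =>
      have key : ∀ p, p ∈ {u | G.Adj (Sum.inr (u0, Sum.inl s0)) u ∧
          c s(Sum.inr (u0, Sum.inl s0), u) = q} →
          (q = 0 ∧ p = Sum.inl 0) ∨
          (∃ i : Fin k, p = Sum.inr (u0, Sum.inr i) ∧ ((i.val / 2 : ℕ) : ℤ) + 1 = q) := by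
        rintro p ⟨hadj, hcol⟩
        rcases hAdjC u0 s0 p hadj with ⟨w, rfl⟩ | ⟨j, rfl⟩
        · left
          constructor
          · simp [hc, colV] at hcol; omega
          · simp [Subsingleton.elim w 0]
        · right; exact ⟨j, rfl, by simp [hc, colV] at hcol; omega⟩
      have hne : ∀ {i j : Fin k}, (Sum.inr (u0, Sum.inr i) : Fin 1 ⊕ Fin 1 × (Fin 1 ⊕ Fin k)) ≠
          Sum.inr (u0, Sum.inr j) → i.val ≠ j.val := by
        intro i j h hv
        exact h (by rw [Fin.val_injective hv])
      rcases key p1 hp1 with ⟨hq1, rfl⟩ | ⟨i1, rfl, hi1⟩ <;>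
        rcases key p2 hp2 with ⟨hq2, rfl⟩ | ⟨i2, rfl, hi2⟩ <;>
        rcases key p3 hp3 with ⟨hq3, rfl⟩ | ⟨i3, rfl, hi3⟩
      all_goals try (first | exact h12 rfl | exact h13 rfl | exact h23 rfl | omega)
      have n12 := hne h12
      have n13 := hne h13
      have n23 := hne h23
      omega
    | Sum.inr (u0, Sum.inr i) =>
      have key : ∀ p, p ∈ {u | G.Adj (Sum.inr (u0, Sum.inr i)) u ∧
          c s(Sum.inr (u0, Sum.inr i), u) = q} →
          p = Sum.inl 0 ∨ p = Sum.inr (u0, Sum.inl 0) := by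
        rintro p ⟨hadj, _⟩
        rcases hAdjLf u0 i p hadj with ⟨w, rfl⟩ | ⟨s0, rfl⟩
        · left; rw [Subsingleton.elim w 0]
        · right; rw [Subsingleton.elim s0 0]
      rcases key p1 hp1 with rfl | rfl <;>
        rcases key p2 hp2 with rfl | rfl <;>
        rcases key p3 hp3 with rfl | rfl
      all_goals first | exact h12 rfl | exact h13 rfl | exact h23 rfl
end

section
/- For any graph G and any integer k ≥ 1, if H is the path P_k on k vertices, then μ_int(G ⊙ H) ≤ max{2, μ_int(G)}. -/
section coronaAux
open Sum Classical
noncomputable section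

private def pairColor {V : Type*} (cG : Sym2 V → ℤ) (a : V → ℤ) (k : ℕ) :
    (V ⊕ V × Fin k) → (V ⊕ V × Fin k) → ℤ
  | inl u, inl v => cG s(u, v)
  | inl _, inr p => a p.1 - 1 - (p.2.val / 2 : ℕ)
  | inr p, inl _ => a p.1 - 1 - (p.2.val / 2 : ℕ)
  | inr p, inr q => if _ : p.1 = q.1 then a p.1 - 2 - ((min p.2.val q.2.val) / 2 : ℕ) else 0

private def cColor {V : Type*} (cG : Sym2 V → ℤ) (a : V → ℤ) (k : ℕ) :
    Sym2 (V ⊕ V × Fin k) → ℤ :=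
  Sym2.lift ⟨fun x y => pairColor cG a k x y, by
    rintro (u | ⟨v, i⟩) (u' | ⟨w, j⟩)
    · simp only [pairColor]; rw [Sym2.eq_swap]
    · rfl
    · rfl
    · simp only [pairColor]
      rcases eq_or_ne v w with h | h
      · subst h; simp [min_comm]
      · rw [dif_neg h, dif_neg (Ne.symm h)]⟩

private lemma cColor_GG {V : Type*} (cG : Sym2 V → ℤ) (a : V → ℤ) (k : ℕ) (u v : V) :
    cColor cG a k s(inl u, inl v) = cG s(u, v) := rfl

private lemma cColor_star {V : Type*} (cG : Sym2 V → ℤ) (a : V → ℤ) (k : ℕ) (u v : V) (i : Fin k) :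
    cColor cG a k s(inl u, inr (v, i)) = a v - 1 - (i.val / 2 : ℕ) := rfl

private lemma cColor_star' {V : Type*} (cG : Sym2 V → ℤ) (a : V → ℤ) (k : ℕ) (u v : V) (i : Fin k) :
    cColor cG a k s(inr (v, i), inl u) = a v - 1 - (i.val / 2 : ℕ) := rfl

private lemma cColor_path {V : Type*} (cG : Sym2 V → ℤ) (a : V → ℤ) (k : ℕ) (v : V) (i j : Fin k) :
    cColor cG a k s(inr (v, i), inr (v, j)) = a v - 2 - ((min i.val j.val) / 2 : ℕ) := by
  show pairColor cG a k (inr (v,i)) (inr (v,j)) = _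
  simp [pairColor]

-- adjacency rewriting lemmas
private lemma corona_adj_ll {V W : Type*} {G : SimpleGraph V} {H : SimpleGraph W} {u v : V} :
    (corona G H).Adj (inl u) (inl v) ↔ G.Adj u v := Iff.rfl
private lemma corona_adj_lr {V W : Type*} {G : SimpleGraph V} {H : SimpleGraph W} {u : V}
    {p : V × W} : (corona G H).Adj (inl u) (inr p) ↔ u = p.1 := Iff.rfl
private lemma corona_adj_rl {V W : Type*} {G : SimpleGraph V} {H : SimpleGraph W} {u : V}
    {p : V × W} : (corona G H).Adj (inr p) (inl u) ↔ u = p.1 := Iff.rfl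
private lemma corona_adj_rr {V W : Type*} {G : SimpleGraph V} {H : SimpleGraph W}
    {p q : V × W} : (corona G H).Adj (inr p) (inr q) ↔ p.1 = q.1 ∧ H.Adj p.2 q.2 := Iff.rfl

-- the "minimum color at v" function
private def minC {V : Type*} (G : SimpleGraph V) (cG : Sym2 V → ℤ) : V → ℤ := fun v =>
  if h : ((fun u => cG s(v, u)) '' {u | G.Adj v u}).Nonempty then sInf ((fun u => cG s(v, u)) '' {u | G.Adj v u}) else 0

private lemma minC_le {V : Type*} [Fintype V] (G : SimpleGraph V) (cG : Sym2 V → ℤ) {v u : V}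
    (h : G.Adj v u) : minC G cG v ≤ cG s(v, u) := by
  have hm : cG s(v, u) ∈ (fun u => cG s(v, u)) '' {u | G.Adj v u} := ⟨u, h, rfl⟩
  rw [minC, dif_pos ⟨_, hm⟩]
  exact csInf_le (Set.Finite.bddBelow (Set.toFinite _)) hm

private lemma minC_mem {V : Type*} [Fintype V] (G : SimpleGraph V) (cG : Sym2 V → ℤ) {v u : V}
    (h : G.Adj v u) : ∃ w, G.Adj v w ∧ cG s(v, w) = minC G cG v := by
  have hm : cG s(v, u) ∈ (fun u => cG s(v, u)) '' {u | G.Adj v u} := ⟨u, h, rfl⟩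
  have hne : ((fun u => cG s(v, u)) '' {u | G.Adj v u}).Nonempty := ⟨_, hm⟩
  have := hne.csInf_mem (Set.toFinite _)
  obtain ⟨w, hw, hcw⟩ := this
  exact ⟨w, hw, by rw [minC, dif_pos hne]; exact hcw⟩

section main
variable {V : Type*} [Fintype V] (G : SimpleGraph V) (cG : Sym2 V → ℤ) (k : ℕ)

-- realization characterization at a G-vertex
private lemma real_inl (hk : 1 ≤ k) (v : V) (t : ℤ) :
    (∃ u, (corona G (SimpleGraph.pathGraph k)).Adj (inl v) u ∧
      cColor cG (minC G cG) k s(inl v, u) = t) ↔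
    (∃ u, G.Adj v u ∧ cG s(v, u) = t) ∨
      (∃ j : ℕ, j ≤ (k - 1) / 2 ∧ t = minC G cG v - 1 - j) := by
  constructor
  · rintro ⟨(u | ⟨w, i⟩), hadj, hc⟩
    · exact Or.inl ⟨u, hadj, by rwa [cColor_GG] at hc⟩
    · rw [corona_adj_lr] at hadj
      subst hadj
      rw [cColor_star] at hc
      refine Or.inr ⟨i.val / 2, ?_, hc.symm⟩
      have := i.isLt
      omega
  · rintro (⟨u, hadj, hc⟩ | ⟨j, hj, rfl⟩)
    · exact ⟨inl u, hadj, by rwa [cColor_GG]⟩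
    · refine ⟨inr (v, ⟨2 * j, by omega⟩), rfl, ?_⟩
      rw [cColor_star]
      congr 1
      simp only [Nat.cast_inj]
      omega

-- all colors at a path vertex are f or f - 1
private lemma colors_inr (v : V) (i : Fin k) (u : V ⊕ V × Fin k)
    (hadj : (corona G (SimpleGraph.pathGraph k)).Adj (inr (v, i)) u) :
    cColor cG (minC G cG) k s(inr (v, i), u) = minC G cG v - 1 - (i.val / 2 : ℕ) ∨
    cColor cG (minC G cG) k s(inr (v, i), u) = minC G cG v - 1 - (i.val / 2 : ℕ) - 1 := by
  obtain (w | ⟨w, j⟩) := u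
  · rw [corona_adj_rl] at hadj
    rw [cColor_star']
    exact Or.inl rfl
  · rw [corona_adj_rr] at hadj
    obtain ⟨h1, h2⟩ := hadj
    cases h1
    rw [cColor_path]
    rw [SimpleGraph.pathGraph_adj] at h2
    dsimp only at h2
    rcases h2 with h2 | h2 <;> [right; skip]
    · have : min i.val j.val = i.val := by omega
      rw [this]; push_cast; omega
    · have : min i.val j.val = j.val := by omega
      have hj : j.val / 2 + 1 = i.val / 2 ∨ j.val / 2 = i.val / 2 := by omega
      rcases hj with hj | hj
      · left; rw [this]; rw [show (i.val/2 : ℕ) = (j.val/2 + 1 : ℕ) from hj.symm]; push_cast; ring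
      · right; rw [this, hj]; push_cast; ring

end main

section main2
variable {V : Type*} [Fintype V] (G : SimpleGraph V) (cG : Sym2 V → ℤ) (k : ℕ)

private lemma interval_corona (hk : 1 ≤ k) (hG : IsIntervalColoring G cG) :
    IsIntervalColoring (corona G (SimpleGraph.pathGraph k)) (cColor cG (minC G cG) k) := by
  intro x a b q hA hB haq hqb
  cases x with
  | inl v =>
    rw [real_inl G cG k hk] at hA hB ⊢
    rcases hB with ⟨u, hu, hcu⟩ | ⟨jb, hjb, rfl⟩
    · by_cases hq : minC G cG v ≤ q
      · left
        obtain ⟨w, hw, hcw⟩ := minC_mem G cG hu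
        exact hG v (minC G cG v) b q ⟨w, hw, hcw⟩ ⟨u, hu, hcu⟩ hq hqb
      · push_neg at hq
        rcases hA with ⟨u', hu', hcu'⟩ | ⟨ja, hja, rfl⟩
        · have := minC_le G cG hu'
          rw [hcu'] at this
          omega
        · exact Or.inr ⟨(minC G cG v - 1 - q).toNat, by omega, by omega⟩
    · rcases hA with ⟨u', hu', hcu'⟩ | ⟨ja, hja, rfl⟩
      · have := minC_le G cG hu'
        rw [hcu'] at this
        omega
      · exact Or.inr ⟨(minC G cG v - 1 - q).toNat, by omega, by omega⟩
  | inr p =>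
    obtain ⟨v, i⟩ := p
    obtain ⟨ua, hua, hca⟩ := hA
    obtain ⟨ub, hub, hcb⟩ := hB
    have ha2 := colors_inr G cG k v i ua hua
    have hb2 := colors_inr G cG k v i ub hub
    rw [hca] at ha2
    rw [hcb] at hb2
    have hqab : q = a ∨ q = b := by omega
    rcases hqab with rfl | rfl
    exacts [⟨ua, hua, hca⟩, ⟨ub, hub, hcb⟩]

private lemma improper_inl {μ : ℕ} (hGimp : IsKImproper G cG μ) (v : V) (q : ℤ) :
    ({u : V ⊕ V × Fin k | (corona G (SimpleGraph.pathGraph k)).Adj (inl v) u ∧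
      cColor cG (minC G cG) k s(inl v, u) = q}).ncard ≤ max 2 μ := by
  set S := {u : V ⊕ V × Fin k | (corona G (SimpleGraph.pathGraph k)).Adj (inl v) u ∧
      cColor cG (minC G cG) k s(inl v, u) = q} with hS
  by_cases hq : minC G cG v ≤ q
  · have hsub : S ⊆ inl '' {u : V | G.Adj v u ∧ cG s(v, u) = q} := by
      rintro (u | ⟨w, i⟩) ⟨hadj, hc⟩
      · exact ⟨u, ⟨hadj, by rwa [cColor_GG] at hc⟩, rfl⟩
      · have hw : v = w := hadj
        cases hw
        rw [cColor_star] at hc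
        omega
    calc S.ncard ≤ (inl '' {u : V | G.Adj v u ∧ cG s(v, u) = q}).ncard :=
          Set.ncard_le_ncard hsub (Set.toFinite _)
      _ = ({u : V | G.Adj v u ∧ cG s(v, u) = q}).ncard :=
          Set.ncard_image_of_injective _ inl_injective
      _ ≤ μ := hGimp v q
      _ ≤ max 2 μ := le_max_right _ _
  · push_neg at hq
    have hmem : ∀ u ∈ S, ∃ i : Fin k, u = inr (v, i) ∧ (i.val / 2 : ℤ) = minC G cG v - 1 - q := by
      rintro (u | ⟨w, i⟩) ⟨hadj, hc⟩
      · rw [cColor_GG] at hc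
        have := minC_le G cG hadj
        omega
      · have hw : v = w := hadj
        cases hw
        rw [cColor_star] at hc
        exact ⟨i, rfl, by omega⟩
    have hinj : Set.InjOn (fun u : V ⊕ V × Fin k =>
        match u with
        | inl _ => true
        | inr p => decide (p.2.val % 2 = 0)) S := by
      intro x hx y hy hxy
      obtain ⟨i, rfl, hi⟩ := hmem x hx
      obtain ⟨j, rfl, hj⟩ := hmem y hy
      simp only [decide_eq_decide] at hxy
      have h1 : i.val / 2 = j.val / 2 := by omega
      have h2 : i.val = j.val := by omega
      exact congrArg (fun n => inr (v, n)) (Fin.ext h2)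
    calc S.ncard ≤ (Set.univ : Set Bool).ncard :=
          Set.ncard_le_ncard_of_injOn _ (fun a _ => Set.mem_univ _) hinj (Set.toFinite _)
      _ = 2 := by rw [Set.ncard_univ]; simp
      _ ≤ max 2 μ := le_max_left _ _

private lemma improper_inr (v : V) (i : Fin k) (q : ℤ) :
    ({u : V ⊕ V × Fin k | (corona G (SimpleGraph.pathGraph k)).Adj (inr (v, i)) u ∧
      cColor cG (minC G cG) k s(inr (v, i), u) = q}).ncard ≤ 2 := by
  set S := {u : V ⊕ V × Fin k | (corona G (SimpleGraph.pathGraph k)).Adj (inr (v, i)) u ∧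
      cColor cG (minC G cG) k s(inr (v, i), u) = q} with hS
  set T1 : Set (V ⊕ V × Fin k) := {u | ∃ j : Fin k, u = inr (v, j) ∧ j.val + 1 = i.val} with hT1
  set T2 : Set (V ⊕ V × Fin k) := {u | ∃ j : Fin k, u = inr (v, j) ∧ i.val + 1 = j.val} with hT2
  have hT1card : T1.ncard ≤ 1 := by
    rw [Set.ncard_le_one_iff]
    rintro a b ⟨j, rfl, hj⟩ ⟨j', rfl, hj'⟩
    exact congrArg (fun n => inr (v, n)) (Fin.ext (by omega))
  have hT2card : T2.ncard ≤ 1 := by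
    rw [Set.ncard_le_one_iff]
    rintro a b ⟨j, rfl, hj⟩ ⟨j', rfl, hj'⟩
    exact congrArg (fun n => inr (v, n)) (Fin.ext (by omega))
  by_cases hq : q = minC G cG v - 1 - (i.val / 2 : ℕ)
  · have hsub : S ⊆ insert (inl v) T1 := by
      rintro (w | ⟨w, j⟩) ⟨hadj, hc⟩
      · rw [corona_adj_rl] at hadj
        cases hadj
        exact Set.mem_insert _ _
      · rw [corona_adj_rr] at hadj
        obtain ⟨h1, h2⟩ := hadj
        cases h1
        rw [SimpleGraph.pathGraph_adj] at h2
        dsimp only at h2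
        rw [cColor_path] at hc
        rcases h2 with h2 | h2
        · exfalso
          have hmin : min i.val j.val = i.val := by omega
          rw [hmin] at hc
          omega
        · exact Set.mem_insert_of_mem _ ⟨j, rfl, h2⟩
    calc S.ncard ≤ (insert (inl v) T1).ncard := Set.ncard_le_ncard hsub (Set.toFinite _)
      _ ≤ T1.ncard + 1 := Set.ncard_insert_le _ _
      _ ≤ 2 := by omega
  · have hsub : S ⊆ T1 ∪ T2 := by
      rintro (w | ⟨w, j⟩) ⟨hadj, hc⟩
      · rw [corona_adj_rl] at hadj
        cases hadj
        rw [cColor_star'] at hc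
        exact absurd hc.symm hq
      · rw [corona_adj_rr] at hadj
        obtain ⟨h1, h2⟩ := hadj
        cases h1
        rw [SimpleGraph.pathGraph_adj] at h2
        dsimp only at h2
        rcases h2 with h2 | h2
        · exact Or.inr ⟨j, rfl, h2⟩
        · exact Or.inl ⟨j, rfl, h2⟩
    calc S.ncard ≤ (T1 ∪ T2).ncard := Set.ncard_le_ncard hsub (Set.toFinite _)
      _ ≤ T1.ncard + T2.ncard := Set.ncard_union_le _ _
      _ ≤ 2 := by omega

private lemma improper_corona {μ : ℕ} (hGimp : IsKImproper G cG μ) :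
    IsKImproper (corona G (SimpleGraph.pathGraph k)) (cColor cG (minC G cG) k) (max 2 μ) := by
  intro x q
  cases x with
  | inl v => exact improper_inl G cG k hGimp v q
  | inr p => exact le_trans (improper_inr G cG k p.1 p.2 q) (le_max_left _ _)

end main2

end
end coronaAux

/-- For any graph `G` and any `k ≥ 1`, `μ_int(G ⊙ P_k) ≤ max {2, μ_int(G)}`. -/
theorem stmt12 {V : Type*} [Fintype V] (G : SimpleGraph V) (k : ℕ) (hk : 1 ≤ k) :
    impropriety (corona G (SimpleGraph.pathGraph k)) ≤ max 2 (impropriety G) := by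
  have hnonempty :
      {m : ℕ | ∃ c : Sym2 V → ℤ, IsIntervalColoring G c ∧ IsKImproper G c m}.Nonempty := by
    refine ⟨Fintype.card V, fun _ => (0 : ℤ), ?_, ?_⟩
    · rintro v a b x ⟨u, hu, ha⟩ ⟨u', hu', hb⟩ h1 h2
      dsimp only at ha hb
      exact ⟨u, hu, by dsimp only; omega⟩
    · intro v q
      calc _ ≤ (Set.univ : Set V).ncard :=
            Set.ncard_le_ncard (Set.subset_univ _) Set.finite_univ
        _ = Fintype.card V := by rw [Set.ncard_univ, Nat.card_eq_fintype_card]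
  obtain ⟨cG, hint, himp⟩ := Nat.sInf_mem hnonempty
  exact Nat.sInf_le ⟨cColor cG (minC G cG) k, interval_corona G cG k hk hint,
    improper_corona G cG k himp⟩
end

section
/- For any graph G and any spider graph H whose center vertex has degree k with 3 ≤ k ≤ 4, μ_int(G ⊙ H) ≤ max{2, μ_int(G)}. -/
/-- `H` is a spider graph with center `c` of degree `k`: a tree in which `c` has
degree `k ≥ 3` and every other vertex has degree at most 2. -/
def IsSpider {W : Type*} (H : SimpleGraph W) (c : W) (k : ℕ) : Prop :=
  H.IsTree ∧ (H.neighborSet c).ncard = k ∧ 3 ≤ k ∧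
    ∀ w : W, w ≠ c → (H.neighborSet w).ncard ≤ 2


open SimpleGraph Set

section helpers

/-- Convexity of a set of integers from local step conditions around 0. -/
lemma convex_steps {S : Set ℤ} (h0 : (0:ℤ) ∈ S)
    (hp : ∀ a ∈ S, 0 < a → a - 1 ∈ S) (hn : ∀ a ∈ S, a < 0 → a + 1 ∈ S) :
    ∀ a b x : ℤ, a ∈ S → b ∈ S → a ≤ x → x ≤ b → x ∈ S := by
  have up : ∀ (n : ℕ) (b x : ℤ), b ∈ S → 0 ≤ x → x ≤ b → b - x ≤ (n:ℤ) → x ∈ S := by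
    intro n
    induction n with
    | zero => intro b x hb hx0 hxb h; have : x = b := by omega
              rwa [this]
    | succ n ih =>
      intro b x hb hx0 hxb h
      rcases eq_or_lt_of_le hxb with rfl | hlt
      · exact hb
      · have hb1 : b - 1 ∈ S := hp b hb (by omega)
        exact ih (b-1) x hb1 hx0 (by omega) (by omega)
  have dn : ∀ (n : ℕ) (a x : ℤ), a ∈ S → x ≤ 0 → a ≤ x → x - a ≤ (n:ℤ) → x ∈ S := by
    intro n
    induction n with
    | zero => intro a x ha hx0 hax h; have : x = a := by omega
              rwa [this]
    | succ n ih =>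
      intro a x ha hx0 hax h
      rcases eq_or_lt_of_le hax with rfl | hlt
      · exact ha
      · have ha1 : a + 1 ∈ S := hn a ha (by omega)
        exact ih (a+1) x ha1 hx0 (by omega) (by omega)
  intro a b x ha hb hax hxb
  rcases le_or_gt 0 x with hx | hx
  · exact up (b - x).toNat b x hb hx hxb (by omega)
  · exact dn (x - a).toNat a x ha (by omega) hax (by omega)

lemma ncard_le_two_of_bool {α : Type*} {S : Set α} (p : α → Bool)
    (h : ∀ a ∈ S, ∀ b ∈ S, p a = p b → a = b) : S.ncard ≤ 2 := by
  classical
  have hinj : Set.InjOn p S := fun a ha b hb hab => h a ha b hb hab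
  have h1 : S.ncard = (p '' S).ncard := (Set.ncard_image_of_injOn hinj).symm
  rw [h1]
  calc (p '' S).ncard ≤ (Set.univ : Set Bool).ncard :=
        Set.ncard_le_ncard (Set.subset_univ _) (Set.finite_univ)
    _ = 2 := by rw [Set.ncard_univ]; simp

end helpers

section spiderdefs

variable {W : Type*}

open scoped Classical in
/-- The parent of `w` in a tree rooted at `c`: a neighbor closer to `c`. -/
noncomputable def par (H : SimpleGraph W) (c w : W) : W :=
  if h : ∃ p, H.Adj p w ∧ H.dist c p + 1 = H.dist c w then h.choose else w

/-- Iterated parent. -/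
noncomputable def anc (H : SimpleGraph W) (c : W) : ℕ → W → W
  | 0, w => w
  | n+1, w => anc H c n (par H c w)

/-- The leg of `w`: the depth-1 ancestor of `w`. -/
noncomputable def LegOf (H : SimpleGraph W) (c w : W) : W := anc H c (H.dist c w - 1) w

variable {H : SimpleGraph W} {c : W}

lemma dist_step (ht : H.IsTree) {w x : W} (h : H.Adj w x) :
    H.dist c x + 1 = H.dist c w ∨ H.dist c w + 1 = H.dist c x := by
  have hconn := ht.isConnected
  have h1 : H.dist w x = 1 := dist_eq_one_iff_adj.mpr h
  have h2 : H.dist x w = 1 := dist_eq_one_iff_adj.mpr h.symm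
  have t1 : H.dist c x ≤ H.dist c w + 1 := by
    have := hconn.dist_triangle (u := c) (v := w) (w := x); omega
  have t2 : H.dist c w ≤ H.dist c x + 1 := by
    have := hconn.dist_triangle (u := c) (v := x) (w := w); omega
  have hne : H.dist c w ≠ H.dist c x := by
    classical
    intro heq
    set n := H.dist c w with hn
    obtain ⟨p, hp⟩ := hconn.exists_walk_length_eq_dist c w
    have hpath : p.IsPath := p.isPath_of_length_eq_dist hp
    by_cases hx : x ∈ p.support
    · -- then dist c x < n, contradiction
      have htake : H.dist c x ≤ (p.takeUntil x hx).length := dist_le _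
      have hlen : (p.takeUntil x hx).length + (p.dropUntil x hx).length = p.length := by
        have := congrArg SimpleGraph.Walk.length (p.take_spec hx)
        rwa [SimpleGraph.Walk.length_append] at this
      have hdrop : (p.dropUntil x hx).length ≠ 0 := by
        intro h0
        exact h.ne' (SimpleGraph.Walk.eq_of_length_eq_zero h0)
      omega
    · -- concat is a path of length n+1 from c to x, but dist is n
      have hq : (p.concat h).IsPath := by
        rw [← SimpleGraph.Walk.isPath_reverse_iff, SimpleGraph.Walk.reverse_concat]
        refine SimpleGraph.Walk.IsPath.cons ?_ ?_
        · rwa [SimpleGraph.Walk.isPath_reverse_iff]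
        · rwa [SimpleGraph.Walk.support_reverse, List.mem_reverse]
      obtain ⟨r, hr⟩ := hconn.exists_walk_length_eq_dist c x
      have hrpath : r.IsPath := r.isPath_of_length_eq_dist hr
      have := isAcyclic_iff_path_unique.mp ht.IsAcyclic
        (⟨p.concat h, hq⟩ : H.Path c x) ⟨r, hrpath⟩
      rw [Subtype.ext_iff] at this
      have hlen : (p.concat h).length = r.length := congrArg SimpleGraph.Walk.length this
      rw [SimpleGraph.Walk.length_concat] at hlen
      omega
  omega

lemma exists_parent (ht : H.IsTree) {w : W} (hw : w ≠ c) :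
    ∃ p, H.Adj p w ∧ H.dist c p + 1 = H.dist c w := by
  have hconn := ht.isConnected
  have hpos : 0 < H.dist c w := hconn.pos_dist_of_ne (Ne.symm hw)
  obtain ⟨p, hp⟩ := hconn.exists_walk_length_eq_dist c w
  cases hrev : p.reverse with
  | nil =>
    exfalso
    have h0 : p.length = 0 := by
      simpa using congrArg SimpleGraph.Walk.length hrev
    omega
  | cons hadj q =>
    rename_i y
    have hlen : q.length + 1 = p.length := by
      have := congrArg SimpleGraph.Walk.length hrev
      rw [SimpleGraph.Walk.length_reverse] at this
      simpa using this.symm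
    refine ⟨y, hadj.symm, ?_⟩
    have hle : H.dist c y ≤ q.length := by
      have := dist_le q.reverse
      rwa [SimpleGraph.Walk.length_reverse] at this
    have hge : H.dist c w ≤ H.dist c y + 1 := by
      have h1 : H.dist y w = 1 := dist_eq_one_iff_adj.mpr hadj.symm
      have := hconn.dist_triangle (u := c) (v := y) (w := w); omega
    omega

lemma par_spec (ht : H.IsTree) {w : W} (hw : w ≠ c) :
    H.Adj (par H c w) w ∧ H.dist c (par H c w) + 1 = H.dist c w := by
  have hex := exists_parent (c := c) ht hw
  rw [par, dif_pos hex]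
  exact hex.choose_spec

lemma parent_unique (ht : H.IsTree) {w x1 x2 : W}
    (h1 : H.Adj x1 w) (hd1 : H.dist c x1 + 1 = H.dist c w)
    (h2 : H.Adj x2 w) (hd2 : H.dist c x2 + 1 = H.dist c w) : x1 = x2 := by
  have hconn := ht.isConnected
  have build : ∀ (x : W), H.Adj x w → H.dist c x + 1 = H.dist c w →
      ∃ (p : H.Walk c x) (h : H.Adj x w), (p.concat h).IsPath ∧ p.length = H.dist c x := by
    intro x hx hdx
    classical
    obtain ⟨p, hp⟩ := hconn.exists_walk_length_eq_dist c x
    have hpath : p.IsPath := p.isPath_of_length_eq_dist hp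
    have hw : w ∉ p.support := by
      intro hmem
      have := dist_le (p.takeUntil w hmem)
      have := SimpleGraph.Walk.length_takeUntil_le p hmem
      omega
    refine ⟨p, hx, ?_, hp⟩
    rw [← SimpleGraph.Walk.isPath_reverse_iff, SimpleGraph.Walk.reverse_concat]
    refine SimpleGraph.Walk.IsPath.cons ?_ ?_
    · rwa [SimpleGraph.Walk.isPath_reverse_iff]
    · rwa [SimpleGraph.Walk.support_reverse, List.mem_reverse]
  obtain ⟨p1, ha1, hp1, hl1⟩ := build x1 h1 hd1
  obtain ⟨p2, ha2, hp2, hl2⟩ := build x2 h2 hd2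
  have := isAcyclic_iff_path_unique.mp ht.IsAcyclic
    (⟨p1.concat ha1, hp1⟩ : H.Path c w) ⟨p2.concat ha2, hp2⟩
  rw [Subtype.ext_iff] at this
  obtain ⟨hv, -⟩ := SimpleGraph.Walk.concat_inj this
  exact hv

end spiderdefs

section spiderlemmas

variable {W : Type*} [Fintype W] {H : SimpleGraph W} {c : W}

lemma child_unique (ht : H.IsTree) (hdeg2 : ∀ w : W, w ≠ c → (H.neighborSet w).ncard ≤ 2)
    {p x1 x2 : W} (hp : p ≠ c) (ha1 : H.Adj p x1) (hd1 : H.dist c x1 = H.dist c p + 1)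
    (ha2 : H.Adj p x2) (hd2 : H.dist c x2 = H.dist c p + 1) : x1 = x2 := by
  by_contra hne
  obtain ⟨hpp, hdpp⟩ := par_spec ht hp
  set q := par H c p with hq
  have hq1 : q ≠ x1 := by intro h; rw [h] at hdpp; omega
  have hq2 : q ≠ x2 := by intro h; rw [h] at hdpp; omega
  have hsub : ({q, x1, x2} : Set W) ⊆ H.neighborSet p := by
    intro y hy
    rcases hy with rfl | rfl | rfl
    · exact hpp.symm
    · exact ha1
    · exact ha2
  have hcard : ({q, x1, x2} : Set W).ncard = 3 := by
    rw [Set.ncard_insert_of_notMem (by simp [hq1, hq2]) (Set.toFinite _),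
      Set.ncard_pair hne]
  have hle := Set.ncard_le_ncard hsub (Set.toFinite _)
  have := hdeg2 p hp
  omega

lemma anc_dist (ht : H.IsTree) :
    ∀ (n : ℕ) (w : W), n < H.dist c w → H.dist c (anc H c n w) = H.dist c w - n := by
  intro n
  induction n with
  | zero => intro w _; rfl
  | succ n ih =>
    intro w h
    have hw : w ≠ c := by
      intro h'; subst h'; rw [SimpleGraph.dist_self] at h; omega
    obtain ⟨-, hd⟩ := par_spec ht hw
    have : anc H c (n+1) w = anc H c n (par H c w) := rfl
    rw [this, ih (par H c w) (by omega)]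
    omega

lemma leg_dist (ht : H.IsTree) {w : W} (hw : w ≠ c) : H.dist c (LegOf H c w) = 1 := by
  have hpos : 0 < H.dist c w := ht.isConnected.pos_dist_of_ne (Ne.symm hw)
  have h := anc_dist (c := c) ht (H.dist c w - 1) w (by omega)
  show H.dist c (anc H c (H.dist c w - 1) w) = 1
  omega

lemma leg_par (ht : H.IsTree) {w : W} (hw : 2 ≤ H.dist c w) :
    LegOf H c (par H c w) = LegOf H c w := by
  have hw' : w ≠ c := by
    intro h; subst h; rw [SimpleGraph.dist_self] at hw; omega
  obtain ⟨-, hd⟩ := par_spec ht hw'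
  have h1 : H.dist c (par H c w) - 1 = H.dist c w - 2 := by omega
  rw [LegOf, LegOf, h1]
  have h2 : H.dist c w - 1 = (H.dist c w - 2) + 1 := by omega
  rw [h2]
  rfl

lemma leg_one {w : W} (h1 : H.dist c w = 1) : LegOf H c w = w := by
  rw [LegOf, h1]
  rfl

lemma spider_coloring {k : ℕ} (hH : IsSpider H c k) (hk4 : k ≤ 4) :
    ∃ (g : W → ℤ),
      g c = 0 ∧
      (∀ ⦃w x⦄, H.Adj w x → H.dist c x + 1 = H.dist c w ∨ H.dist c w + 1 = H.dist c x) ∧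
      (∀ ⦃w x⦄, w ≠ c → H.Adj w x →
        g w - 1 ≤ (if H.dist c w < H.dist c x then g x else g w) ∧ (if H.dist c w < H.dist c x then g x else g w) ≤ g w + 1) ∧
      ({q : ℤ | q = 0 ∨ ∃ x, H.Adj c x ∧ (if H.dist c c < H.dist c x then g x else g c) = q}
        = Set.Icc (2 - (k : ℤ)) 1) ∧
      (∀ (w : W) (q : ℤ), {x | H.Adj w x ∧ (if H.dist c w < H.dist c x then g x else g w) = q}.Subsingleton) ∧
      (∀ a b x : ℤ, a ∈ Set.range g → b ∈ Set.range g → a ≤ x → x ≤ b → x ∈ Set.range g) ∧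
      (∀ q : ℤ, {w | g w = q}.ncard ≤ 2) := by
  classical
  obtain ⟨ht, hcard, hk3, hdeg2⟩ := hH
  have hconn := ht.isConnected
  have hfin : (H.neighborSet c).Finite := Set.toFinite _
  set nb := hfin.toFinset with hnb
  have hnbcard : nb.card = k := by
    rw [← Set.ncard_eq_toFinset_card]; exact hcard
  have hcardcoe : Fintype.card {x // x ∈ nb} = k := by rw [Fintype.card_coe]; exact hnbcard
  set e := Fintype.equivFinOfCardEq hcardcoe with he
  set idx : W → ℕ := fun w => if h : w ∈ nb then (e ⟨w, h⟩ : ℕ) else 0 with hidx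
  have idx_lt : ∀ w ∈ nb, idx w < k := by
    intro w h
    simp only [hidx, dif_pos h]
    exact (e ⟨w, h⟩).isLt
  have idx_inj : ∀ w1 ∈ nb, ∀ w2 ∈ nb, idx w1 = idx w2 → w1 = w2 := by
    intro w1 h1 w2 h2 hw
    simp only [hidx, dif_pos h1, dif_pos h2] at hw
    have : e ⟨w1, h1⟩ = e ⟨w2, h2⟩ := Fin.ext hw
    have := e.injective this
    exact congrArg Subtype.val this
  have idx_surj : ∀ i, i < k → ∃ x, x ∈ nb ∧ idx x = i := by
    intro i hi
    refine ⟨(e.symm ⟨i, hi⟩).1, (e.symm ⟨i, hi⟩).2, ?_⟩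
    simp only [hidx, dif_pos (e.symm ⟨i, hi⟩).2]
    rw [show (⟨(e.symm ⟨i, hi⟩).1, (e.symm ⟨i, hi⟩).2⟩ : {x // x ∈ nb}) = e.symm ⟨i, hi⟩ from rfl]
    rw [Equiv.apply_symm_apply]
  have mem_nb : ∀ x, x ∈ nb ↔ H.Adj c x := by
    intro x; simp [hnb, Set.Finite.mem_toFinset]
  have d_c : H.dist c c = 0 := SimpleGraph.dist_self
  have d_pos : ∀ w, w ≠ c → 1 ≤ H.dist c w := fun w hw => hconn.pos_dist_of_ne (Ne.symm hw)
  have d_eq_zero : ∀ w, H.dist c w = 0 → w = c := by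
    intro w h
    exact (hconn.dist_eq_zero_iff.mp h).symm
  have adj_c : ∀ x, H.Adj c x ↔ H.dist c x = 1 := fun x => SimpleGraph.dist_eq_one_iff_adj.symm
  set j : W → ℕ := fun w => idx (LegOf H c w) with hj
  set bv : ℕ → ℕ → ℤ := fun i n =>
    if i = 0 then (n:ℤ) - 1 else if i = 1 then (n:ℤ) else if i = 2 then -(n:ℤ) else -(n:ℤ) - 1
    with hbv
  set g : W → ℤ := fun w => if w = c then 0 else bv (j w) (H.dist c w) with hg
  have g_c : g c = 0 := by rw [hg]; simp
  have g_ne : ∀ w, w ≠ c → g w = bv (j w) (H.dist c w) := by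
    intro w hw; rw [hg]; simp [hw]
  have leg_nb : ∀ w, w ≠ c → LegOf H c w ∈ nb :=
    fun w hw => (mem_nb _).mpr ((adj_c _).mpr (leg_dist ht hw))
  have j_lt : ∀ w, w ≠ c → j w < k := fun w hw => idx_lt _ (leg_nb w hw)
  have d_par : ∀ w, w ≠ c → H.dist c (par H c w) + 1 = H.dist c w := fun w hw => (par_spec ht hw).2
  have adj_par : ∀ w, w ≠ c → H.Adj (par H c w) w := fun w hw => (par_spec ht hw).1
  have j_par : ∀ w, 2 ≤ H.dist c w → j w = j (par H c w) := by
    intro w h2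
    simp only [hj]
    exact (congrArg idx (leg_par ht h2)).symm
  have par_ne_c : ∀ w, 2 ≤ H.dist c w → par H c w ≠ c := by
    intro w h2 h
    have hw : w ≠ c := by intro h'; subst h'; rw [d_c] at h2; omega
    have := d_par w hw
    rw [h, d_c] at this
    omega
  have bv_step : ∀ i (n : ℕ), bv i (n+1) = bv i n + 1 ∨ bv i (n+1) = bv i n - 1 := by
    intro i n
    simp only [hbv]
    split_ifs
    · left; push_cast; ring
    · left; push_cast; ring
    · right; push_cast; ring
    · right; push_cast; ring
  have g_child : ∀ w x, w ≠ c → H.Adj w x → H.dist c x = H.dist c w + 1 →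
      (g x = g w + 1 ∨ g x = g w - 1) ∧ j x = j w := by
    intro w x hw hadj hdx
    have hx : x ≠ c := by
      intro h; subst h; rw [d_c] at hdx; omega
    have h2 : 2 ≤ H.dist c x := by have := d_pos w hw; omega
    have hpx : par H c x = w :=
      parent_unique ht (adj_par x hx) (d_par x hx) hadj (by omega)
    have hjx : j x = j w := by rw [j_par x h2, hpx]
    refine ⟨?_, hjx⟩
    rw [g_ne x hx, g_ne w hw, hjx, hdx]
    rcases bv_step (j w) (H.dist c w) with h | h
    · left; rw [h]
    · right; rw [h]
  have g_child_c : ∀ x, H.Adj c x → g x = bv (idx x) 1 := by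
    intro x hadj
    have hd1 : H.dist c x = 1 := (adj_c x).mp hadj
    have hx : x ≠ c := hadj.ne'
    rw [g_ne x hx, hd1]
    simp only [hj, leg_one hd1]
  have class_unique : ∀ n, ∀ w1 w2 : W, w1 ≠ c → w2 ≠ c → H.dist c w1 = n → H.dist c w2 = n →
      j w1 = j w2 → w1 = w2 := by
    intro n
    induction n with
    | zero => intro w1 w2 h1 _ hd1 _ _; exact absurd (d_eq_zero w1 hd1) h1
    | succ n ih =>
      intro w1 w2 h1 h2 hd1 hd2 hjj
      by_cases hn : n = 0
      · subst hn
        have l1 : LegOf H c w1 = w1 := leg_one hd1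
        have l2 : LegOf H c w2 = w2 := leg_one hd2
        have m1 : w1 ∈ nb := by rw [← l1]; exact leg_nb w1 h1
        have m2 : w2 ∈ nb := by rw [← l2]; exact leg_nb w2 h2
        apply idx_inj w1 m1 w2 m2
        have := hjj
        simp only [hj, l1, l2] at this
        exact this
      · have h2d1 : 2 ≤ H.dist c w1 := by omega
        have h2d2 : 2 ≤ H.dist c w2 := by omega
        have hp1 := d_par w1 h1
        have hp2 := d_par w2 h2
        have hpeq : par H c w1 = par H c w2 := by
          apply ih _ _ (par_ne_c w1 h2d1) (par_ne_c w2 h2d2) (by omega) (by omega)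
          rw [← j_par w1 h2d1, ← j_par w2 h2d2]; exact hjj
        apply child_unique ht hdeg2 (par_ne_c w1 h2d1)
          (adj_par w1 h1) (by omega)
          (by rw [hpeq]; exact adj_par w2 h2) (by rw [hpeq]; omega)
  have bv_inj : ∀ i1 i2 (n : ℕ), 1 ≤ n → i1 < 4 → i2 < 4 → bv i1 n = bv i2 n → i1 = i2 := by
    intro i1 i2 n hn h1 h2 hb
    rcases (by omega : i1 = 0 ∨ i1 = 1 ∨ i1 = 2 ∨ i1 = 3) with e1|e1|e1|e1 <;>
      rcases (by omega : i2 = 0 ∨ i2 = 1 ∨ i2 = 2 ∨ i2 = 3) with e2|e2|e2|e2 <;>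
      rw [e1, e2] at hb <;> simp only [hbv] at hb <;> norm_num at hb <;> omega
  have P3 : ∀ ⦃w x : W⦄, w ≠ c → H.Adj w x →
      g w - 1 ≤ (if H.dist c w < H.dist c x then g x else g w) ∧
      (if H.dist c w < H.dist c x then g x else g w) ≤ g w + 1 := by
    intro w x hw hadj
    rcases dist_step (c := c) ht hadj with hlow | hup
    · rw [if_neg (by omega)]
      omega
    · rw [if_pos (by omega)]
      rcases (g_child w x hw hadj (by omega)).1 with h | h <;> omega
  have P4 : {q : ℤ | q = 0 ∨ ∃ x, H.Adj c x ∧ (if H.dist c c < H.dist c x then g x else g c) = q}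
      = Set.Icc (2 - (k : ℤ)) 1 := by
    ext q
    simp only [Set.mem_setOf_eq, Set.mem_Icc]
    constructor
    · rintro (rfl | ⟨x, hadj, hcol⟩)
      · constructor <;> omega
      · have hd1 : H.dist c x = 1 := (adj_c x).mp hadj
        rw [if_pos (by omega), g_child_c x hadj] at hcol
        have hx : x ∈ nb := (mem_nb x).mpr hadj
        have hlt := idx_lt x hx
        rcases (by omega : idx x = 0 ∨ idx x = 1 ∨ idx x = 2 ∨ idx x = 3) with h|h|h|h <;>
          rw [h] at hcol hlt <;> simp only [hbv] at hcol <;> norm_num at hcol <;> omega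
    · rintro ⟨hq1, hq2⟩
      rcases (by omega : q = 0 ∨ q = 1 ∨ q = -1 ∨ (q = -2 ∧ k = 4)) with rfl | rfl | rfl | ⟨rfl, hk'⟩
      · exact Or.inl rfl
      · obtain ⟨x, hx, hix⟩ := idx_surj 1 (by omega)
        have hadj := (mem_nb x).mp hx
        refine Or.inr ⟨x, hadj, ?_⟩
        have hd1 : H.dist c x = 1 := (adj_c x).mp hadj
        rw [if_pos (by omega), g_child_c x hadj, hix]
        simp only [hbv]; norm_num
      · obtain ⟨x, hx, hix⟩ := idx_surj 2 (by omega)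
        have hadj := (mem_nb x).mp hx
        refine Or.inr ⟨x, hadj, ?_⟩
        have hd1 : H.dist c x = 1 := (adj_c x).mp hadj
        rw [if_pos (by omega), g_child_c x hadj, hix]
        simp only [hbv]; norm_num
      · obtain ⟨x, hx, hix⟩ := idx_surj 3 (by omega)
        have hadj := (mem_nb x).mp hx
        refine Or.inr ⟨x, hadj, ?_⟩
        have hd1 : H.dist c x = 1 := (adj_c x).mp hadj
        rw [if_pos (by omega), g_child_c x hadj, hix]
        simp only [hbv]; norm_num
  have P5 : ∀ (w : W) (q : ℤ),
      {x | H.Adj w x ∧ (if H.dist c w < H.dist c x then g x else g w) = q}.Subsingleton := by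
    intro w q x1 hx1 x2 hx2
    simp only [Set.mem_setOf_eq] at hx1 hx2
    obtain ⟨ha1, hc1⟩ := hx1
    obtain ⟨ha2, hc2⟩ := hx2
    have hboth : ∀ y1 y2 : W, H.Adj w y1 → H.Adj w y2 →
        (if H.dist c w < H.dist c y1 then g y1 else g w) = q →
        (if H.dist c w < H.dist c y2 then g y2 else g w) = q →
        H.dist c y1 + 1 = H.dist c w → H.dist c w + 1 = H.dist c y2 → False := by
      intro y1 y2 hay1 hay2 hcy1 hcy2 hl hu
      have hw : w ≠ c := by intro h; subst h; rw [d_c] at hl; omega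
      rw [if_neg (by omega)] at hcy1
      rw [if_pos (by omega)] at hcy2
      rcases (g_child w y2 hw hay2 (by omega)).1 with h | h <;> omega
    rcases dist_step (c := c) ht ha1 with l1 | u1 <;> rcases dist_step (c := c) ht ha2 with l2 | u2
    · exact parent_unique ht ha1.symm l1 ha2.symm l2
    · exact absurd (hboth x1 x2 ha1 ha2 hc1 hc2 l1 u2) not_false
    · exact absurd (hboth x2 x1 ha2 ha1 hc2 hc1 l2 u1) not_false
    · have hx1c : x1 ≠ c := by intro h; subst h; rw [d_c] at u1; omega
      have hx2c : x2 ≠ c := by intro h; subst h; rw [d_c] at u2; omega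
      rw [if_pos (by omega)] at hc1
      rw [if_pos (by omega)] at hc2
      have hg12 : bv (j x1) (H.dist c x1) = bv (j x2) (H.dist c x2) := by
        rw [← g_ne x1 hx1c, ← g_ne x2 hx2c]; omega
      have hdd : H.dist c x1 = H.dist c x2 := by omega
      rw [hdd] at hg12
      have hjj : j x1 = j x2 :=
        bv_inj _ _ _ (d_pos x2 hx2c) (lt_of_lt_of_le (j_lt x1 hx1c) hk4)
          (lt_of_lt_of_le (j_lt x2 hx2c) hk4) hg12
      exact class_unique (H.dist c x1) x1 x2 hx1c hx2c rfl hdd.symm hjj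
  have hrange : ∀ w : W, (0 < g w → g w - 1 ∈ Set.range g) ∧ (g w < 0 → g w + 1 ∈ Set.range g) := by
    intro w
    by_cases hw : w = c
    · subst hw
      rw [g_c]
      exact ⟨fun h => absurd h (lt_irrefl 0), fun h => absurd h (lt_irrefl 0)⟩
    · have hjk := j_lt w hw
      have hdw := d_pos w hw
      have hgw := g_ne w hw
      have hparw : ∀ _ : 2 ≤ H.dist c w, g (par H c w) = bv (j w) (H.dist c w - 1) := by
        intro h2
        rw [g_ne _ (par_ne_c w h2), ← j_par w h2]
        congr 1
        have := d_par w hw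
        omega
      rcases (by omega : j w = 0 ∨ j w = 1 ∨ j w = 2 ∨ j w = 3) with h1|h1|h1|h1 <;>
        rw [h1] at hgw <;> simp only [hbv] at hgw <;> norm_num at hgw
      · constructor
        · intro hpos
          have h2 : 2 ≤ H.dist c w := by omega
          refine ⟨par H c w, ?_⟩
          rw [hparw h2, h1]
          simp only [hbv]; norm_num
          omega
        · intro hneg; exfalso; omega
      · constructor
        · intro hpos
          by_cases h2 : 2 ≤ H.dist c w
          · refine ⟨par H c w, ?_⟩
            rw [hparw h2, h1]
            simp only [hbv]; norm_num
            omega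
          · refine ⟨c, ?_⟩
            rw [g_c]; omega
        · intro hneg; exfalso; omega
      · constructor
        · intro hpos; exfalso; omega
        · intro hneg
          by_cases h2 : 2 ≤ H.dist c w
          · refine ⟨par H c w, ?_⟩
            rw [hparw h2, h1]
            simp only [hbv]; norm_num
            omega
          · refine ⟨c, ?_⟩
            rw [g_c]; omega
      · constructor
        · intro hpos; exfalso; omega
        · intro hneg
          by_cases h2 : 2 ≤ H.dist c w
          · refine ⟨par H c w, ?_⟩
            rw [hparw h2, h1]
            simp only [hbv]; norm_num
            omega
          · have hk' : k = 4 := by omega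
            obtain ⟨x, hx, hix⟩ := idx_surj 2 (by omega)
            refine ⟨x, ?_⟩
            rw [g_child_c x ((mem_nb x).mp hx), hix]
            simp only [hbv]; norm_num
            omega
  have P6 := convex_steps (S := Set.range g) ⟨c, g_c⟩
    (fun a ha h => by obtain ⟨w, rfl⟩ := ha; exact (hrange w).1 h)
    (fun a ha h => by obtain ⟨w, rfl⟩ := ha; exact (hrange w).2 h)
  have P7 : ∀ q : ℤ, {w | g w = q}.ncard ≤ 2 := by
    intro q
    apply ncard_le_two_of_bool (fun w => decide (w = c ∨ j w = 1 ∨ j w = 3))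
    intro a ha b hb hp
    simp only [Set.mem_setOf_eq] at ha hb
    rw [decide_eq_decide] at hp
    by_cases hac : a = c <;> by_cases hbc : b = c
    · rw [hac, hbc]
    · exfalso
      rw [hac, g_c] at ha
      have hb' : j b = 1 ∨ j b = 3 := by
        rcases hp.mp (Or.inl hac) with h | h
        · exact absurd h hbc
        · exact h
      have hgb : bv (j b) (H.dist c b) = q := by rw [← g_ne b hbc]; exact hb
      have hdb := d_pos b hbc
      rcases hb' with h | h <;> rw [h] at hgb <;> simp only [hbv] at hgb <;>
        norm_num at hgb <;> omega
    · exfalso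
      rw [hbc, g_c] at hb
      have ha' : j a = 1 ∨ j a = 3 := by
        rcases hp.mpr (Or.inl hbc) with h | h
        · exact absurd h hac
        · exact h
      have hga : bv (j a) (H.dist c a) = q := by rw [← g_ne a hac]; exact ha
      have hda := d_pos a hac
      rcases ha' with h | h <;> rw [h] at hga <;> simp only [hbv] at hga <;>
        norm_num at hga <;> omega
    · have hga : bv (j a) (H.dist c a) = q := by rw [← g_ne a hac]; exact ha
      have hgb : bv (j b) (H.dist c b) = q := by rw [← g_ne b hbc]; exact hb
      have hda := d_pos a hac
      have hdb := d_pos b hbc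
      have hjka := lt_of_lt_of_le (j_lt a hac) hk4
      have hjkb := lt_of_lt_of_le (j_lt b hbc) hk4
      have hp' : (j a = 1 ∨ j a = 3) ↔ (j b = 1 ∨ j b = 3) := by
        constructor
        · intro h
          rcases hp.mp (Or.inr h) with h' | h'
          · exact absurd h' hbc
          · exact h'
        · intro h
          rcases hp.mpr (Or.inr h) with h' | h'
          · exact absurd h' hac
          · exact h'
      have key : j a = j b ∧ H.dist c a = H.dist c b := by
        rcases (by omega : j a = 0 ∨ j a = 1 ∨ j a = 2 ∨ j a = 3) with h1|h1|h1|h1 <;>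
          rcases (by omega : j b = 0 ∨ j b = 1 ∨ j b = 2 ∨ j b = 3) with h2|h2|h2|h2 <;>
          rw [h1] at hga <;> rw [h2] at hgb <;>
          simp only [hbv] at hga hgb <;> norm_num at hga hgb <;> omega
      exact class_unique (H.dist c a) a b hac hbc rfl key.2.symm key.1
  exact ⟨g, g_c, fun w x h => dist_step ht h, P3, P4, P5, P6, P7⟩

end spiderlemmas


/-- For any graph `G` and any spider graph `H` whose center has degree `k` with
`3 ≤ k ≤ 4`, `μ_int(G ⊙ H) ≤ max {2, μ_int(G)}`. -/
theorem stmt15 {V W : Type*} [Fintype V] [Fintype W] (G : SimpleGraph V)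
    (H : SimpleGraph W) (c : W) (k : ℕ) (hH : IsSpider H c k)
    (hk3 : 3 ≤ k) (hk4 : k ≤ 4) :
    impropriety (corona G H) ≤ max 2 (impropriety G) := by
  classical
  -- the impropriety of G is attained
  have hGne : {m : ℕ | ∃ cc : Sym2 V → ℤ, IsIntervalColoring G cc ∧ IsKImproper G cc m}.Nonempty := by
    refine ⟨Fintype.card V, fun _ => 0, ?_, ?_⟩
    · intro v a b x ha hb hax hxb
      obtain ⟨u, hu, hua⟩ := ha
      obtain ⟨u', hu', hub⟩ := hb
      refine ⟨u, hu, ?_⟩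
      simp only at hua hub ⊢
      omega
    · intro v q
      calc ({u : V | G.Adj v u ∧ (fun _ => (0:ℤ)) s(v, u) = q}).ncard
          ≤ (Set.univ : Set V).ncard := Set.ncard_le_ncard (Set.subset_univ _) Set.finite_univ
        _ = Fintype.card V := by rw [Set.ncard_univ, Nat.card_eq_fintype_card]
  have hGmem : ∃ cc : Sym2 V → ℤ, IsIntervalColoring G cc ∧ IsKImproper G cc (impropriety G) :=
    Nat.sInf_mem hGne
  obtain ⟨cG, hGint, hGimp⟩ := hGmem
  obtain ⟨g, gc0, gstep, gP3, gP4, gP5, gP6, gP7⟩ := spider_coloring hH hk4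
  -- apex offsets
  have hWne : (Finset.univ.image g).Nonempty :=
    ⟨g c, Finset.mem_image_of_mem g (Finset.mem_univ c)⟩
  set gmin := (Finset.univ.image g).min' hWne with hgmin
  have gmin_le : ∀ w : W, gmin ≤ g w := fun w =>
    Finset.min'_le _ _ (Finset.mem_image_of_mem g (Finset.mem_univ w))
  have gmin_mem : ∃ w : W, g w = gmin := by
    have h := (Finset.univ.image g).min'_mem hWne
    rw [← hgmin] at h
    simp only [Finset.mem_image, Finset.mem_univ, true_and] at h
    exact h
  set F : V → Finset ℤ :=
    fun v => (Finset.univ.filter (fun u => G.Adj v u)).image (fun u => cG s(v, u)) with hF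
  have memF : ∀ (v : V) (q : ℤ), q ∈ F v ↔ ∃ u, G.Adj v u ∧ cG s(v, u) = q := by
    intro v q
    simp [hF, and_assoc, eq_comm]
  set t : V → ℤ := fun v => if h : (F v).Nonempty then (F v).max' h + 1 - gmin else 0 with htd
  -- the corona coloring
  set f : (V ⊕ V × W) → (V ⊕ V × W) → ℤ := fun x y =>
    match x, y with
    | Sum.inl u, Sum.inl u' => cG s(u, u')
    | Sum.inl _, Sum.inr p => t p.1 + g p.2
    | Sum.inr p, Sum.inl _ => t p.1 + g p.2
    | Sum.inr p, Sum.inr p' =>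
        if H.dist c p.2 < H.dist c p'.2 then t p'.1 + g p'.2
        else if H.dist c p'.2 < H.dist c p.2 then t p.1 + g p.2 else 0
    with hfd
  have hfsymm : ∀ x y, f x y = f y x := by
    intro x y
    rcases x with u | p <;> rcases y with u' | p' <;> simp only [hfd]
    · rw [Sym2.eq_swap]
    · split_ifs <;> omega
  set cc : Sym2 (V ⊕ V × W) → ℤ := Sym2.lift ⟨f, hfsymm⟩ with hccd
  have ccval : ∀ x y, cc s(x, y) = f x y := fun x y => rfl
  have col_ll : ∀ u u' : V, cc s(Sum.inl u, Sum.inl u') = cG s(u, u') := fun u u' => rfl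
  have col_lr : ∀ (v : V) (p : V × W), cc s(Sum.inl v, Sum.inr p) = t p.1 + g p.2 :=
    fun v p => rfl
  have col_rl : ∀ (p : V × W) (v : V), cc s(Sum.inr p, Sum.inl v) = t p.1 + g p.2 :=
    fun p v => rfl
  have col_rr : ∀ (p p' : V × W), p.1 = p'.1 → H.Adj p.2 p'.2 →
      cc s(Sum.inr p, Sum.inr p') =
        t p.1 + (if H.dist c p.2 < H.dist c p'.2 then g p'.2 else g p.2) := by
    intro p p' hp1 hadj
    rw [ccval]
    simp only [hfd]
    rcases gstep hadj with h | h
    · rw [if_neg (by omega : ¬ H.dist c p.2 < H.dist c p'.2),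
        if_pos (by omega : H.dist c p'.2 < H.dist c p.2),
        if_neg (by omega : ¬ H.dist c p.2 < H.dist c p'.2)]
    · rw [if_pos (by omega : H.dist c p.2 < H.dist c p'.2),
        if_pos (by omega : H.dist c p.2 < H.dist c p'.2), hp1]
  -- neighborhoods
  have attl : ∀ (v : V) (q : ℤ),
      (∃ u', (corona G H).Adj (Sum.inl v) u' ∧ cc s(Sum.inl v, u') = q) ↔
      ((∃ u, G.Adj v u ∧ cG s(v, u) = q) ∨ ∃ w : W, t v + g w = q) := by
    intro v q
    constructor
    · rintro ⟨u', hadj, hval⟩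
      rcases u' with u | p
      · exact Or.inl ⟨u, hadj, by rwa [col_ll] at hval⟩
      · refine Or.inr ⟨p.2, ?_⟩
        rw [col_lr] at hval
        have hp1 : v = p.1 := hadj
        rw [hp1]
        exact hval
    · rintro (⟨u, hadj, hval⟩ | ⟨w, hval⟩)
      · exact ⟨Sum.inl u, hadj, by rw [col_ll]; exact hval⟩
      · exact ⟨Sum.inr (v, w), rfl, by rw [col_lr]; exact hval⟩
  have attr : ∀ (v : V) (w : W) (q : ℤ),
      (∃ u', (corona G H).Adj (Sum.inr (v, w)) u' ∧ cc s(Sum.inr (v, w), u') = q) ↔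
      (q = t v + g w ∨
        ∃ x', H.Adj w x' ∧ t v + (if H.dist c w < H.dist c x' then g x' else g w) = q) := by
    intro v w q
    constructor
    · rintro ⟨u', hadj, hval⟩
      rcases u' with u | p'
      · have hu : u = v := hadj
        subst hu
        rw [col_rl] at hval
        exact Or.inl hval.symm
      · obtain ⟨hp1, hadj2⟩ := hadj
        refine Or.inr ⟨p'.2, hadj2, ?_⟩
        rw [col_rr (v, w) p' hp1 hadj2] at hval
        exact hval
    · rintro (rfl | ⟨x', hadj, hval⟩)
      · exact ⟨Sum.inl v, rfl, col_rl (v, w) v⟩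
      · refine ⟨Sum.inr (v, x'), ⟨rfl, hadj⟩, ?_⟩
        rw [col_rr (v, w) (v, x') rfl hadj]
        exact hval
  -- the coloring is an interval coloring
  have hint : IsIntervalColoring (corona G H) cc := by
    rintro (v | ⟨v, w⟩) a b x hA hB hax hxb
    · -- apex vertex
      replace hA := (attl v a).mp hA
      replace hB := (attl v b).mp hB
      refine (attl v x).mpr ?_
      by_cases hFv : (F v).Nonempty
      · set qv := (F v).max' hFv with hqv
        have htv : t v = qv + 1 - gmin := by simp only [htd]; rw [dif_pos hFv]
        have hGle : ∀ q : ℤ, (∃ u, G.Adj v u ∧ cG s(v, u) = q) → q ≤ qv := by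
          rintro q ⟨u, h1, h2⟩
          exact Finset.le_max' _ _ ((memF v q).mpr ⟨u, h1, h2⟩)
        have hqvmem : ∃ u, G.Adj v u ∧ cG s(v, u) = qv := (memF v qv).mp ((F v).max'_mem hFv)
        by_cases hx : x ≤ qv
        · have ha' : ∃ u, G.Adj v u ∧ cG s(v, u) = a := by
            rcases hA with h | h
            · exact h
            · exfalso
              obtain ⟨w', hw'⟩ := h
              have := gmin_le w'
              omega
          exact Or.inl (hGint v a qv x ha' hqvmem hax hx)
        · push_neg at hx
          apply Or.inr
          have hb' : ∃ w', t v + g w' = b := by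
            rcases hB with h | h
            · exfalso
              have := hGle b h
              omega
            · exact h
          obtain ⟨wb, hwb⟩ := hb'
          obtain ⟨w0, hw0⟩ := gmin_mem
          obtain ⟨w', hw'⟩ := gP6 (g w0) (g wb) (x - t v) ⟨w0, rfl⟩ ⟨wb, rfl⟩
            (by omega) (by omega)
          exact ⟨w', by omega⟩
      · have hGempt : ∀ q : ℤ, ¬ ∃ u, G.Adj v u ∧ cG s(v, u) = q := by
          intro q hq
          exact hFv ⟨q, (memF v q).mpr hq⟩
        have ha' : ∃ w', t v + g w' = a := by
          rcases hA with h | h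
          · exact absurd h (hGempt a)
          · exact h
        have hb' : ∃ w', t v + g w' = b := by
          rcases hB with h | h
          · exact absurd h (hGempt b)
          · exact h
        obtain ⟨wa, hwa⟩ := ha'
        obtain ⟨wb, hwb⟩ := hb'
        obtain ⟨w', hw'⟩ := gP6 (g wa) (g wb) (x - t v) ⟨wa, rfl⟩ ⟨wb, rfl⟩
          (by omega) (by omega)
        exact Or.inr ⟨w', by omega⟩
    · -- spider vertex
      replace hA := (attr v w a).mp hA
      replace hB := (attr v w b).mp hB
      refine (attr v w x).mpr ?_
      by_cases hwc : w = c
      · rw [hwc] at hA hB ⊢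
        have hmem : ∀ q : ℤ,
            (q = t v + g c ∨
              ∃ x', H.Adj c x' ∧ t v + (if H.dist c c < H.dist c x' then g x' else g c) = q) ↔
            q - t v ∈ Set.Icc (2 - (k : ℤ)) 1 := by
          intro q
          rw [← gP4]
          simp only [Set.mem_setOf_eq]
          constructor
          · rintro (h | ⟨x', ha', hv'⟩)
            · rw [gc0] at h
              exact Or.inl (by omega)
            · exact Or.inr ⟨x', ha', by omega⟩
          · rintro (h | ⟨x', ha', hv'⟩)
            · rw [gc0]
              exact Or.inl (by omega)
            · exact Or.inr ⟨x', ha', by omega⟩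
        replace hA := (hmem a).mp hA
        replace hB := (hmem b).mp hB
        refine (hmem x).mpr ?_
        simp only [Set.mem_Icc] at hA hB ⊢
        omega
      · have hrloc : ∀ q : ℤ,
            (q = t v + g w ∨
              ∃ x', H.Adj w x' ∧ t v + (if H.dist c w < H.dist c x' then g x' else g w) = q) →
            t v + g w - 1 ≤ q ∧ q ≤ t v + g w + 1 := by
          rintro q (rfl | ⟨x', ha', hv'⟩)
          · omega
          · have := gP3 hwc ha'
            omega
        have ha'' := hrloc a hA
        have hb'' := hrloc b hB
        rcases (by omega : x = t v + g w - 1 ∨ x = t v + g w ∨ x = t v + g w + 1) with h | h | h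
        · have hax' : a = x := by omega
          rwa [← hax']
        · exact Or.inl h
        · have hbx' : b = x := by omega
          rwa [← hbx']
  -- the coloring is (max 2 (impropriety G))-improper
  have himp : IsKImproper (corona G H) cc (max 2 (impropriety G)) := by
    rintro (v | ⟨v, w⟩) q
    · -- apex vertex
      have hsplit : {u' : V ⊕ V × W | (corona G H).Adj (Sum.inl v) u' ∧ cc s(Sum.inl v, u') = q}
          = (Sum.inl '' {u : V | G.Adj v u ∧ cG s(v, u) = q}) ∪
            ((fun w' : W => Sum.inr (v, w')) '' {w' : W | t v + g w' = q}) := by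
        ext u'
        constructor
        · rintro ⟨hadj, hval⟩
          rcases u' with u | p
          · exact Or.inl ⟨u, ⟨hadj, by rwa [col_ll] at hval⟩, rfl⟩
          · have hp1 : v = p.1 := hadj
            rw [col_lr] at hval
            refine Or.inr ⟨p.2, ?_, ?_⟩
            · rw [hp1]
              exact hval
            · rw [hp1]
        · rintro (⟨u, ⟨h1, h2⟩, rfl⟩ | ⟨w', hw', rfl⟩)
          · exact ⟨h1, by rw [col_ll]; exact h2⟩
          · exact ⟨rfl, by rw [col_lr]; exact hw'⟩
      rw [hsplit]
      have hinjr : Function.Injective (fun w' : W => (Sum.inr (v, w') : V ⊕ V × W)) := by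
        intro a b hab
        simpa using hab
      have hGset : ∀ hFv : (F v).Nonempty, ∀ hq : (F v).max' hFv < q,
          {u : V | G.Adj v u ∧ cG s(v, u) = q} = ∅ := by
        intro hFv hq
        ext u
        simp only [Set.mem_setOf_eq, Set.mem_empty_iff_false, iff_false, not_and]
        intro h1 h2
        have : q ≤ (F v).max' hFv := Finset.le_max' _ _ ((memF v q).mpr ⟨u, h1, h2⟩)
        omega
      have hRbound : ((fun w' : W => (Sum.inr (v, w') : V ⊕ V × W)) ''
          {w' : W | t v + g w' = q}).ncard ≤ 2 := by
        rw [Set.ncard_image_of_injective _ hinjr]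
        have : {w' : W | t v + g w' = q} = {w' : W | g w' = q - t v} := by
          ext w'
          constructor <;> intro h <;> simp only [Set.mem_setOf_eq] at * <;> omega
        rw [this]
        exact gP7 (q - t v)
      by_cases hFv : (F v).Nonempty
      · have htv : t v = (F v).max' hFv + 1 - gmin := by simp only [htd]; rw [dif_pos hFv]
        by_cases hq : q ≤ (F v).max' hFv
        · have hempty : {w' : W | t v + g w' = q} = ∅ := by
            ext w'
            simp only [Set.mem_setOf_eq, Set.mem_empty_iff_false, iff_false]
            intro h
            have := gmin_le w'
            omega
          rw [hempty, Set.image_empty, Set.union_empty,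
            Set.ncard_image_of_injective _ Sum.inl_injective]
          exact le_trans (hGimp v q) (le_max_right 2 _)
        · push_neg at hq
          rw [hGset hFv hq, Set.image_empty, Set.empty_union]
          exact le_trans hRbound (le_max_left 2 _)
      · have hempty : {u : V | G.Adj v u ∧ cG s(v, u) = q} = ∅ := by
          ext u
          simp only [Set.mem_setOf_eq, Set.mem_empty_iff_false, iff_false, not_and]
          intro h1 h2
          exact absurd ⟨q, (memF v q).mpr ⟨u, h1, h2⟩⟩ hFv
        rw [hempty, Set.image_empty, Set.empty_union]
        exact le_trans hRbound (le_max_left 2 _)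
    · -- spider vertex
      have hsub : {u' : V ⊕ V × W |
            (corona G H).Adj (Sum.inr (v, w)) u' ∧ cc s(Sum.inr (v, w), u') = q}
          ⊆ insert (Sum.inl v) ((fun x : W => (Sum.inr (v, x) : V ⊕ V × W)) ''
            {x : W | H.Adj w x ∧ (if H.dist c w < H.dist c x then g x else g w) = q - t v}) := by
        rintro u' ⟨hadj, hval⟩
        rcases u' with u | ⟨v', w'⟩
        · have hu : u = v := hadj
          rw [hu]
          exact Set.mem_insert _ _
        · obtain ⟨hp1, ha2⟩ := hadj
          have hv : v = v' := hp1
          subst hv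
          refine Set.mem_insert_iff.mpr (Or.inr ⟨w', ⟨ha2, ?_⟩, rfl⟩)
          have hval' : cc s(Sum.inr (v, w), Sum.inr (v, w')) =
              t v + (if H.dist c w < H.dist c w' then g w' else g w) :=
            col_rr (v, w) (v, w') rfl ha2
          rw [hval'] at hval
          omega
      have hsing : ((fun x : W => (Sum.inr (v, x) : V ⊕ V × W)) ''
          {x : W | H.Adj w x ∧ (if H.dist c w < H.dist c x then g x else g w) = q - t v}).ncard ≤ 1 := by
        rw [Set.ncard_image_of_injective _ (by intro a b hab; simpa using hab :
          Function.Injective (fun x : W => (Sum.inr (v, x) : V ⊕ V × W)))]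
        exact (Set.ncard_le_one (Set.toFinite _)).mpr (fun a ha b hb => gP5 w (q - t v) ha hb)
      calc {u' : V ⊕ V × W |
            (corona G H).Adj (Sum.inr (v, w)) u' ∧ cc s(Sum.inr (v, w), u') = q}.ncard
          ≤ (insert (Sum.inl v) ((fun x : W => (Sum.inr (v, x) : V ⊕ V × W)) ''
            {x : W | H.Adj w x ∧ (if H.dist c w < H.dist c x then g x else g w) = q - t v})).ncard :=
            Set.ncard_le_ncard hsub (Set.toFinite _)
        _ ≤ _ + 1 := Set.ncard_insert_le _ _
        _ ≤ 2 := by omega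
        _ ≤ max 2 (impropriety G) := le_max_left 2 _
  exact Nat.sInf_le ⟨cc, hint, himp⟩
end

section
/- For any graphs G and H with |V(H)| ≥ 3, μ_int(G ⊙ H) ≤ max{μ_int(G), ⌈|V(H)|/3⌉, Δ(H) + 1}, where Δ(H) denotes the maximum degree of H. -/
private def coronaF {V W : Type*} [DecidableEq V] (cG : Sym2 V → ℤ) (B : V → ℤ) (j : W → ℤ) :
    (V ⊕ V × W) → (V ⊕ V × W) → ℤ
  | Sum.inl u, Sum.inl v => cG s(u, v)
  | Sum.inl _, Sum.inr p => B p.1 + j p.2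
  | Sum.inr p, Sum.inl _ => B p.1 + j p.2
  | Sum.inr p, Sum.inr q => if p.1 = q.1 then B p.1 + 2 else 0

private lemma coronaF_symm {V W : Type*} [DecidableEq V] (cG : Sym2 V → ℤ) (B : V → ℤ)
    (j : W → ℤ) : ∀ x y, coronaF cG B j x y = coronaF cG B j y x := by
  rintro (u | p) (v | q)
  · simp only [coronaF, Sym2.eq_swap]
  · rfl
  · rfl
  · simp only [coronaF]
    by_cases h : p.1 = q.1
    · rw [if_pos h, if_pos h.symm, h]
    · rw [if_neg h, if_neg (fun hh => h hh.symm)]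

/-- For any graphs `G` and `H` with `|V(H)| ≥ 3`,
`μ_int(G ⊙ H) ≤ max {μ_int(G), ⌈|V(H)|/3⌉, Δ(H) + 1}`. -/
theorem stmt18 {V W : Type*} [Fintype V] [Fintype W]
    (G : SimpleGraph V) (H : SimpleGraph W) (hW : 3 ≤ Fintype.card W) :
    impropriety (corona G H) ≤
      max (impropriety G) (max ((Fintype.card W + 2) / 3) (maxDeg H + 1)) := by
  classical
  set K := max (impropriety G) (max ((Fintype.card W + 2) / 3) (maxDeg H + 1)) with hK
  have hK1 : impropriety G ≤ K := le_max_left _ _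
  have hK2 : (Fintype.card W + 2) / 3 ≤ K := le_trans (le_max_left _ _) (le_max_right _ _)
  have hK3 : maxDeg H + 1 ≤ K := le_trans (le_max_right _ _) (le_max_right _ _)
  -- an optimal coloring of G exists
  have hGne : {k : ℕ | ∃ c : Sym2 V → ℤ, IsIntervalColoring G c ∧ IsKImproper G c k}.Nonempty := by
    refine ⟨Fintype.card V, fun _ => 0, ?_, ?_⟩
    · rintro v a b x ⟨u, hu, ha⟩ ⟨u', hu', hb⟩ hax hxb
      have ha' : (0:ℤ) = a := ha
      have hb' : (0:ℤ) = b := hb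
      exact ⟨u, hu, show (0:ℤ) = x by omega⟩
    · intro v q
      calc ({u : V | G.Adj v u ∧ (fun _ => (0:ℤ)) s(v, u) = q}).ncard
          ≤ (Set.univ : Set V).ncard :=
            Set.ncard_le_ncard (Set.subset_univ _) (Set.toFinite _)
        _ = Fintype.card V := by rw [Set.ncard_univ, Nat.card_eq_fintype_card]
  obtain ⟨cG, hIntG, hImpG⟩ :
      ∃ c : Sym2 V → ℤ, IsIntervalColoring G c ∧ IsKImproper G c (impropriety G) :=
    Nat.sInf_mem hGne
  -- top colors in G
  set B : V → ℤ := fun v => sSup {z | ∃ u, G.Adj v u ∧ cG s(v, u) = z} with hB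
  have hCSfin : ∀ v : V, ({z | ∃ u, G.Adj v u ∧ cG s(v, u) = z}).Finite := by
    intro v
    have hsub : {z | ∃ u, G.Adj v u ∧ cG s(v, u) = z} ⊆ (fun u => cG s(v, u)) '' Set.univ := by
      rintro z ⟨u, hu, rfl⟩; exact ⟨u, trivial, rfl⟩
    exact ((Set.finite_univ).image _).subset hsub
  have hBle : ∀ v u, G.Adj v u → cG s(v, u) ≤ B v := by
    intro v u h
    simp only [hB]
    exact le_csSup (hCSfin v).bddAbove ⟨u, h, rfl⟩
  have hBmem : ∀ v u, G.Adj v u → ∃ u', G.Adj v u' ∧ cG s(v, u') = B v := by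
    intro v u h
    simp only [hB]
    have hne : Set.Nonempty {z : ℤ | ∃ u', G.Adj v u' ∧ cG s(v, u') = z} :=
      ⟨cG s(v, u), u, h, rfl⟩
    exact hne.csSup_mem (hCSfin v)
  -- partition of W into three residue classes
  obtain ⟨e⟩ : Nonempty (W ≃ Fin (Fintype.card W)) := ⟨Fintype.equivFin W⟩
  set j : W → ℤ := fun w => 1 + (((e w : ℕ) % 3 : ℕ) : ℤ) with hj
  have hj1 : ∀ w, 1 ≤ j w ∧ j w ≤ 3 := by
    intro w
    have h3 : (e w : ℕ) % 3 < 3 := Nat.mod_lt _ (by norm_num)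
    simp only [hj]
    omega
  have hfib : ∀ m : ℕ, m < 3 → ∃ w : W, ((e w : ℕ) % 3) = m := by
    intro m hm
    exact ⟨e.symm ⟨m, by omega⟩, by simp [Nat.mod_eq_of_lt hm]⟩
  have hfibcard : ∀ z : ℤ,
      ({w : W | (((e w : ℕ) % 3 : ℕ) : ℤ) = z}).ncard ≤ (Fintype.card W + 2) / 3 := by
    intro z
    have h1 : ({w : W | (((e w : ℕ) % 3 : ℕ) : ℤ) = z}).ncard
        ≤ (Set.Iio ((Fintype.card W + 2) / 3)).ncard := by
      refine Set.ncard_le_ncard_of_injOn (fun w => (e w : ℕ) / 3) ?_ ?_ (Set.finite_Iio _)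
      · intro w hw
        have := (e w).isLt
        simp only [Set.mem_Iio]
        omega
      · intro w1 h1 w2 h2 hq
        simp only [Set.mem_setOf_eq] at h1 h2
        simp only at hq
        have : (e w1 : ℕ) = (e w2 : ℕ) := by omega
        exact e.injective (Fin.ext this)
    rwa [← Finset.coe_Iio, Set.ncard_coe_finset, Nat.card_Iio] at h1
  -- max degree bound
  have hDeg : ∀ w : W, (H.neighborSet w).ncard ≤ maxDeg H := by
    intro w
    refine le_csSup ⟨Fintype.card W, ?_⟩ ⟨w, rfl⟩
    rintro d ⟨w', rfl⟩
    calc (H.neighborSet w').ncard ≤ (Set.univ : Set W).ncard :=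
          Set.ncard_le_ncard (Set.subset_univ _) (Set.toFinite _)
      _ = Fintype.card W := by rw [Set.ncard_univ, Nat.card_eq_fintype_card]
  -- the coloring of the corona
  set c : Sym2 (V ⊕ V × W) → ℤ := Sym2.lift ⟨coronaF cG B j, coronaF_symm cG B j⟩ with hc
  have hcmk : ∀ x y, c s(x, y) = coronaF cG B j x y := fun x y => Sym2.lift_mk ..
  have hcll : ∀ u v : V, c s(Sum.inl u, Sum.inl v) = cG s(u, v) := fun u v => hcmk ..
  have hclr : ∀ (v : V) (p : V × W), c s(Sum.inl v, Sum.inr p) = B p.1 + j p.2 :=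
    fun v p => hcmk ..
  have hcrl : ∀ (p : V × W) (v : V), c s(Sum.inr p, Sum.inl v) = B p.1 + j p.2 :=
    fun p v => hcmk ..
  have hcrr : ∀ p q : V × W, p.1 = q.1 → c s(Sum.inr p, Sum.inr q) = B p.1 + 2 := by
    intro p q h
    rw [hcmk]
    simp only [coronaF, if_pos h]
  -- interval property
  have hInt : IsIntervalColoring (corona G H) c := by
    rintro (v | ⟨v, w⟩) a bb x ha hb hax hxb
    · obtain ⟨ua, hua, hca⟩ := ha
      obtain ⟨ub, hub, hcb⟩ := hb
      by_cases hx : x ≤ B v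
      · rcases ua with u | p
        · have haG : cG s(v, u) = a := by rw [hcll] at hca; exact hca
          have hadjG : G.Adj v u := hua
          obtain ⟨u', hu', hcu'⟩ := hBmem v u hadjG
          obtain ⟨u'', hu'', hcu''⟩ :=
            hIntG v a (B v) x ⟨u, hadjG, haG⟩ ⟨u', hu', hcu'⟩ hax hx
          exact ⟨Sum.inl u'', hu'', by rw [hcll]; exact hcu''⟩
        · exfalso
          have h1 : c s(Sum.inl v, Sum.inr p) = B p.1 + j p.2 := hclr ..
          have hv : v = p.1 := hua
          have hjp := (hj1 p.2).1
          subst hv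
          omega
      · push_neg at hx
        rcases ub with u | p
        · exfalso
          have h1 : c s(Sum.inl v, Sum.inl u) = cG s(v, u) := hcll ..
          have hadjG : G.Adj v u := hub
          have := hBle v u hadjG
          omega
        · have hv : v = p.1 := hub
          have h1 : c s(Sum.inl v, Sum.inr p) = B p.1 + j p.2 := hclr ..
          have hj3 := hj1 p.2
          have hxr : B v + 1 ≤ x ∧ x ≤ B v + 3 := by subst hv; omega
          obtain ⟨w', hw'⟩ := hfib (x - B v - 1).toNat (by omega)
          refine ⟨Sum.inr (v, w'), rfl, ?_⟩
          have h2 : c s(Sum.inl v, Sum.inr (v, w')) = B v + j w' := hclr ..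
          rw [h2]
          simp only [hj]
          rw [hw']
          omega
    · have hclass : ∀ u, (corona G H).Adj (Sum.inr (v, w)) u →
          c s(Sum.inr (v, w), u) = B v + j w ∨ c s(Sum.inr (v, w), u) = B v + 2 := by
        rintro (u | p) h
        · left; exact hcrl ..
        · right
          have hv : v = p.1 := h.1
          exact hcrr (v, w) p hv
      obtain ⟨ua, hua, hca⟩ := ha
      obtain ⟨ub, hub, hcb⟩ := hb
      have h1 := hclass ua hua
      have h2 := hclass ub hub
      rw [hca] at h1
      rw [hcb] at h2
      have hj3 := hj1 w
      have hxab : x = a ∨ x = bb := by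
        rcases h1 with h1 | h1 <;> rcases h2 with h2 | h2 <;> omega
      rcases hxab with rfl | rfl
      · exact ⟨ua, hua, hca⟩
      · exact ⟨ub, hub, hcb⟩
  -- improperness
  have hImp : IsKImproper (corona G H) c K := by
    rintro (v | ⟨v, w⟩) q
    · by_cases hq : q ≤ B v
      · have hsub : {u | (corona G H).Adj (Sum.inl v) u ∧ c s(Sum.inl v, u) = q}
            ⊆ Sum.inl '' {u | G.Adj v u ∧ cG s(v, u) = q} := by
          rintro (u | p) ⟨hadj, hcq⟩
          · have hadjG : G.Adj v u := hadj
            exact ⟨u, ⟨hadjG, by rw [hcll] at hcq; exact hcq⟩, rfl⟩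
          · exfalso
            have h1 : c s(Sum.inl v, Sum.inr p) = B p.1 + j p.2 := hclr ..
            have hv : v = p.1 := hadj
            have hjp := (hj1 p.2).1
            subst hv
            omega
        calc ({u | (corona G H).Adj (Sum.inl v) u ∧ c s(Sum.inl v, u) = q}).ncard
            ≤ (Sum.inl '' {u | G.Adj v u ∧ cG s(v, u) = q}).ncard :=
              Set.ncard_le_ncard hsub (Set.toFinite _)
          _ = ({u | G.Adj v u ∧ cG s(v, u) = q}).ncard :=
              Set.ncard_image_of_injective _ Sum.inl_injective
          _ ≤ impropriety G := hImpG v q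
          _ ≤ K := hK1
      · push_neg at hq
        have hsub : {u | (corona G H).Adj (Sum.inl v) u ∧ c s(Sum.inl v, u) = q}
            ⊆ (fun w' => (Sum.inr (v, w') : V ⊕ V × W)) ''
              {w' : W | (((e w' : ℕ) % 3 : ℕ) : ℤ) = q - B v - 1} := by
          rintro (u | p) ⟨hadj, hcq⟩
          · exfalso
            have h1 : c s(Sum.inl v, Sum.inl u) = cG s(v, u) := hcll ..
            have hadjG : G.Adj v u := hadj
            have := hBle v u hadjG
            omega
          · have hv : v = p.1 := hadj
            have h1 : c s(Sum.inl v, Sum.inr p) = B p.1 + j p.2 := hclr ..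
            have hjp : j p.2 = 1 + (((e p.2 : ℕ) % 3 : ℕ) : ℤ) := by simp only [hj]
            subst hv
            refine ⟨p.2, ?_, rfl⟩
            simp only [Set.mem_setOf_eq]
            omega
        calc ({u | (corona G H).Adj (Sum.inl v) u ∧ c s(Sum.inl v, u) = q}).ncard
            ≤ ((fun w' => (Sum.inr (v, w') : V ⊕ V × W)) ''
              {w' : W | (((e w' : ℕ) % 3 : ℕ) : ℤ) = q - B v - 1}).ncard :=
              Set.ncard_le_ncard hsub (Set.toFinite _)
          _ = ({w' : W | (((e w' : ℕ) % 3 : ℕ) : ℤ) = q - B v - 1}).ncard :=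
              Set.ncard_image_of_injective _ (by intro a b h; simpa using h)
          _ ≤ (Fintype.card W + 2) / 3 := hfibcard _
          _ ≤ K := hK2
    · have hsub : {u | (corona G H).Adj (Sum.inr (v, w)) u ∧ c s(Sum.inr (v, w), u) = q}
          ⊆ {Sum.inl v} ∪ (fun w' => (Sum.inr (v, w') : V ⊕ V × W)) '' (H.neighborSet w) := by
        rintro (u | p) ⟨hadj, -⟩
        · left
          have hu : u = v := hadj
          simp [hu]
        · right
          have hv : v = p.1 := hadj.1
          have hadjH : H.Adj w p.2 := hadj.2
          exact ⟨p.2, hadjH, by rw [hv]⟩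
      calc ({u | (corona G H).Adj (Sum.inr (v, w)) u ∧ c s(Sum.inr (v, w), u) = q}).ncard
          ≤ ({Sum.inl v} ∪ (fun w' => (Sum.inr (v, w') : V ⊕ V × W)) ''
              (H.neighborSet w)).ncard := Set.ncard_le_ncard hsub (Set.toFinite _)
        _ ≤ ({Sum.inl v} : Set (V ⊕ V × W)).ncard
            + ((fun w' => (Sum.inr (v, w') : V ⊕ V × W)) '' (H.neighborSet w)).ncard :=
            Set.ncard_union_le _ _
        _ ≤ 1 + maxDeg H := by
            rw [Set.ncard_singleton,
              Set.ncard_image_of_injective _ (show Function.Injective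
                (fun w' => (Sum.inr (v, w') : V ⊕ V × W)) by intro a b h; simpa using h)]
            exact Nat.add_le_add_left (hDeg w) 1
        _ ≤ K := by omega
  exact Nat.sInf_le ⟨c, hInt, hImp⟩
end

section
/- The corona product C_3 ⊙ P_2 of the triangle C_3 with the path P_2 on two vertices satisfies μ_int(C_3 ⊙ P_2) = 2; in particular, C_3 ⊙ P_2 admits no interval edge coloring, but it admits a 2-improper interval edge coloring. -/
/-- The corona product `C_3 ⊙ P_2` of the triangle with the path on two
vertices. -/
abbrev C3P2 : SimpleGraph (Fin 3 ⊕ Fin 3 × Fin 2) :=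
  corona (SimpleGraph.cycleGraph 3) (SimpleGraph.pathGraph 2)

/- ### Auxiliary material -/

instance pathGraph2.adjDecidable : DecidableRel (SimpleGraph.pathGraph 2).Adj :=
  fun u v => decidable_of_iff _ SimpleGraph.pathGraph_adj.symm

instance C3P2.adjDecidable : DecidableRel C3P2.Adj := fun x y =>
  match x, y with
  | Sum.inl i, Sum.inl j => inferInstanceAs (Decidable ((SimpleGraph.cycleGraph 3).Adj i j))
  | Sum.inl i, Sum.inr p => inferInstanceAs (Decidable (i = p.1))
  | Sum.inr p, Sum.inl i => inferInstanceAs (Decidable (i = p.1))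
  | Sum.inr p, Sum.inr q =>
      inferInstanceAs (Decidable (p.1 = q.1 ∧ (SimpleGraph.pathGraph 2).Adj p.2 q.2))

/-- The explicit 2-improper interval coloring, as a symmetric function on vertices. -/
def fCol : (Fin 3 ⊕ Fin 3 × Fin 2) → (Fin 3 ⊕ Fin 3 × Fin 2) → ℤ
  | Sum.inl i, Sum.inl j => if (i = 1 ∧ j = 2) ∨ (i = 2 ∧ j = 1) then 2 else 1
  | Sum.inl i, Sum.inr p => if p.2 = 0 ∧ i ≠ 0 then 1 else 2
  | Sum.inr p, Sum.inl i => if p.2 = 0 ∧ i ≠ 0 then 1 else 2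
  | Sum.inr p, Sum.inr q => if p.1 = 1 ∧ q.1 = 1 then 1 else 2

lemma fCol_symm : ∀ x y, fCol x y = fCol y x := by decide

/-- The explicit coloring on `Sym2`. -/
def cCol : Sym2 (Fin 3 ⊕ Fin 3 × Fin 2) → ℤ := Sym2.lift ⟨fCol, fCol_symm⟩

lemma cCol_range : ∀ v u, C3P2.Adj v u → cCol s(v, u) = 1 ∨ cCol s(v, u) = 2 := by decide

set_option maxHeartbeats 1000000 in
set_option synthInstance.maxSize 2000 in
set_option synthInstance.maxHeartbeats 2000000 in
lemma cCol_no_three : ∀ v x y z : Fin 3 ⊕ Fin 3 × Fin 2,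
    C3P2.Adj v x → C3P2.Adj v y → C3P2.Adj v z →
    cCol s(v, x) = cCol s(v, y) → cCol s(v, x) = cCol s(v, z) →
    x = y ∨ x = z ∨ y = z := by decide

lemma cCol_interval : IsIntervalColoring C3P2 cCol := by
  rintro v a b x ⟨u1, h1, e1⟩ ⟨u2, h2, e2⟩ hax hxb
  have ha := cCol_range v u1 h1
  have hb := cCol_range v u2 h2
  rw [e1] at ha
  rw [e2] at hb
  have : x = a ∨ x = b := by omega
  rcases this with rfl | rfl
  · exact ⟨u1, h1, e1⟩
  · exact ⟨u2, h2, e2⟩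

lemma cCol_improper : IsKImproper C3P2 cCol 2 := by
  intro v q
  by_contra h
  push_neg at h
  rw [Set.two_lt_ncard_iff (Set.toFinite _)] at h
  obtain ⟨x, y, z, hx, hy, hz, hxy, hxz, hyz⟩ := h
  obtain ⟨hx1, hx2⟩ := hx
  obtain ⟨hy1, hy2⟩ := hy
  obtain ⟨hz1, hz2⟩ := hz
  rcases cCol_no_three v x y z hx1 hy1 hz1 (by rw [hx2, hy2]) (by rw [hx2, hz2]) with
    h' | h' | h' <;> [exact hxy h'; exact hxz h'; exact hyz h']

/- ### Nonexistence of a 1-improper (proper) interval coloring -/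

lemma distinctCol {c : Sym2 (Fin 3 ⊕ Fin 3 × Fin 2) → ℤ} (h1 : IsKImproper C3P2 c 1)
    {v u u' : Fin 3 ⊕ Fin 3 × Fin 2} (hu : C3P2.Adj v u) (hu' : C3P2.Adj v u')
    (hne : u ≠ u') : c s(v, u) ≠ c s(v, u') := by
  intro he
  have hsub : ({u, u'} : Set (Fin 3 ⊕ Fin 3 × Fin 2)) ⊆
      {w | C3P2.Adj v w ∧ c s(v, w) = c s(v, u')} := by
    rintro w (rfl | rfl)
    · exact ⟨hu, he⟩
    · exact ⟨hu', rfl⟩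
  have h2 : 2 ≤ ({w | C3P2.Adj v w ∧ c s(v, w) = c s(v, u')}).ncard := by
    have hle := Set.ncard_le_ncard hsub (Set.toFinite _)
    rwa [Set.ncard_pair hne] at hle
  have := h1 v (c s(v, u'))
  omega

lemma pairlem (S : ℤ → Prop) (p q : ℤ) (hp : S p) (hq : S q)
    (hcl : ∀ y z x : ℤ, S y → S z → y ≤ x → x ≤ z → S x)
    (hmem : ∀ x, S x → x = p ∨ x = q) (hne : p ≠ q) :
    p = q + 1 ∨ q = p + 1 := by
  by_contra h
  push_neg at h
  have h' : p + 2 ≤ q ∨ q + 2 ≤ p := by omega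
  rcases h' with h' | h'
  · have := hmem _ (hcl p q (p + 1) hp hq (by omega) (by omega)); omega
  · have := hmem _ (hcl q p (p - 1) hq hp (by omega) (by omega)); omega

lemma quadlem (S : ℤ → Prop) (a b p0 p1 : ℤ)
    (ha : S a) (hb : S b) (h0 : S p0) (h1 : S p1)
    (hcl : ∀ y z x : ℤ, S y → S z → y ≤ x → x ≤ z → S x)
    (hmem : ∀ x, S x → x = a ∨ x = b ∨ x = p0 ∨ x = p1)
    (hab : a ≠ b) (ha0 : a ≠ p0) (ha1 : a ≠ p1) (hb0 : b ≠ p0) (hb1 : b ≠ p1)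
    (hp : p1 = p0 + 2 ∨ p0 = p1 + 2) :
    a - b = 2 ∨ b - a = 2 := by
  obtain ⟨m, hm0, hm2, hmm, ham, ham2, hbm, hbm2⟩ :
      ∃ m : ℤ, S m ∧ S (m + 2) ∧ (∀ x, S x → x = a ∨ x = b ∨ x = m ∨ x = m + 2) ∧
        a ≠ m ∧ a ≠ m + 2 ∧ b ≠ m ∧ b ≠ m + 2 := by
    rcases hp with hp | hp
    · exact ⟨p0, h0, by rw [← hp]; exact h1,
        fun x hx => by have := hmem x hx; omega, by omega, by omega, by omega, by omega⟩
    · exact ⟨p1, h1, by rw [← hp]; exact h0,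
        fun x hx => by have := hmem x hx; omega, by omega, by omega, by omega, by omega⟩
  have hm1 := hmm _ (hcl m (m + 2) (m + 1) hm0 hm2 (by omega) (by omega))
  have hm1' : m + 1 = a ∨ m + 1 = b := by omega
  rcases hm1' with hA | hB
  · have hcases : b ≤ m - 2 ∨ b = m - 1 ∨ b = m + 3 ∨ m + 4 ≤ b := by omega
    rcases hcases with h' | h' | h' | h'
    · exfalso; have := hmm _ (hcl b m (m - 1) hb hm0 (by omega) (by omega)); omega
    · omega
    · omega
    · exfalso; have := hmm _ (hcl m b (m + 3) hm0 hb (by omega) (by omega)); omega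
  · have hcases : a ≤ m - 2 ∨ a = m - 1 ∨ a = m + 3 ∨ m + 4 ≤ a := by omega
    rcases hcases with h' | h' | h' | h'
    · exfalso; have := hmm _ (hcl a m (m - 1) ha hm0 (by omega) (by omega)); omega
    · omega
    · omega
    · exfalso; have := hmm _ (hcl m a (m + 3) hm0 ha (by omega) (by omega)); omega

lemma nbhd_inl : ∀ (i : Fin 3) (u : Fin 3 ⊕ Fin 3 × Fin 2), C3P2.Adj (Sum.inl i) u →
    u = Sum.inl (i + 1) ∨ u = Sum.inl (i + 2) ∨ u = Sum.inr (i, 0) ∨ u = Sum.inr (i, 1) := by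
  decide

lemma nbhd_inr : ∀ (i : Fin 3) (j : Fin 2) (u : Fin 3 ⊕ Fin 3 × Fin 2),
    C3P2.Adj (Sum.inr (i, j)) u → u = Sum.inl i ∨ u = Sum.inr (i, j + 1) := by
  decide

lemma adj1 : ∀ i : Fin 3, C3P2.Adj (Sum.inl i) (Sum.inl (i + 1)) := by decide
lemma adj2 : ∀ i : Fin 3, C3P2.Adj (Sum.inl i) (Sum.inl (i + 2)) := by decide
lemma adj3 : ∀ (i : Fin 3) (j : Fin 2), C3P2.Adj (Sum.inl i) (Sum.inr (i, j)) := by decide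
lemma adj4 : ∀ (i : Fin 3) (j : Fin 2), C3P2.Adj (Sum.inr (i, j)) (Sum.inl i) := by decide
lemma adj5 : ∀ (i : Fin 3) (j : Fin 2), C3P2.Adj (Sum.inr (i, j)) (Sum.inr (i, j + 1)) := by
  decide

lemma ne12 : ∀ i : Fin 3, (i + 1 : Fin 3) ≠ i + 2 := by decide

lemma no_one_improper :
    ¬ ∃ c : Sym2 (Fin 3 ⊕ Fin 3 × Fin 2) → ℤ,
        IsIntervalColoring C3P2 c ∧ IsKImproper C3P2 c 1 := by
  rintro ⟨c, hI, h1⟩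
  -- Step 1: at each copy, the two pendant colors differ by 2.
  have pend : ∀ i : Fin 3,
      c s(Sum.inl i, Sum.inr (i, 1)) = c s(Sum.inl i, Sum.inr (i, 0)) + 2 ∨
      c s(Sum.inl i, Sum.inr (i, 0)) = c s(Sum.inl i, Sum.inr (i, 1)) + 2 := by
    intro i
    have key : ∀ j : Fin 2,
        c s(Sum.inr (i, j), Sum.inl i) = c s(Sum.inr (i, j), Sum.inr (i, j + 1)) + 1 ∨
        c s(Sum.inr (i, j), Sum.inr (i, j + 1)) = c s(Sum.inr (i, j), Sum.inl i) + 1 := by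
      intro j
      refine pairlem (fun x => ∃ u, C3P2.Adj (Sum.inr (i, j)) u ∧ c s(Sum.inr (i, j), u) = x)
        _ _ ⟨Sum.inl i, adj4 i j, rfl⟩ ⟨Sum.inr (i, j + 1), adj5 i j, rfl⟩
        (fun y z x hy hz hyx hxz => hI _ y z x hy hz hyx hxz) ?_
        (distinctCol h1 (adj4 i j) (adj5 i j) (by simp))
      rintro x ⟨u, hu, rfl⟩
      rcases nbhd_inr i j u hu with rfl | rfl
      · exact Or.inl rfl
      · exact Or.inr rfl
    have k0 := key 0
    have k1 := key 1
    rw [show ((0 : Fin 2) + 1) = 1 from rfl] at k0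
    rw [show ((1 : Fin 2) + 1) = 0 from rfl] at k1
    rw [Sym2.eq_swap (a := Sum.inr ((i, 0) : Fin 3 × Fin 2)) (b := Sum.inl i)] at k0
    rw [Sym2.eq_swap (a := Sum.inr ((i, 1) : Fin 3 × Fin 2)) (b := Sum.inl i)] at k1
    rw [Sym2.eq_swap (a := Sum.inr ((i, 1) : Fin 3 × Fin 2))
      (b := Sum.inr ((i, 0) : Fin 3 × Fin 2))] at k1
    have hne : c s(Sum.inl i, Sum.inr (i, 0)) ≠ c s(Sum.inl i, Sum.inr (i, 1)) :=
      distinctCol h1 (adj3 i 0) (adj3 i 1) (by simp)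
    omega
  -- Step 2: at each triangle vertex, the two triangle colors differ by 2.
  have tri : ∀ i : Fin 3,
      c s(Sum.inl i, Sum.inl (i + 1)) - c s(Sum.inl i, Sum.inl (i + 2)) = 2 ∨
      c s(Sum.inl i, Sum.inl (i + 2)) - c s(Sum.inl i, Sum.inl (i + 1)) = 2 := by
    intro i
    refine quadlem (fun x => ∃ u, C3P2.Adj (Sum.inl i) u ∧ c s(Sum.inl i, u) = x)
      _ _ _ _ ⟨Sum.inl (i + 1), adj1 i, rfl⟩ ⟨Sum.inl (i + 2), adj2 i, rfl⟩
      ⟨Sum.inr (i, 0), adj3 i 0, rfl⟩ ⟨Sum.inr (i, 1), adj3 i 1, rfl⟩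
      (fun y z x hy hz hyx hxz => hI _ y z x hy hz hyx hxz) ?_
      (distinctCol h1 (adj1 i) (adj2 i) (by simpa using ne12 i))
      (distinctCol h1 (adj1 i) (adj3 i 0) (by simp))
      (distinctCol h1 (adj1 i) (adj3 i 1) (by simp))
      (distinctCol h1 (adj2 i) (adj3 i 0) (by simp))
      (distinctCol h1 (adj2 i) (adj3 i 1) (by simp))
      (pend i)
    rintro x ⟨u, hu, rfl⟩
    rcases nbhd_inl i u hu with rfl | rfl | rfl | rfl
    · exact Or.inl rfl
    · exact Or.inr (Or.inl rfl)
    · exact Or.inr (Or.inr (Or.inl rfl))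
    · exact Or.inr (Or.inr (Or.inr rfl))
  have t0 := tri 0
  have t1 := tri 1
  have t2 := tri 2
  rw [show ((0 : Fin 3) + 1) = 1 by decide, show ((0 : Fin 3) + 2) = 2 by decide] at t0
  rw [show ((1 : Fin 3) + 1) = 2 by decide, show ((1 : Fin 3) + 2) = 0 by decide] at t1
  rw [show ((2 : Fin 3) + 1) = 0 by decide, show ((2 : Fin 3) + 2) = 1 by decide] at t2
  rw [Sym2.eq_swap (a := (Sum.inl 1 : Fin 3 ⊕ Fin 3 × Fin 2)) (b := Sum.inl 0)] at t1
  rw [Sym2.eq_swap (a := (Sum.inl 2 : Fin 3 ⊕ Fin 3 × Fin 2)) (b := Sum.inl 0)] at t2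
  rw [Sym2.eq_swap (a := (Sum.inl 2 : Fin 3 ⊕ Fin 3 × Fin 2)) (b := Sum.inl 1)] at t2
  omega

/-- `μ_int(C_3 ⊙ P_2) = 2`; in particular `C_3 ⊙ P_2` admits no (1-improper)
interval edge coloring, but it does admit a 2-improper interval edge coloring. -/
theorem stmt19 :
    impropriety C3P2 = 2 ∧
    (¬ ∃ c : Sym2 (Fin 3 ⊕ Fin 3 × Fin 2) → ℤ,
        IsIntervalColoring C3P2 c ∧ IsKImproper C3P2 c 1) ∧
    (∃ c : Sym2 (Fin 3 ⊕ Fin 3 × Fin 2) → ℤ,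
        IsIntervalColoring C3P2 c ∧ IsKImproper C3P2 c 2) := by
  have hpos : ∃ c : Sym2 (Fin 3 ⊕ Fin 3 × Fin 2) → ℤ,
      IsIntervalColoring C3P2 c ∧ IsKImproper C3P2 c 2 :=
    ⟨cCol, cCol_interval, cCol_improper⟩
  refine ⟨?_, no_one_improper, hpos⟩
  unfold impropriety
  apply le_antisymm
  · exact Nat.sInf_le hpos
  · have hne : {k : ℕ | ∃ c : Sym2 (Fin 3 ⊕ Fin 3 × Fin 2) → ℤ,
        IsIntervalColoring C3P2 c ∧ IsKImproper C3P2 c k}.Nonempty := ⟨2, hpos⟩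
    apply le_csInf hne
    rintro k ⟨c, hI, hk⟩
    by_contra h
    push_neg at h
    exact no_one_improper ⟨c, hI, fun v q => le_trans (hk v q) (by omega)⟩
end
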